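/- arXiv:1701.03753 — 11 statements merged into one kernel-verified Lean document; each statement's English description precedes it below -/
import Mathlib

section
/- Let X and Y be independent nonnegative real random variables on a probability space and let σ² > 0. If E[ln(1 + X/σ²)] < ∞, then E[ln(1 + X/(Y + σ²))] = ∫₀^∞ (1/t)·(1 − E[e^{−t·X}])·E[e^{−t·Y}]·e^{−t·σ²} dt. -/
open MeasureTheory Set ProbabilityTheory

lemma interval_exp {t : ℝ} (ht : 0 < t) (a b : ℝ) :
    ∫ x in a..b, Real.exp (-(t * x)) = (Real.exp (-(t*a)) - Real.exp (-(t*b))) / t := by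
  have hd : ∀ x : ℝ, HasDerivAt (fun x => -Real.exp (-(t*x)) / t) (Real.exp (-(t*x))) x := by
    intro x
    have h1 : HasDerivAt (fun x : ℝ => -(t*x)) (-t) x := by
      simpa using ((hasDerivAt_id x).const_mul t).fun_neg
    have h2 := (Real.hasDerivAt_exp (-(t*x))).comp x h1
    have h3 := h2.fun_neg.div_const t
    exact h3.congr_deriv (by field_simp)
  rw [intervalIntegral.integral_eq_sub_of_hasDerivAt (fun x _ => hd x)
    ((Real.continuous_exp.comp (by continuity)).intervalIntegrable a b)]
  field_simp
  ring

lemma exp_Ioi_int {x : ℝ} (hx : 0 < x) :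
    ∫ t in Ioi (0:ℝ), Real.exp (-(x * t)) = 1 / x := by
  rw [integral_comp_mul_left_Ioi (fun u => Real.exp (-u)) 0 hx]
  simp [integral_exp_neg_Ioi, smul_eq_mul, one_div, integral_exp_Iic_zero]

lemma frullani_lintegral {a c : ℝ} (ha : 0 < a) (hc : 0 ≤ c) :
    ∫⁻ t in Ioi (0:ℝ), ENNReal.ofReal ((Real.exp (-(t*a)) - Real.exp (-(t*(a+c)))) / t)
      = ENNReal.ofReal (Real.log (1 + c / a)) := by
  set b := a + c with hb
  have hab : a ≤ b := by simp [hb, hc]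
  have hbpos : 0 < b := lt_of_lt_of_le ha hab
  -- step 1: rewrite integrand as inner lintegral over Ioc a b
  have step1 : ∀ t ∈ Ioi (0:ℝ),
      ENNReal.ofReal ((Real.exp (-(t*a)) - Real.exp (-(t*b))) / t)
        = ∫⁻ x in Ioc a b, ENNReal.ofReal (Real.exp (-(t*x))) := by
    intro t ht
    rw [mem_Ioi] at ht
    rw [← ofReal_integral_eq_lintegral_ofReal]
    · rw [← intervalIntegral.integral_of_le hab, interval_exp ht]
    · exact ((Real.continuous_exp.comp (by continuity)).integrableOn_Ioc)
    · exact Filter.Eventually.of_forall fun x => (Real.exp_pos _).le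
  rw [setLIntegral_congr_fun measurableSet_Ioi step1]
  -- step 2: swap
  have hmeas : Measurable (Function.uncurry fun (t x : ℝ) => ENNReal.ofReal (Real.exp (-(t*x)))) := by
    apply Measurable.ennreal_ofReal
    exact (Real.continuous_exp.comp (by continuity)).measurable
  rw [lintegral_lintegral_swap hmeas.aemeasurable]
  -- step 3: inner integral in t
  have step3 : ∀ x ∈ Ioc a b,
      ∫⁻ t in Ioi (0:ℝ), ENNReal.ofReal (Real.exp (-(t*x))) = ENNReal.ofReal (1/x) := by
    intro x hx
    have hxpos : 0 < x := lt_of_lt_of_le ha hx.1.le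
    rw [← ofReal_integral_eq_lintegral_ofReal]
    · congr 1
      rw [← exp_Ioi_int hxpos]
      refine setIntegral_congr_fun measurableSet_Ioi fun t _ => by ring_nf
    · have := exp_neg_integrableOn_Ioi 0 hxpos
      refine this.congr_fun (fun t _ => by ring_nf) measurableSet_Ioi
    · exact Filter.Eventually.of_forall fun t => (Real.exp_pos _).le
  rw [setLIntegral_congr_fun measurableSet_Ioc step3]
  -- step 4: compute ∫ x in Ioc a b, 1/x
  rw [← ofReal_integral_eq_lintegral_ofReal (f := fun x : ℝ => 1/x)]
  · congr 1
    rw [← intervalIntegral.integral_of_le hab]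
    rw [integral_one_div_of_pos ha hbpos]
    congr 1
    field_simp
    exact hb
  · have hcont : ContinuousOn (fun x : ℝ => 1/x) (Icc a b) :=
      continuousOn_const.div continuousOn_id fun x hx => ne_of_gt (lt_of_lt_of_le ha hx.1)
    exact (hcont.integrableOn_compact isCompact_Icc).mono_set Ioc_subset_Icc_self
  · refine (ae_restrict_iff' measurableSet_Ioc).mpr (Filter.Eventually.of_forall fun x hx => ?_)
    have : 0 < x := lt_of_lt_of_le ha hx.1.le
    positivity

open ProbabilityTheory


/-- Expectation form of Hamdi's lemma: for independent nonnegative random variables `X`, `Y`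
and noise power `σ² > 0`, if `E[ln(1 + X/σ²)] < ∞`, then
`E[ln(1 + X/(Y + σ²))] = ∫₀^∞ (1/t)(1 − E[e^{−tX}]) E[e^{−tY}] e^{−tσ²} dt`. -/
theorem hamdi_expectation_form {Ω : Type*} [MeasurableSpace Ω]
    (μ : Measure Ω) [IsProbabilityMeasure μ]
    (X Y : Ω → ℝ) (hX : Measurable X) (hY : Measurable Y)
    (hXpos : ∀ ω, 0 ≤ X ω) (hYpos : ∀ ω, 0 ≤ Y ω)
    (hindep : IndepFun X Y μ)
    (σ2 : ℝ) (hσ : 0 < σ2)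
    (hint : Integrable (fun ω => Real.log (1 + X ω / σ2)) μ) :
    ∫ ω, Real.log (1 + X ω / (Y ω + σ2)) ∂μ
      = ∫ t in Ioi (0 : ℝ),
          (1 / t) * (1 - ∫ ω, Real.exp (-(t * X ω)) ∂μ)
            * (∫ ω, Real.exp (-(t * Y ω)) ∂μ) * Real.exp (-(t * σ2)) := by
  have hYσ : ∀ ω, 0 < Y ω + σ2 := fun ω => add_pos_of_nonneg_of_pos (hYpos ω) hσ
  -- the kernel function
  set g : Ω → ℝ → ℝ := fun ω t =>
    (Real.exp (-(t * (Y ω + σ2))) - Real.exp (-(t * ((Y ω + σ2) + X ω)))) / t with hgdef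
  -- measurability
  have hgm : Measurable (Function.uncurry fun (ω : Ω) (t : ℝ) => g ω t) := by
    apply Measurable.div
    · apply Measurable.sub
      · exact ((measurable_snd.mul ((hY.comp measurable_fst).add_const σ2)).neg).exp
      · exact ((measurable_snd.mul (((hY.comp measurable_fst).add_const σ2).add
          (hX.comp measurable_fst))).neg).exp
    · exact measurable_snd
  -- per-ω Frullani
  have hfr : ∀ ω, ∫⁻ t in Ioi (0:ℝ), ENNReal.ofReal (g ω t)
      = ENNReal.ofReal (Real.log (1 + X ω / (Y ω + σ2))) :=
    fun ω => frullani_lintegral (hYσ ω) (hXpos ω)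
  have hlog_nonneg : ∀ ω, 0 ≤ Real.log (1 + X ω / (Y ω + σ2)) := fun ω =>
    Real.log_nonneg (le_add_of_nonneg_right (div_nonneg (hXpos ω) (hYσ ω).le))
  -- Laplace transforms integrable and bounded
  have hexp_le_one : ∀ (t : ℝ), 0 < t → ∀ (Z : Ω → ℝ), (∀ ω, 0 ≤ Z ω) →
      ∀ ω, Real.exp (-(t * Z ω)) ≤ 1 := by
    intro t ht Z hZ ω
    rw [← Real.exp_zero]
    exact Real.exp_le_exp.mpr (by nlinarith [hZ ω])
  have hintX : ∀ t : ℝ, 0 < t → Integrable (fun ω => Real.exp (-(t * X ω))) μ := by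
    intro t ht
    refine Integrable.mono' (integrable_const 1)
      (((hX.const_mul t).neg.exp).aestronglyMeasurable) ?_
    refine Filter.Eventually.of_forall fun ω => ?_
    rw [Real.norm_eq_abs, abs_of_pos (Real.exp_pos _)]
    exact hexp_le_one t ht X hXpos ω
  have hintY : ∀ t : ℝ, 0 < t → Integrable (fun ω => Real.exp (-(t * Y ω))) μ := by
    intro t ht
    refine Integrable.mono' (integrable_const 1)
      (((hY.const_mul t).neg.exp).aestronglyMeasurable) ?_
    refine Filter.Eventually.of_forall fun ω => ?_
    rw [Real.norm_eq_abs, abs_of_pos (Real.exp_pos _)]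
    exact hexp_le_one t ht Y hYpos ω
  -- independence of the transformed variables
  have hindep' : ∀ t : ℝ, IndepFun (fun ω => Real.exp (-(t * X ω)))
      (fun ω => Real.exp (-(t * Y ω))) μ := by
    intro t
    exact hindep.comp ((measurable_const_mul t).neg.exp) ((measurable_const_mul t).neg.exp)
  -- pointwise-in-t integral over ω
  have hinner : ∀ t : ℝ, 0 < t →
      ∫ ω, g ω t ∂μ = (1 / t) * (1 - ∫ ω, Real.exp (-(t * X ω)) ∂μ)
            * (∫ ω, Real.exp (-(t * Y ω)) ∂μ) * Real.exp (-(t * σ2)) := by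
    intro t ht
    have hg_eq : ∀ ω, g ω t = (1/t) * Real.exp (-(t * σ2)) *
        (Real.exp (-(t * Y ω)) - Real.exp (-(t * X ω)) * Real.exp (-(t * Y ω))) := by
      intro ω
      simp only [hgdef]
      rw [show -(t * (Y ω + σ2)) = -(t * Y ω) + -(t * σ2) by ring,
        show -(t * ((Y ω + σ2) + X ω)) = -(t * X ω) + (-(t * Y ω) + -(t * σ2)) by ring,
        Real.exp_add, Real.exp_add, Real.exp_add]
      field_simp
    simp only [hg_eq]
    have hintXY : Integrable (fun ω => Real.exp (-(t * X ω)) * Real.exp (-(t * Y ω))) μ :=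
      (hindep' t).integrable_mul (hintX t ht) (hintY t ht)
    rw [integral_const_mul, integral_sub (hintY t ht) hintXY]
    have hmul : (∫ ω, Real.exp (-(t * X ω)) * Real.exp (-(t * Y ω)) ∂μ)
        = (∫ ω, Real.exp (-(t * X ω)) ∂μ) * ∫ ω, Real.exp (-(t * Y ω)) ∂μ :=
      (hindep' t).integral_fun_mul_eq_mul_integral (hintX t ht).aestronglyMeasurable
        (hintY t ht).aestronglyMeasurable
    rw [hmul]
    ring
  -- nonnegativity of g
  have hg_nonneg : ∀ ω, ∀ t, 0 < t → 0 ≤ g ω t := by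
    intro ω t ht
    apply div_nonneg _ ht.le
    rw [sub_nonneg]
    apply Real.exp_le_exp.mpr
    nlinarith [hXpos ω]
  -- integrability of g (·, t)
  have hgmt : ∀ t : ℝ, Measurable (fun ω => g ω t) := by
    intro t
    exact (((((hY.add_const σ2).const_mul t).neg.exp).sub
      ((((hY.add_const σ2).add hX).const_mul t).neg.exp)).div_const t)
  have hgint : ∀ t : ℝ, 0 < t → Integrable (fun ω => g ω t) μ := by
    intro t ht
    refine Integrable.mono' (integrable_const (1/t)) (hgmt t).aestronglyMeasurable ?_
    refine Filter.Eventually.of_forall fun ω => ?_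
    rw [Real.norm_eq_abs, hgdef]
    simp only
    rw [abs_div, abs_of_pos ht, abs_of_nonneg (by
      rw [sub_nonneg]; apply Real.exp_le_exp.mpr; nlinarith [hXpos ω])]
    gcongr
    have := hexp_le_one t ht (fun ω => Y ω + σ2) (fun ω => (hYσ ω).le) ω
    nlinarith [Real.exp_pos (-(t * ((Y ω + σ2) + X ω)))]
  -- inner lintegral over ω equals ofReal of RHS integrand
  have hswap_inner : ∀ t : ℝ, 0 < t →
      ∫⁻ ω, ENNReal.ofReal (g ω t) ∂μ
        = ENNReal.ofReal ((1 / t) * (1 - ∫ ω, Real.exp (-(t * X ω)) ∂μ)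
            * (∫ ω, Real.exp (-(t * Y ω)) ∂μ) * Real.exp (-(t * σ2))) := by
    intro t ht
    rw [← ofReal_integral_eq_lintegral_ofReal (hgint t ht)
      (Filter.Eventually.of_forall fun ω => hg_nonneg ω t ht), hinner t ht]
  -- measurability of Laplace transforms in t
  have hLXm : StronglyMeasurable fun t : ℝ => ∫ ω, Real.exp (-(t * X ω)) ∂μ :=
    StronglyMeasurable.integral_prod_right'
      (((measurable_fst.mul (hX.comp measurable_snd)).neg.exp).stronglyMeasurable)
  have hLYm : StronglyMeasurable fun t : ℝ => ∫ ω, Real.exp (-(t * Y ω)) ∂μ :=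
    StronglyMeasurable.integral_prod_right'
      (((measurable_fst.mul (hY.comp measurable_snd)).neg.exp).stronglyMeasurable)
  have hFm : Measurable fun t : ℝ => (1 / t) * (1 - ∫ ω, Real.exp (-(t * X ω)) ∂μ)
      * (∫ ω, Real.exp (-(t * Y ω)) ∂μ) * Real.exp (-(t * σ2)) :=
    (((measurable_const.div measurable_id).mul
      (measurable_const.sub hLXm.measurable)).mul hLYm.measurable).mul
      ((measurable_id.mul_const σ2).neg.exp)
  -- nonnegativity of RHS integrand
  have hF_nonneg : ∀ t : ℝ, 0 < t →
      0 ≤ (1 / t) * (1 - ∫ ω, Real.exp (-(t * X ω)) ∂μ)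
        * (∫ ω, Real.exp (-(t * Y ω)) ∂μ) * Real.exp (-(t * σ2)) := by
    intro t ht
    have h1 : (∫ ω, Real.exp (-(t * X ω)) ∂μ) ≤ 1 := by
      calc (∫ ω, Real.exp (-(t * X ω)) ∂μ) ≤ ∫ _, (1:ℝ) ∂μ :=
        integral_mono (hintX t ht) (integrable_const 1) (hexp_le_one t ht X hXpos)
      _ = 1 := by simp
    have h2 : 0 ≤ ∫ ω, Real.exp (-(t * Y ω)) ∂μ :=
      integral_nonneg fun ω => (Real.exp_pos _).le
    have h3 : (0:ℝ) ≤ 1/t := by positivity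
    have h4 : (0:ℝ) ≤ Real.exp (-(t * σ2)) := (Real.exp_pos _).le
    exact mul_nonneg (mul_nonneg (mul_nonneg h3 (by linarith)) h2) h4
  -- assemble
  have hlogm : Measurable fun ω => Real.log (1 + X ω / (Y ω + σ2)) :=
    (measurable_const.add (hX.div (hY.add_const σ2))).log
  calc ∫ ω, Real.log (1 + X ω / (Y ω + σ2)) ∂μ
      = (∫⁻ ω, ENNReal.ofReal (Real.log (1 + X ω / (Y ω + σ2))) ∂μ).toReal :=
        integral_eq_lintegral_of_nonneg_ae (Filter.Eventually.of_forall hlog_nonneg)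
          hlogm.aestronglyMeasurable
    _ = (∫⁻ ω, (∫⁻ t in Ioi (0:ℝ), ENNReal.ofReal (g ω t)) ∂μ).toReal := by
        congr 1
        exact lintegral_congr fun ω => (hfr ω).symm
    _ = (∫⁻ t in Ioi (0:ℝ), ∫⁻ ω, ENNReal.ofReal (g ω t) ∂μ).toReal := by
        congr 1
        have hgm2 : AEMeasurable (Function.uncurry fun (ω : Ω) (t : ℝ) => ENNReal.ofReal (g ω t))
            (μ.prod (volume.restrict (Ioi 0))) := (hgm.ennreal_ofReal).aemeasurable
        exact lintegral_lintegral_swap hgm2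
    _ = (∫⁻ t in Ioi (0:ℝ), ENNReal.ofReal ((1 / t) * (1 - ∫ ω, Real.exp (-(t * X ω)) ∂μ)
            * (∫ ω, Real.exp (-(t * Y ω)) ∂μ) * Real.exp (-(t * σ2)))).toReal := by
        congr 1
        exact setLIntegral_congr_fun measurableSet_Ioi
          (fun t ht => hswap_inner t ht)
    _ = ∫ t in Ioi (0 : ℝ),
          (1 / t) * (1 - ∫ ω, Real.exp (-(t * X ω)) ∂μ)
            * (∫ ω, Real.exp (-(t * Y ω)) ∂μ) * Real.exp (-(t * σ2)) := by
        rw [integral_eq_lintegral_of_nonneg_ae]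
        · exact (ae_restrict_iff' measurableSet_Ioi).mpr
            (Filter.Eventually.of_forall fun t ht => hF_nonneg t ht)
        · exact hFm.aestronglyMeasurable.restrict
end

section
/- Let R be a real random variable with density f_R(r) = 2π λ_M r exp(−π λ_M r²) for r > 0 (λ_M > 0), let P_D = min{P_max^D, (I_th/β)·R^{α_M}} with P_max^D, I_th, β > 0, α_M > 0, and set ϖ₀ = π λ_M (β P_max^D / I_th)^{2/α_M}. Then E[P_D^{2/α_M}] = ((P_max^D)^{2/α_M}/ϖ₀)·(1 − e^{−ϖ₀} − ϖ₀ e^{−ϖ₀}) + (P_max^D)^{2/α_M}·e^{−ϖ₀}. -/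
open MeasureTheory Set
open scoped NNReal ENNReal

lemma tail_integral {a : ℝ} (ha : 0 < a) (b : ℝ) :
    ∫ x in Ioi b, 2 * a * x * Real.exp (-(a * x ^ 2)) = Real.exp (-(a * b ^ 2)) := by
  have hderiv : ∀ x ∈ Ici b, HasDerivAt (fun x => -Real.exp (-(a * x ^ 2)))
      (2 * a * x * Real.exp (-(a * x ^ 2))) x := by
    intro x _
    have h1 : HasDerivAt (fun x : ℝ => a * x ^ 2) (a * (2 * x)) x := by
      simpa using (hasDerivAt_pow 2 x).const_mul a
    have h2 : HasDerivAt (fun x => -Real.exp (-(a * x ^ 2)))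
        (-(Real.exp (-(a * x ^ 2)) * -(a * (2 * x)))) x := (h1.neg).exp.neg
    convert h2 using 1
    ring
  have hint : IntegrableOn (fun x => 2 * a * x * Real.exp (-(a * x ^ 2))) (Ioi b) := by
    have := (integrable_mul_exp_neg_mul_sq ha).const_mul (2 * a)
    apply (this.integrableOn (s := Ioi b)).congr_fun ?_ measurableSet_Ioi
    intro x _
    simp only [neg_mul]
    ring
  have hlim : Filter.Tendsto (fun x => -Real.exp (-(a * x ^ 2))) Filter.atTop (nhds 0) := by
    rw [show (0 : ℝ) = -0 by ring]
    apply Filter.Tendsto.neg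
    apply Real.tendsto_exp_atBot.comp
    apply Filter.tendsto_neg_atBot_iff.mpr
    exact (Filter.tendsto_pow_atTop (by norm_num)).const_mul_atTop ha
  have := integral_Ioi_of_hasDerivAt_of_tendsto' hderiv hint hlim
  rw [this]; ring

lemma mid_integral {a : ℝ} (ha : 0 < a) (c b : ℝ) :
    ∫ x in (0 : ℝ)..b, 2 * a * x * Real.exp (-(a * x ^ 2)) * (c * x ^ 2)
      = (c / a) * (1 - Real.exp (-(a * b ^ 2)) - a * b ^ 2 * Real.exp (-(a * b ^ 2))) := by
  have hderiv : ∀ x ∈ uIcc (0 : ℝ) b, HasDerivAt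
      (fun x => -(c / a) * ((a * x ^ 2 + 1) * Real.exp (-(a * x ^ 2))))
      (2 * a * x * Real.exp (-(a * x ^ 2)) * (c * x ^ 2)) x := by
    intro x _
    have h1 : HasDerivAt (fun x : ℝ => a * x ^ 2) (a * (2 * x)) x := by
      simpa using (hasDerivAt_pow 2 x).const_mul a
    have h2 := (h1.neg).exp
    have h3 : HasDerivAt (fun x : ℝ => a * x ^ 2 + 1) (a * (2 * x)) x := h1.add_const 1
    have h4 : HasDerivAt (fun x => -(c / a) * ((a * x ^ 2 + 1) * Real.exp (-(a * x ^ 2))))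
        (-(c / a) * (a * (2 * x) * Real.exp (-(a * x ^ 2))
          + (a * x ^ 2 + 1) * (Real.exp (-(a * x ^ 2)) * -(a * (2 * x))))) x :=
      ((h3.mul h2).const_mul (-(c / a)))
    convert h4 using 1
    field_simp
    ring
  have hcont : IntervalIntegrable (fun x => 2 * a * x * Real.exp (-(a * x ^ 2)) * (c * x ^ 2))
      volume 0 b := by
    apply Continuous.intervalIntegrable
    fun_prop
  rw [intervalIntegral.integral_eq_sub_of_hasDerivAt hderiv hcont]
  have hane : a ≠ 0 := ha.ne'
  simp only [mul_zero, zero_pow, ne_eq, OfNat.ofNat_ne_zero, not_false_iff, neg_zero,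
    Real.exp_zero]
  field_simp
  ring

/-- Equation (30) of the paper: with the Rayleigh nearest-distance density and the D2D power
control `P_D = min{P_max^D, (I_th/β)·R^{α_M}}`, setting
`ϖ₀ = π λ_M (β P_max^D / I_th)^{2/α_M}`, the `(2/α_M)`-th moment of `P_D` is
`E[P_D^{2/α_M}] = ((P_max^D)^{2/α_M}/ϖ₀)(1 − e^{−ϖ₀} − ϖ₀ e^{−ϖ₀}) + (P_max^D)^{2/α_M} e^{−ϖ₀}`. -/
theorem d2d_power_moment {Ω : Type*} [MeasurableSpace Ω]
    (μ : Measure Ω) [IsProbabilityMeasure μ]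
    (R : Ω → ℝ) (hR : Measurable R)
    (lamM : ℝ) (hlam : 0 < lamM)
    (hdist : Measure.map R μ = (volume : Measure ℝ).withDensity
      (fun r => ENNReal.ofReal
        (if 0 < r then 2 * Real.pi * lamM * r * Real.exp (-(Real.pi * lamM * r ^ 2)) else 0)))
    (PmaxD Ith β αM : ℝ) (hPmax : 0 < PmaxD) (hIth : 0 < Ith) (hβ : 0 < β) (hαM : 0 < αM)
    (PD : Ω → ℝ) (hPD : ∀ ω, PD ω = min PmaxD ((Ith / β) * R ω ^ αM))
    (ϖ₀ : ℝ) (hϖ₀ : ϖ₀ = Real.pi * lamM * (β * PmaxD / Ith) ^ (2 / αM)) :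
    ∫ ω, PD ω ^ (2 / αM) ∂μ
      = (PmaxD ^ (2 / αM) / ϖ₀) * (1 - Real.exp (-ϖ₀) - ϖ₀ * Real.exp (-ϖ₀))
        + PmaxD ^ (2 / αM) * Real.exp (-ϖ₀) := by
  have hπ : 0 < Real.pi := Real.pi_pos
  set a : ℝ := Real.pi * lamM with ha_def
  have ha : 0 < a := mul_pos hπ hlam
  set p : ℝ := 2 / αM with hp_def
  have hp : 0 < p := by positivity
  have hq : 0 < β * PmaxD / Ith := by positivity
  set r₀ : ℝ := (β * PmaxD / Ith) ^ (αM⁻¹) with hr0_def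
  have hr0 : 0 < r₀ := Real.rpow_pos_of_pos hq _
  have hr0αM : r₀ ^ αM = β * PmaxD / Ith := by
    rw [hr0_def, ← Real.rpow_mul hq.le, inv_mul_cancel₀ hαM.ne', Real.rpow_one]
  have hr0sq : r₀ ^ (2 : ℕ) = (β * PmaxD / Ith) ^ p := by
    rw [hr0_def, ← Real.rpow_natCast ((β * PmaxD / Ith) ^ (αM⁻¹)) 2,
      ← Real.rpow_mul hq.le, hp_def]
    congr 1
    push_cast
    ring
  have hϖa : ϖ₀ = a * r₀ ^ (2 : ℕ) := by rw [hϖ₀, hr0sq]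
  set c : ℝ := (Ith / β) ^ p with hc_def
  have hc : 0 < c := Real.rpow_pos_of_pos (by positivity) _
  -- c / a = PmaxD ^ p / ϖ₀
  have hca : c / a = PmaxD ^ p / ϖ₀ := by
    have h1 : (β * PmaxD / Ith) ^ p * (Ith / β) ^ p = PmaxD ^ p := by
      rw [← Real.mul_rpow hq.le (by positivity)]
      congr 1
      field_simp
    rw [hϖ₀]
    rw [div_eq_div_iff ha.ne' (by positivity)]
    rw [hc_def]
    calc (Ith / β) ^ p * (Real.pi * lamM * (β * PmaxD / Ith) ^ p)
        = (Real.pi * lamM) * ((β * PmaxD / Ith) ^ p * (Ith / β) ^ p) := by ring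
      _ = PmaxD ^ p * a := by rw [h1, ha_def]; ring
  set g : ℝ → ℝ := fun r => (min PmaxD ((Ith / β) * r ^ αM)) ^ p with hg_def
  have hcont_inner : Continuous fun r : ℝ => min PmaxD ((Ith / β) * r ^ αM) := by
    apply continuous_const.min
    exact continuous_const.mul (continuous_iff_continuousAt.mpr fun x =>
      Real.continuousAt_rpow_const x αM (Or.inr hαM.le))
  have hcontg : Continuous g := by
    rw [hg_def]
    exact (continuous_iff_continuousAt.mpr fun x =>
      Real.continuousAt_rpow_const x p (Or.inr hp.le)).comp hcont_inner
  have hgmeas : Measurable g := hcontg.measurable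
  -- step A: to integral over ℝ w.r.t. map measure
  have hA : ∫ ω, PD ω ^ p ∂μ = ∫ r, g r ∂(Measure.map R μ) := by
    rw [integral_map hR.aemeasurable hgmeas.aestronglyMeasurable]
    exact integral_congr_ae (Filter.Eventually.of_forall fun ω => by simp only [hPD, hg_def])
  set dens : ℝ → ℝ := fun r =>
    if 0 < r then 2 * Real.pi * lamM * r * Real.exp (-(Real.pi * lamM * r ^ 2)) else 0
    with hdens_def
  have hdens_nonneg : ∀ r, 0 ≤ dens r := by
    intro r
    simp only [hdens_def]
    split_ifs with h
    · positivity
    · exact le_rfl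
  have hdens_meas : Measurable dens := by
    exact Measurable.ite measurableSet_Ioi (by fun_prop) measurable_const
  -- step B: unfold withDensity
  have hB : ∫ r, g r ∂(Measure.map R μ) = ∫ r, dens r * g r := by
    rw [hdist]
    have : (fun r : ℝ => ENNReal.ofReal (dens r))
        = fun r : ℝ => ((Real.toNNReal (dens r) : ℝ≥0) : ℝ≥0∞) := rfl
    rw [show ((volume : Measure ℝ).withDensity fun r => ENNReal.ofReal (dens r))
        = (volume : Measure ℝ).withDensity (fun r => ((Real.toNNReal (dens r) : ℝ≥0) : ℝ≥0∞))
        from by rw [this]]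
    rw [integral_withDensity_eq_integral_smul hdens_meas.real_toNNReal g]
    apply integral_congr_ae
    filter_upwards with r
    rw [NNReal.smul_def, Real.coe_toNNReal _ (hdens_nonneg r), smul_eq_mul]
  -- step C: restrict to Ioi 0
  have hC : ∫ r, dens r * g r = ∫ r in Ioi (0 : ℝ),
      2 * a * r * Real.exp (-(a * r ^ 2)) * g r := by
    rw [← integral_indicator measurableSet_Ioi]
    apply integral_congr_ae
    filter_upwards with r
    rw [hdens_def]
    by_cases h : 0 < r
    · simp only [hdens_def, if_pos h, indicator_of_mem (mem_Ioi.mpr h), ha_def]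
      ring
    · simp only [hdens_def, if_neg h, zero_mul]
      rw [indicator_of_notMem (by simpa using h)]
  -- pointwise identities for g
  have hg_small : ∀ r ∈ Ioc (0 : ℝ) r₀, g r = c * r ^ (2 : ℕ) := by
    intro r hr
    obtain ⟨hr1, hr2⟩ := hr
    have hle : (Ith / β) * r ^ αM ≤ PmaxD := by
      have : r ^ αM ≤ r₀ ^ αM := Real.rpow_le_rpow hr1.le hr2 hαM.le
      rw [hr0αM] at this
      calc (Ith / β) * r ^ αM ≤ (Ith / β) * (β * PmaxD / Ith) := by
            apply mul_le_mul_of_nonneg_left this (by positivity)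
        _ = PmaxD := by field_simp
    have key : ((Ith / β) * r ^ αM) ^ p = c * r ^ (2 : ℕ) := by
      rw [Real.mul_rpow (by positivity) (Real.rpow_nonneg hr1.le _),
        ← Real.rpow_natCast r 2, ← Real.rpow_mul hr1.le]
      have h2 : αM * p = ((2 : ℕ) : ℝ) := by rw [hp_def]; push_cast; field_simp
      rw [h2, hc_def]
    simp only [hg_def]
    rw [min_eq_right hle, key]
  have hg_big : ∀ r ∈ Ioi r₀, g r = PmaxD ^ p := by
    intro r hr
    have hr1 : 0 < r := hr0.trans hr
    have hle : PmaxD ≤ (Ith / β) * r ^ αM := by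
      have : r₀ ^ αM ≤ r ^ αM := Real.rpow_le_rpow hr0.le (le_of_lt hr) hαM.le
      rw [hr0αM] at this
      calc PmaxD = (Ith / β) * (β * PmaxD / Ith) := by field_simp
        _ ≤ (Ith / β) * r ^ αM := by
            apply mul_le_mul_of_nonneg_left this (by positivity)
    simp only [hg_def]
    rw [min_eq_left hle]
  -- integrability of the two pieces
  have hint_small : IntegrableOn
      (fun r => 2 * a * r * Real.exp (-(a * r ^ 2)) * g r) (Ioc 0 r₀) := by
    have hnice : IntegrableOn
        (fun r => 2 * a * r * Real.exp (-(a * r ^ 2)) * (c * r ^ (2:ℕ))) (Ioc 0 r₀) := by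
      apply Continuous.integrableOn_Ioc
      fun_prop
    exact hnice.congr_fun (fun r hr => by rw [hg_small r hr]) measurableSet_Ioc
  have hint_big : IntegrableOn
      (fun r => 2 * a * r * Real.exp (-(a * r ^ 2)) * g r) (Ioi r₀) := by
    have hnice : IntegrableOn
        (fun r => 2 * a * r * Real.exp (-(a * r ^ 2)) * PmaxD ^ p) (Ioi r₀) := by
      have := ((integrable_mul_exp_neg_mul_sq ha).const_mul (2 * a)).mul_const (PmaxD ^ p)
      apply (this.integrableOn (s := Ioi r₀)).congr_fun ?_ measurableSet_Ioi
      intro x _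
      simp only [neg_mul]
      ring
    exact hnice.congr_fun (fun r hr => by rw [hg_big r hr]) measurableSet_Ioi
  -- split the integral
  have hsplit : ∫ r in Ioi (0 : ℝ), 2 * a * r * Real.exp (-(a * r ^ 2)) * g r
      = (∫ r in Ioc (0:ℝ) r₀, 2 * a * r * Real.exp (-(a * r ^ 2)) * g r)
        + ∫ r in Ioi r₀, 2 * a * r * Real.exp (-(a * r ^ 2)) * g r := by
    rw [← Ioc_union_Ioi_eq_Ioi hr0.le]
    exact setIntegral_union Ioc_disjoint_Ioi_same measurableSet_Ioi hint_small hint_big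
  -- compute each piece
  have hpiece1 : ∫ r in Ioc (0:ℝ) r₀, 2 * a * r * Real.exp (-(a * r ^ 2)) * g r
      = (c / a) * (1 - Real.exp (-ϖ₀) - ϖ₀ * Real.exp (-ϖ₀)) := by
    rw [setIntegral_congr_fun measurableSet_Ioc
      (fun r hr => by rw [hg_small r hr])]
    rw [← intervalIntegral.integral_of_le hr0.le, mid_integral ha c r₀, hϖa]
  have hpiece2 : ∫ r in Ioi r₀, 2 * a * r * Real.exp (-(a * r ^ 2)) * g r
      = PmaxD ^ p * Real.exp (-ϖ₀) := by
    rw [setIntegral_congr_fun measurableSet_Ioi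
      (fun r hr => by rw [hg_big r hr])]
    rw [integral_mul_const, tail_integral ha r₀, hϖa]
    ring
  rw [hA, hB, hC, hsplit, hpiece1, hpiece2, hca]
end

section
/- Let R be a real random variable with density f_R(r) = 2π λ_M r exp(−π λ_M r²) for r > 0 (λ_M > 0), let P_D = min{P_max^D, (I_th/β)·R^{α_M}} with P_max^D, I_th, β > 0, α_M > 0, let α_D > 0, and set ϖ₀ = π λ_M (β P_max^D / I_th)^{2/α_M}. Then E[P_D^{2/α_D}] = (π λ_M (β/I_th)^{2/α_M})^{−α_M/α_D}·(Γ(1 + α_M/α_D) − Γ(1 + α_M/α_D, ϖ₀)) + (P_max^D)^{2/α_D}·e^{−ϖ₀}, where Γ(s) is the Gamma function and Γ(s,T) = ∫_T^∞ u^{s−1} e^{−u} du is the upper incomplete Gamma function. -/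
open MeasureTheory Set

/-- The upper incomplete Gamma function `Γ(s,T) = ∫_T^∞ u^{s−1} e^{−u} du`. -/
noncomputable def upperGamma (s T : ℝ) : ℝ := ∫ u in Set.Ioi T, u ^ (s - 1) * Real.exp (-u)

/-- The quantity `Ω₂` of equation (20) of the paper: with the Rayleigh nearest-distance density
and the D2D power control `P_D = min{P_max^D, (I_th/β)·R^{α_M}}`,
`E[P_D^{2/α_D}] = (π λ_M (β/I_th)^{2/α_M})^{−α_M/α_D}·(Γ(1 + α_M/α_D) − Γ(1 + α_M/α_D, ϖ₀))
+ (P_max^D)^{2/α_D}·e^{−ϖ₀}`. -/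
theorem d2d_power_moment_alphaD {Ω : Type*} [MeasurableSpace Ω]
    (μ : Measure Ω) [IsProbabilityMeasure μ]
    (R : Ω → ℝ) (hR : Measurable R)
    (lamM : ℝ) (hlam : 0 < lamM)
    (hdist : Measure.map R μ = (volume : Measure ℝ).withDensity
      (fun r => ENNReal.ofReal
        (if 0 < r then 2 * Real.pi * lamM * r * Real.exp (-(Real.pi * lamM * r ^ 2)) else 0)))
    (PmaxD Ith β αM αD : ℝ) (hPmax : 0 < PmaxD) (hIth : 0 < Ith) (hβ : 0 < β)
    (hαM : 0 < αM) (hαD : 0 < αD)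
    (PD : Ω → ℝ) (hPD : ∀ ω, PD ω = min PmaxD ((Ith / β) * R ω ^ αM))
    (ϖ₀ : ℝ) (hϖ₀ : ϖ₀ = Real.pi * lamM * (β * PmaxD / Ith) ^ (2 / αM)) :
    ∫ ω, PD ω ^ (2 / αD) ∂μ
      = (Real.pi * lamM * (β / Ith) ^ (2 / αM)) ^ (-(αM / αD))
          * (Real.Gamma (1 + αM / αD) - upperGamma (1 + αM / αD) ϖ₀)
        + PmaxD ^ (2 / αD) * Real.exp (-ϖ₀) := by
  have hπ := Real.pi_pos
  set c : ℝ := Real.pi * lamM with hc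
  have hcpos : 0 < c := by positivity
  set p : ℝ := 2 / αD with hp
  set q : ℝ := αM / αD with hq
  have hppos : 0 < p := by positivity
  have hqpos : 0 < q := by positivity
  set K : ℝ := (β * PmaxD / Ith) ^ (2 / αM) with hK
  have hKpos : 0 < K := by positivity
  have hϖpos : 0 < ϖ₀ := by rw [hϖ₀]; positivity
  set F : ℝ → ℝ := fun r => (min PmaxD ((Ith / β) * r ^ αM)) ^ p with hF
  have hFm : Measurable F := by unfold F; fun_prop
  -- Step 1: reduce to Lebesgue integral over Ioi 0
  have step1 : ∫ ω, PD ω ^ p ∂μ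
      = ∫ r in Set.Ioi (0:ℝ), (2 * c * r * Real.exp (-(c * r ^ 2))) * F r := by
    have h1 : ∫ ω, PD ω ^ p ∂μ = ∫ r, F r ∂(Measure.map R μ) := by
      rw [integral_map hR.aemeasurable hFm.aestronglyMeasurable]
      simp only [hF]
      congr 1; ext ω; rw [hPD]
    rw [h1, hdist]
    set ψ : ℝ → ℝ := fun r => if 0 < r then 2 * Real.pi * lamM * r * Real.exp (-(Real.pi * lamM * r ^ 2)) else 0 with hψ
    have hψm : Measurable ψ := by
      unfold ψ
      exact Measurable.ite measurableSet_Ioi (by fun_prop) measurable_const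
    have hd0 : ∀ r : ℝ, 0 ≤ ψ r := by
      intro r
      by_cases h : 0 < r
      · simp only [hψ, if_pos h]; positivity
      · simp only [hψ, if_neg h]; exact le_refl 0
    have hd : ∀ r : ℝ, ψ r = ((ψ r).toNNReal : ℝ) := fun r => (Real.coe_toNNReal _ (hd0 r)).symm
    rw [show (fun r : ℝ => ENNReal.ofReal (if 0 < r then 2 * Real.pi * lamM * r * Real.exp (-(Real.pi * lamM * r ^ 2)) else 0)) = fun r => ((ψ r).toNNReal : ENNReal) from rfl]
    rw [integral_withDensity_eq_integral_smul hψm.real_toNNReal F]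
    have h3 : ∀ r : ℝ, (ψ r).toNNReal • F r = Set.indicator (Set.Ioi 0) (fun r => 2 * c * r * Real.exp (-(c * r ^ 2)) * F r) r := by
      intro r
      rw [NNReal.smul_def, ← hd r]
      rw [Set.indicator_apply]
      simp only [Set.mem_Ioi, hψ]
      split_ifs with hcase
      · simp only [smul_eq_mul, hF, hc]; ring
      · simp
    simp only [h3]
    rw [integral_indicator measurableSet_Ioi]
  -- Step 2: substitution u = c r²
  have step2 : ∫ u in Ioi (0:ℝ), Real.exp (-u) * F (Real.sqrt (u/c))
      = ∫ r in Ioi (0:ℝ), (2*c*r*Real.exp (-(c*r^2))) * F r := by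
    have himg : (fun r : ℝ => c * r ^ 2) '' Ioi 0 = Ioi 0 := by
      ext y
      constructor
      · rintro ⟨r, hr, rfl⟩
        simp only [mem_Ioi] at hr ⊢
        positivity
      · intro hy
        simp only [mem_Ioi] at hy
        refine ⟨Real.sqrt (y / c), ?_, ?_⟩
        · simp only [mem_Ioi]
          exact Real.sqrt_pos.mpr (by positivity)
        · show c * Real.sqrt (y / c) ^ 2 = y
          rw [Real.sq_sqrt (by positivity : (0:ℝ) ≤ y / c)]
          field_simp
    have hderiv : ∀ r ∈ Ioi (0:ℝ), HasDerivWithinAt (fun r : ℝ => c * r ^ 2) (2 * c * r) (Ioi 0) r := by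
      intro r _
      have : HasDerivAt (fun r : ℝ => c * r ^ 2) (c * (2 * r ^ 1)) r :=
        (hasDerivAt_pow 2 r).const_mul c
      refine this.hasDerivWithinAt.congr_deriv ?_
      ring
    have hinj : InjOn (fun r : ℝ => c * r ^ 2) (Ioi 0) := by
      intro x hx y hy h
      simp only [mem_Ioi] at hx hy
      have h2 : x ^ 2 = y ^ 2 := mul_left_cancel₀ hcpos.ne' h
      calc x = Real.sqrt (x ^ 2) := (Real.sqrt_sq hx.le).symm
      _ = Real.sqrt (y ^ 2) := by rw [h2]
      _ = y := Real.sqrt_sq hy.le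
    calc ∫ u in Ioi (0:ℝ), Real.exp (-u) * F (Real.sqrt (u/c))
        = ∫ u in (fun r : ℝ => c * r ^ 2) '' Ioi 0, Real.exp (-u) * F (Real.sqrt (u/c)) := by rw [himg]
      _ = ∫ r in Ioi (0:ℝ), |2 * c * r| • (Real.exp (-(c * r ^ 2)) * F (Real.sqrt (c * r ^ 2 / c))) :=
          integral_image_eq_integral_abs_deriv_smul measurableSet_Ioi hderiv hinj _
      _ = ∫ r in Ioi (0:ℝ), (2*c*r*Real.exp (-(c*r^2))) * F r := by
          apply setIntegral_congr_fun measurableSet_Ioi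
          intro r hr
          simp only [mem_Ioi] at hr
          simp only []
          rw [abs_of_pos (by positivity), mul_div_cancel_left₀ _ hcpos.ne', Real.sqrt_sq hr.le,
            smul_eq_mul]
          ring
  -- the substituted integrand
  set h : ℝ → ℝ := fun u => Real.exp (-u) * F (Real.sqrt (u/c)) with hh
  have hhm : Measurable h := by unfold h F; fun_prop
  -- pointwise values of h
  have hKpow : K ^ (αM / 2) = β * PmaxD / Ith := by
    rw [hK, ← Real.rpow_mul (by positivity : (0:ℝ) ≤ β * PmaxD / Ith)]
    rw [show (2 / αM) * (αM / 2) = 1 by field_simp, Real.rpow_one]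
  have hsqrtF : ∀ u : ℝ, 0 < u →
      F (Real.sqrt (u/c)) = (min PmaxD ((Ith / β) * (u/c) ^ (αM/2))) ^ p := by
    intro u hu
    simp only [hF]
    rw [Real.sqrt_eq_rpow, ← Real.rpow_mul (by positivity : (0:ℝ) ≤ u/c),
      show (1/(2:ℝ)) * αM = αM/2 by ring]
  have hval1 : ∀ u ∈ Ioc (0:ℝ) ϖ₀,
      h u = ((Ith / β) ^ p * c ^ (-q)) * (Real.exp (-u) * u ^ q) := by
    rintro u ⟨hu1, hu2⟩
    have hdiv : u / c ≤ K := (div_le_iff₀ hcpos).mpr (by rw [hϖ₀] at hu2; linarith [mul_comm c K])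
    have hle : (Ith / β) * (u/c) ^ (αM/2) ≤ PmaxD := by
      have h2 : (u/c) ^ (αM/2) ≤ K ^ (αM/2) :=
        Real.rpow_le_rpow (by positivity) hdiv (by positivity)
      rw [hKpow] at h2
      calc (Ith / β) * (u/c) ^ (αM/2) ≤ (Ith / β) * (β * PmaxD / Ith) :=
            mul_le_mul_of_nonneg_left h2 (by positivity)
        _ = PmaxD := by field_simp
    simp only [hh]
    rw [hsqrtF u hu1, min_eq_right hle,
      Real.mul_rpow (by positivity) (by positivity),
      ← Real.rpow_mul (by positivity : (0:ℝ) ≤ u/c),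
      show αM/2 * p = q by rw [hp, hq]; field_simp,
      Real.div_rpow hu1.le hcpos.le,
      Real.rpow_neg hcpos.le]
    field_simp
  have hval2 : ∀ u ∈ Ioi ϖ₀, h u = PmaxD ^ p * Real.exp (-u) := by
    intro u hu
    simp only [mem_Ioi] at hu
    have hu1 : 0 < u := lt_trans hϖpos hu
    have hdiv : K ≤ u / c := (le_div_iff₀ hcpos).mpr (by rw [hϖ₀] at hu; linarith [mul_comm c K])
    have hle : PmaxD ≤ (Ith / β) * (u/c) ^ (αM/2) := by
      have h2 : K ^ (αM/2) ≤ (u/c) ^ (αM/2) :=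
        Real.rpow_le_rpow (by positivity) hdiv (by positivity)
      rw [hKpow] at h2
      calc PmaxD = (Ith / β) * (β * PmaxD / Ith) := by field_simp
        _ ≤ (Ith / β) * (u/c) ^ (αM/2) := mul_le_mul_of_nonneg_left h2 (by positivity)
    simp only [hh]
    rw [hsqrtF u hu1, min_eq_left hle]
    ring
  -- integrability of h on Ioi 0
  have hint : IntegrableOn h (Ioi (0:ℝ)) := by
    have hmaj : IntegrableOn (fun u : ℝ => PmaxD ^ p * Real.exp (-(1:ℝ) * u)) (Ioi (0:ℝ)) :=
      (exp_neg_integrableOn_Ioi 0 one_pos).const_mul _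
    refine Integrable.mono' hmaj hhm.aestronglyMeasurable.restrict (ae_of_all _ ?_)
    intro u
    have hminnn : 0 ≤ min PmaxD ((Ith / β) * Real.sqrt (u/c) ^ αM) :=
      le_min hPmax.le (by positivity)
    have hFnn : 0 ≤ F (Real.sqrt (u/c)) := Real.rpow_nonneg hminnn _
    have hFle : F (Real.sqrt (u/c)) ≤ PmaxD ^ p :=
      Real.rpow_le_rpow hminnn (min_le_left _ _) hppos.le
    simp only [hh, Real.norm_eq_abs]
    rw [abs_of_nonneg (by positivity)]
    calc Real.exp (-u) * F (Real.sqrt (u/c)) ≤ Real.exp (-u) * PmaxD ^ p :=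
          mul_le_mul_of_nonneg_left hFle (Real.exp_pos _).le
      _ = PmaxD ^ p * Real.exp (-(1:ℝ) * u) := by rw [neg_one_mul]; ring
  -- Gamma split
  have hsplitset : Ioc (0:ℝ) ϖ₀ ∪ Ioi ϖ₀ = Ioi 0 := Ioc_union_Ioi_eq_Ioi hϖpos.le
  have hGammaInt : IntegrableOn (fun u : ℝ => Real.exp (-u) * u ^ q) (Ioi (0:ℝ)) := by
    have hgi := Real.GammaIntegral_convergent (show (0:ℝ) < 1 + q by linarith)
    simp only [add_sub_cancel_left] at hgi
    exact hgi
  have hGamma : Real.Gamma (1 + q)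
      = (∫ u in Ioc (0:ℝ) ϖ₀, Real.exp (-u) * u ^ q) + upperGamma (1 + q) ϖ₀ := by
    have e1 : Real.Gamma (1 + q) = ∫ u in Ioi (0:ℝ), Real.exp (-u) * u ^ q := by
      rw [Real.Gamma_eq_integral (show (0:ℝ) < 1 + q by linarith)]
      simp only [add_sub_cancel_left]
    have e2 : upperGamma (1 + q) ϖ₀ = ∫ u in Ioi ϖ₀, Real.exp (-u) * u ^ q := by
      unfold upperGamma
      simp only [add_sub_cancel_left]
      simp_rw [mul_comm]
    rw [e1, e2, ← hsplitset,
      setIntegral_union Ioc_disjoint_Ioi_same measurableSet_Ioi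
        (hGammaInt.mono_set (hsplitset ▸ subset_union_left))
        (hGammaInt.mono_set (hsplitset ▸ subset_union_right))]
  -- main computation
  have main : ∫ u in Ioi (0:ℝ), h u
      = ((Ith / β) ^ p * c ^ (-q)) * (Real.Gamma (1 + q) - upperGamma (1 + q) ϖ₀)
        + PmaxD ^ p * Real.exp (-ϖ₀) := by
    rw [← hsplitset,
      setIntegral_union Ioc_disjoint_Ioi_same measurableSet_Ioi
        (hint.mono_set (hsplitset ▸ subset_union_left))
        (hint.mono_set (hsplitset ▸ subset_union_right))]
    have A : ∫ u in Ioc (0:ℝ) ϖ₀, h u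
        = ((Ith / β) ^ p * c ^ (-q)) * ∫ u in Ioc (0:ℝ) ϖ₀, Real.exp (-u) * u ^ q := by
      rw [setIntegral_congr_fun measurableSet_Ioc hval1, integral_const_mul]
    have B : ∫ u in Ioi ϖ₀, h u = PmaxD ^ p * Real.exp (-ϖ₀) := by
      rw [setIntegral_congr_fun measurableSet_Ioi hval2, integral_const_mul,
        integral_exp_neg_Ioi]
    rw [A, B, hGamma]
    ring
  -- constant identity
  have hconst : (Ith / β) ^ p * c ^ (-q) = (c * (β / Ith) ^ (2 / αM)) ^ (-q) := by
    rw [Real.mul_rpow hcpos.le (by positivity),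
      ← Real.rpow_mul (by positivity : (0:ℝ) ≤ β / Ith),
      show (2 / αM) * (-q) = -p by rw [hp, hq]; field_simp,
      Real.rpow_neg (by positivity : (0:ℝ) ≤ β / Ith) p,
      ← Real.inv_rpow (by positivity : (0:ℝ) ≤ β / Ith), inv_div]
    ring
  rw [step1, ← step2]
  rw [show (∫ u in Ioi (0:ℝ), Real.exp (-u) * F (Real.sqrt (u/c))) = ∫ u in Ioi (0:ℝ), h u from rfl]
  rw [main, hconst]
end

section
/- Let R be a real random variable with density f_R(r) = 2π λ_M r exp(−π λ_M r²) for r > 0 (λ_M > 0), and define P_C = min{P_max^C, P_o β^{−η} R^{η α_M}} with P_o, P_max^C, β > 0, α_M > 0, η ∈ (0,1], and r_o = (P_max^C/P_o)^{1/(α_M η)} β^{1/α_M}. Then E[P_C] = P_o β^{−η} (π λ_M)^{−η α_M/2}·(Γ(1 + η α_M/2) − Γ(1 + η α_M/2, π λ_M r_o²)) + P_max^C·exp(−π λ_M r_o²), where Γ(s,T) = ∫_T^∞ u^{s−1} e^{−u} du is the upper incomplete Gamma function. -/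
open MeasureTheory Set
open scoped NNReal ENNReal

/-- The average cellular transmit power, equation (14) of the paper: with the Rayleigh
nearest-distance density and the open-loop power control
`P_C = min{P_max^C, P_o β^{−η} R^{η α_M}}`, with `r_o = (P_max^C/P_o)^{1/(α_M η)} β^{1/α_M}`,
`E[P_C] = P_o β^{−η} (π λ_M)^{−η α_M/2}(Γ(1 + η α_M/2) − Γ(1 + η α_M/2, π λ_M r_o²))
+ P_max^C exp(−π λ_M r_o²)`. -/
theorem average_cellular_power {Ω : Type*} [MeasurableSpace Ω]
    (μ : Measure Ω) [IsProbabilityMeasure μ]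
    (R : Ω → ℝ) (hR : Measurable R)
    (lamM : ℝ) (hlam : 0 < lamM)
    (hdist : Measure.map R μ = (volume : Measure ℝ).withDensity
      (fun r => ENNReal.ofReal
        (if 0 < r then 2 * Real.pi * lamM * r * Real.exp (-(Real.pi * lamM * r ^ 2)) else 0)))
    (Po PmaxC β αM η : ℝ) (hPo : 0 < Po) (hPmax : 0 < PmaxC) (hβ : 0 < β) (hαM : 0 < αM)
    (hη : 0 < η) (hη1 : η ≤ 1)
    (PC : Ω → ℝ) (hPC : ∀ ω, PC ω = min PmaxC (Po * β ^ (-η) * R ω ^ (η * αM)))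
    (ro : ℝ) (hro : ro = (PmaxC / Po) ^ (1 / (αM * η)) * β ^ (1 / αM)) :
    ∫ ω, PC ω ∂μ
      = Po * β ^ (-η) * (Real.pi * lamM) ^ (-(η * αM / 2))
          * (Real.Gamma (1 + η * αM / 2)
              - upperGamma (1 + η * αM / 2) (Real.pi * lamM * ro ^ 2))
        + PmaxC * Real.exp (-(Real.pi * lamM * ro ^ 2)) := by
  have hpl : 0 < Real.pi * lamM := mul_pos Real.pi_pos hlam
  have hepos : 0 < η * αM := mul_pos hη hαM
  set c : ℝ := η * αM / 2 with hc
  have hcpos : 0 < c := by positivity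
  have hro_pos : 0 < ro := by
    rw [hro]; positivity
  set T : ℝ := Real.pi * lamM * ro ^ 2 with hT
  have hTpos : 0 < T := by positivity
  set dens0 : ℝ → ℝ :=
    fun r => 2 * Real.pi * lamM * r * Real.exp (-(Real.pi * lamM * r ^ 2)) with hdens0
  set dens : ℝ → ℝ := fun r => if 0 < r then dens0 r else 0 with hdensdef
  have hdens_nonneg : ∀ r, 0 ≤ dens r := by
    intro r
    rw [hdensdef]
    dsimp only
    split
    · rename_i hr
      rw [hdens0]
      dsimp only
      positivity
    · exact le_refl 0
  set g : ℝ → ℝ := fun r => min PmaxC (Po * β ^ (-η) * r ^ (η * αM)) with hgdef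
  -- key identity at r_o
  have hkey : Po * β ^ (-η) * ro ^ (η * αM) = PmaxC := by
    have h1 : ro ^ (η * αM)
        = (PmaxC / Po) ^ ((1 / (αM * η)) * (η * αM)) * β ^ ((1 / αM) * (η * αM)) := by
      rw [hro, Real.mul_rpow (by positivity) (by positivity),
        Real.rpow_mul (by positivity : (0:ℝ) ≤ PmaxC / Po), Real.rpow_mul hβ.le]
    have he1 : (1 / (αM * η)) * (η * αM) = 1 := by
      field_simp
    have he2 : (1 / αM) * (η * αM) = η := by
      field_simp
    rw [h1, he1, he2, Real.rpow_one]
    have hbη : 0 < β ^ η := Real.rpow_pos_of_pos hβ η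
    rw [Real.rpow_neg hβ.le]
    field_simp
  have hmin_le : ∀ r : ℝ, 0 ≤ r → r ≤ ro → g r = Po * β ^ (-η) * r ^ (η * αM) := by
    intro r hr hle
    apply min_eq_right
    rw [← hkey]
    exact mul_le_mul_of_nonneg_left (Real.rpow_le_rpow hr hle hepos.le) (by positivity)
  have hmin_ge : ∀ r : ℝ, ro ≤ r → g r = PmaxC := by
    intro r hle
    apply min_eq_left
    rw [← hkey]
    exact mul_le_mul_of_nonneg_left (Real.rpow_le_rpow hro_pos.le hle hepos.le) (by positivity)
  -- measurability / continuity facts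
  have hrpow_cont : Continuous fun r : ℝ => r ^ (η * αM) :=
    continuous_iff_continuousAt.2 fun x =>
      Real.continuousAt_rpow_const x _ (Or.inr hepos.le)
  have hgm : Measurable g := by
    rw [hgdef]
    exact measurable_const.min ((hrpow_cont.measurable).const_mul _)
  have hdens0_cont : Continuous dens0 := by
    rw [hdens0]
    fun_prop
  have hdens_m : Measurable dens := by
    rw [hdensdef]
    exact Measurable.ite measurableSet_Ioi hdens0_cont.measurable measurable_const
  -- Step 1 : expectation as a Lebesgue integral against the density
  have step1 : ∫ ω, PC ω ∂μ = ∫ r, dens r * g r := by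
    have hPCg : ∀ ω, PC ω = g (R ω) := by
      intro ω; simp only [hPC, hgdef]
    calc ∫ ω, PC ω ∂μ = ∫ ω, g (R ω) ∂μ := by simp_rw [hPCg]
      _ = ∫ r, g r ∂(Measure.map R μ) :=
          (integral_map hR.aemeasurable hgm.aestronglyMeasurable).symm
      _ = ∫ r, ((dens r).toNNReal : ℝ≥0) • g r := by
          rw [hdist]
          have hEq : (fun r : ℝ => ENNReal.ofReal (dens r))
              = fun r : ℝ => ((dens r).toNNReal : ℝ≥0∞) := rfl
          have h2 := integral_withDensity_eq_integral_smul
            (μ := (volume : Measure ℝ)) (hdens_m.real_toNNReal) g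
          rw [← h2]
          congr 1
      _ = ∫ r, dens r * g r := by
          congr 1
          funext r
          rw [NNReal.smul_def, Real.coe_toNNReal _ (hdens_nonneg r)]
          rfl
  -- Step 2 : restrict to (0,∞)
  have step2 : ∫ r, dens r * g r = ∫ r in Ioi (0:ℝ), dens r * g r := by
    refine (setIntegral_eq_integral_of_forall_compl_eq_zero ?_).symm
    intro r hr
    have : ¬ (0 < r) := by simpa using hr
    simp [hdensdef, this]
  -- pointwise descriptions on the two pieces
  have hIoc_eq : EqOn (fun r => dens r * g r)
      (fun r => dens0 r * (Po * β ^ (-η) * r ^ (η * αM))) (Ioc 0 ro) := by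
    intro r hr
    have h1 : dens r = dens0 r := by rw [hdensdef]; exact if_pos hr.1
    simp only [h1, hmin_le r hr.1.le hr.2]
  have hIoi_eq : EqOn (fun r => dens r * g r)
      (fun r => dens0 r * PmaxC) (Ioi ro) := by
    intro r hr
    have hr0 : 0 < r := hro_pos.trans hr
    have h1 : dens r = dens0 r := by rw [hdensdef]; exact if_pos hr0
    simp only [h1, hmin_ge r (le_of_lt hr)]
  -- integrability on (0, ro]
  have hInt1 : IntegrableOn (fun r => dens r * g r) (Ioc 0 ro) := by
    apply Measure.integrableOn_of_bounded (M := (2 * Real.pi * lamM * ro) * PmaxC)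
    · exact (measure_Ioc_lt_top).ne
    · exact (hdens_m.mul hgm).aestronglyMeasurable
    · rw [ae_restrict_iff' measurableSet_Ioc]
      filter_upwards with r hr
      have hr0 : 0 < r := hr.1
      have h1 : dens r = dens0 r := by rw [hdensdef]; exact if_pos hr0
      have hdle : dens0 r ≤ 2 * Real.pi * lamM * ro := by
        rw [hdens0]
        dsimp only
        calc 2 * Real.pi * lamM * r * Real.exp (-(Real.pi * lamM * r ^ 2))
            ≤ 2 * Real.pi * lamM * r * 1 := by
              apply mul_le_mul_of_nonneg_left (Real.exp_le_one_iff.2 (neg_nonpos.2 (by positivity)))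
                (mul_nonneg (by positivity) hr0.le)
          _ = 2 * Real.pi * lamM * r := by ring
          _ ≤ 2 * Real.pi * lamM * ro := by
              apply mul_le_mul_of_nonneg_left hr.2 (by positivity)
      have hgle : g r ≤ PmaxC := min_le_left _ _
      have hg0 : 0 ≤ g r := le_min hPmax.le (by positivity)
      have hd0 : 0 ≤ dens r := hdens_nonneg r
      rw [Real.norm_eq_abs, abs_of_nonneg (mul_nonneg hd0 hg0), h1]
      exact mul_le_mul hdle hgle hg0 (by positivity)
  -- the antiderivative of dens0
  have hF : ∀ x : ℝ, HasDerivAt (fun y : ℝ => -Real.exp (-(Real.pi * lamM * y ^ 2)))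
      (dens0 x) x := by
    intro x
    have h1 : HasDerivAt (fun y : ℝ => Real.pi * lamM * y ^ 2)
        (Real.pi * lamM * (2 * x)) x := by
      have := (hasDerivAt_pow 2 x).const_mul (Real.pi * lamM)
      simpa using this
    have h2 := (h1.neg.exp).neg
    refine h2.congr_deriv ?_
    simp only [Pi.neg_apply, hdens0]
    ring
  have htend : Filter.Tendsto (fun y : ℝ => -Real.exp (-(Real.pi * lamM * y ^ 2)))
      Filter.atTop (nhds 0) := by
    have h1 : Filter.Tendsto (fun y : ℝ => Real.pi * lamM * y ^ 2)
        Filter.atTop Filter.atTop :=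
      (Filter.tendsto_pow_atTop (by norm_num)).const_mul_atTop hpl
    have h2 := Real.tendsto_exp_neg_atTop_nhds_zero.comp h1
    have h3 := h2.neg
    simpa using h3
  have hFcont : ContinuousWithinAt (fun y : ℝ => -Real.exp (-(Real.pi * lamM * y ^ 2)))
      (Ici ro) ro := by
    apply Continuous.continuousWithinAt
    fun_prop
  have hd0nn : ∀ x ∈ Ioi ro, 0 ≤ dens0 x := by
    intro x hx
    have hx0 : 0 < x := hro_pos.trans hx
    rw [hdens0]
    dsimp only
    positivity
  have hInt0 : IntegrableOn dens0 (Ioi ro) :=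
    integrableOn_Ioi_deriv_of_nonneg hFcont (fun x _ => hF x) hd0nn htend
  have hIoi_val : ∫ r in Ioi ro, dens0 r = Real.exp (-T) := by
    have := integral_Ioi_of_hasDerivAt_of_nonneg hFcont (fun x _ => hF x) hd0nn htend
    rw [this, hT]
    ring
  have hInt2 : IntegrableOn (fun r => dens r * g r) (Ioi ro) :=
    IntegrableOn.congr_fun (hInt0.mul_const PmaxC) hIoi_eq.symm measurableSet_Ioi
  -- split
  have step3 : ∫ r in Ioi (0:ℝ), dens r * g r
      = (∫ r in Ioc 0 ro, dens r * g r) + ∫ r in Ioi ro, dens r * g r := by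
    rw [← Set.Ioc_union_Ioi_eq_Ioi hro_pos.le,
      setIntegral_union (Set.Ioc_disjoint_Ioi le_rfl) measurableSet_Ioi hInt1 hInt2]
  -- the tail piece
  have htail : ∫ r in Ioi ro, dens r * g r = PmaxC * Real.exp (-T) := by
    rw [setIntegral_congr_fun measurableSet_Ioi hIoi_eq, integral_mul_const, hIoi_val]
    ring
  -- the head piece, via the substitution u = π λ r²
  set s : ℝ := 1 + c with hs
  have hspos : 0 < s := by positivity
  have hs1c : s - 1 = c := by rw [hs]; ring
  set G : ℝ → ℝ :=
    fun u => Po * β ^ (-η) * (u / (Real.pi * lamM)) ^ c * Real.exp (-u) with hGdef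
  have hGcont : Continuous G := by
    rw [hGdef]
    have h1 : Continuous fun u : ℝ => (u / (Real.pi * lamM)) ^ c :=
      (continuous_id.div_const _).rpow_const fun x => Or.inr hcpos.le
    exact (continuous_const.mul h1).mul (Real.continuous_exp.comp continuous_neg)
  have hderiv : ∀ x ∈ uIcc (0:ℝ) ro,
      HasDerivAt (fun y : ℝ => Real.pi * lamM * y ^ 2) (2 * Real.pi * lamM * x) x := by
    intro x _
    have := (hasDerivAt_pow 2 x).const_mul (Real.pi * lamM)
    refine this.congr_deriv ?_
    push_cast
    ring
  have hsub : ∫ x in (0:ℝ)..ro, (2 * Real.pi * lamM * x) • G (Real.pi * lamM * x ^ 2)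
      = ∫ u in (Real.pi * lamM * (0:ℝ) ^ 2)..(Real.pi * lamM * ro ^ 2), G u :=
    intervalIntegral.integral_comp_smul_deriv hderiv (by fun_prop) hGcont
  have hhead : ∫ r in Ioc 0 ro, dens r * g r
      = (∫ u in Ioc 0 T, G u) := by
    rw [setIntegral_congr_fun measurableSet_Ioc hIoc_eq,
      ← intervalIntegral.integral_of_le hro_pos.le]
    have heq1 : ∫ x in (0:ℝ)..ro, dens0 x * (Po * β ^ (-η) * x ^ (η * αM))
        = ∫ x in (0:ℝ)..ro, (2 * Real.pi * lamM * x) • G (Real.pi * lamM * x ^ 2) := by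
      apply intervalIntegral.integral_congr
      rw [Set.uIcc_of_le hro_pos.le]
      intro x hx
      have hx0 : 0 ≤ x := hx.1
      have hxx : Real.pi * lamM * x ^ 2 / (Real.pi * lamM) = x ^ 2 := by
        field_simp
      have hx2 : ((x : ℝ) ^ 2) ^ c = x ^ (η * αM) := by
        rw [← Real.rpow_natCast x 2, ← Real.rpow_mul hx0]
        congr 1
        push_cast
        rw [hc]
        ring
      rw [hGdef]
      dsimp only
      rw [hxx, hx2, smul_eq_mul, hdens0]
      dsimp only
      ring
    rw [heq1, hsub]
    have h00 : Real.pi * lamM * (0:ℝ) ^ 2 = 0 := by ring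
    rw [h00, ← hT, intervalIntegral.integral_of_le hTpos.le]
  -- evaluate ∫_{(0,T]} G
  have hGval : ∫ u in Ioc 0 T, G u
      = Po * β ^ (-η) * (Real.pi * lamM) ^ (-c)
          * ∫ u in Ioc 0 T, Real.exp (-u) * u ^ (s - 1) := by
    rw [← integral_const_mul]
    apply setIntegral_congr_fun measurableSet_Ioc
    intro u hu
    have hu0 : 0 ≤ u := hu.1.le
    rw [hGdef]
    dsimp only
    rw [Real.div_rpow hu0 hpl.le, Real.rpow_neg hpl.le, hs1c, div_eq_mul_inv]
    ring
  -- relate to Gamma functions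
  have hGammaInt : IntegrableOn (fun x => Real.exp (-x) * x ^ (s - 1)) (Ioi 0) :=
    Real.GammaIntegral_convergent hspos
  have hsplitΓ : Real.Gamma s
      = (∫ u in Ioc 0 T, Real.exp (-u) * u ^ (s - 1))
        + ∫ u in Ioi T, Real.exp (-u) * u ^ (s - 1) := by
    rw [Real.Gamma_eq_integral hspos, ← Set.Ioc_union_Ioi_eq_Ioi hTpos.le,
      setIntegral_union (Set.Ioc_disjoint_Ioi le_rfl) measurableSet_Ioi
        (hGammaInt.mono_set Set.Ioc_subset_Ioi_self)
        (hGammaInt.mono_set (Set.Ioi_subset_Ioi hTpos.le))]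
  have hupper : upperGamma s T = ∫ u in Ioi T, Real.exp (-u) * u ^ (s - 1) := by
    rw [upperGamma]
    apply setIntegral_congr_fun measurableSet_Ioi
    intro u _
    ring
  have hmid : ∫ u in Ioc 0 T, Real.exp (-u) * u ^ (s - 1)
      = Real.Gamma s - upperGamma s T := by
    rw [hsplitΓ, hupper]
    ring
  -- final assembly
  rw [step1, step2, step3, htail, hhead, hGval, hmid]
end

section
/- For all λ > 0 and r_o > 0, ∫₀^{r_o} ln(x) · 2π λ x e^{−π λ x²} dx = −(1/2)·(γ + Γ(0, π λ r_o²) + 2 e^{−π λ r_o²} ln(r_o) + ln(π λ)), where γ is the Euler–Mascheroni constant and Γ(0,T) = ∫_T^∞ e^{−u}/u du. -/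
open MeasureTheory Set intervalIntegral
open Filter


lemma aux_integrableOn_log_mul_exp_neg :
    IntegrableOn (fun t : ℝ => Real.log t * Real.exp (-t)) (Ioi 0) := by
  have hmeas : AEStronglyMeasurable (fun t : ℝ => Real.log t * Real.exp (-t))
      (volume.restrict (Ioi (0:ℝ))) :=
    (Real.measurable_log.mul (Real.measurable_exp.comp measurable_neg)).aestronglyMeasurable
  rw [show Ioi (0:ℝ) = Ioc 0 1 ∪ Ioi 1 by rw [Ioc_union_Ioi_eq_Ioi]; norm_num]
  refine IntegrableOn.union ?_ ?_
  · have hint : IntegrableOn (fun t : ℝ => 2 * t ^ (-(1:ℝ)/2)) (Ioc 0 1) := by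
      have h := intervalIntegral.intervalIntegrable_rpow' 
        (a := 0) (b := 1) (r := -(1:ℝ)/2) (by norm_num)
      rw [intervalIntegrable_iff_integrableOn_Ioc_of_le (by norm_num)] at h
      exact h.const_mul 2
    refine Integrable.mono hint (hmeas.mono_set Ioc_subset_Ioi_self) ?_
    rw [ae_restrict_iff' measurableSet_Ioc]
    filter_upwards with t ht
    have ht0 : 0 < t := ht.1
    have hlog : |Real.log t| ≤ 2 * t ^ (-(1:ℝ)/2) := by
      have h1 : Real.log t ≤ 0 := Real.log_nonpos ht0.le ht.2
      rw [abs_of_nonpos h1]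
      have h2 : -Real.log t = Real.log t⁻¹ := (Real.log_inv t).symm
      rw [h2]
      have h3 := Real.log_le_rpow_div (x := t⁻¹) (ε := 1/2) (by positivity) (by norm_num)
      calc Real.log t⁻¹ ≤ (t⁻¹) ^ ((1:ℝ)/2) / (1/2) := h3
        _ = 2 * t ^ (-(1:ℝ)/2) := by
            rw [Real.inv_rpow ht0.le, ← Real.rpow_neg ht0.le]
            ring_nf
    have hexp : Real.exp (-t) ≤ 1 := Real.exp_le_one_iff.mpr (by linarith)
    calc ‖Real.log t * Real.exp (-t)‖ = |Real.log t| * Real.exp (-t) := by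
          rw [norm_mul, Real.norm_eq_abs, Real.norm_eq_abs, abs_of_pos (Real.exp_pos _)]
      _ ≤ |Real.log t| * 1 := by
          exact mul_le_mul_of_nonneg_left hexp (abs_nonneg _)
      _ ≤ 2 * t ^ (-(1:ℝ)/2) := by rw [mul_one]; exact hlog
      _ ≤ ‖2 * t ^ (-(1:ℝ)/2)‖ := le_abs_self _
  · have hint : IntegrableOn (fun t : ℝ => Real.exp (-t) * t ^ ((2:ℝ)-1)) (Ioi 1) :=
      (Real.GammaIntegral_convergent (by norm_num : (0:ℝ) < 2)).mono_set
        (Ioi_subset_Ioi (by norm_num))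
    refine Integrable.mono hint (hmeas.mono_set (Ioi_subset_Ioi (by norm_num))) ?_
    rw [ae_restrict_iff' measurableSet_Ioi]
    filter_upwards with t ht
    have ht1 : (1:ℝ) < t := ht
    have ht0 : (0:ℝ) < t := by linarith
    have hlog : |Real.log t| ≤ t := by
      rw [abs_of_nonneg (Real.log_nonneg ht1.le)]
      linarith [Real.log_le_sub_one_of_pos ht0]
    calc ‖Real.log t * Real.exp (-t)‖ = |Real.log t| * Real.exp (-t) := by
          rw [norm_mul, Real.norm_eq_abs, Real.norm_eq_abs, abs_of_pos (Real.exp_pos _)]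
      _ ≤ t * Real.exp (-t) := mul_le_mul_of_nonneg_right hlog (Real.exp_pos _).le
      _ = Real.exp (-t) * t ^ ((2:ℝ)-1) := by
          rw [show (2:ℝ)-1 = 1 by norm_num, Real.rpow_one]; ring
      _ ≤ ‖Real.exp (-t) * t ^ ((2:ℝ)-1)‖ := le_abs_self _

lemma aux_integral_log_mul_exp_neg :
    ∫ t in Ioi (0:ℝ), Real.log t * Real.exp (-t) = -Real.eulerMascheroniConstant := by
  set I : ℝ := ∫ t in Ioi (0:ℝ), Real.log t * Real.exp (-t) with hI
  have h1 : HasDerivAt Complex.GammaIntegral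
      (∫ t : ℝ in Ioi 0, (t:ℂ) ^ ((1:ℂ) - 1) * (Real.log t * Real.exp (-t))) 1 :=
    Complex.hasDerivAt_GammaIntegral (by norm_num)
  have h2 : (∫ t : ℝ in Ioi 0, (t:ℂ) ^ ((1:ℂ) - 1) * (Real.log t * Real.exp (-t))) = (I:ℂ) := by
    have e1 : (∫ t : ℝ in Ioi 0, (t:ℂ) ^ ((1:ℂ) - 1) * (Real.log t * Real.exp (-t)))
        = ∫ t : ℝ in Ioi 0, ((Real.log t * Real.exp (-t) : ℝ) : ℂ) := by
      refine setIntegral_congr_fun measurableSet_Ioi fun t ht => ?_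
      simp [Complex.ofReal_mul]
    rw [e1, hI]
    exact _root_.integral_ofReal
  rw [h2] at h1
  have hev : Complex.Gamma =ᶠ[nhds (1:ℂ)] Complex.GammaIntegral := by
    have hopen : IsOpen {z : ℂ | 0 < z.re} := isOpen_lt continuous_const Complex.continuous_re
    have hmem : (1:ℂ) ∈ {z : ℂ | 0 < z.re} := by simp
    filter_upwards [hopen.mem_nhds hmem] with z hz
    exact Complex.Gamma_eq_integral hz
  have h3 : HasDerivAt Complex.Gamma (I:ℂ) 1 := h1.congr_of_eventuallyEq hev
  have h4 : HasDerivAt Real.Gamma ((I:ℂ)).re 1 := h3.real_of_complex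
  have h5 := h4.unique Real.hasDerivAt_Gamma_one
  simpa using h5


lemma aux_integrableOn_exp_neg_div {T : ℝ} (hT : 0 < T) :
    IntegrableOn (fun t : ℝ => Real.exp (-t) / t) (Ioi T) := by
  have h0 : IntegrableOn (fun t : ℝ => Real.exp (-t)) (Ioi T) := by
    simpa using exp_neg_integrableOn_Ioi T one_pos
  have hint : IntegrableOn (fun t : ℝ => Real.exp (-t) * T⁻¹) (Ioi T) := h0.mul_const _
  refine Integrable.mono hint ?_ ?_
  · exact ((Real.measurable_exp.comp measurable_neg).div measurable_id).aestronglyMeasurable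
  · rw [ae_restrict_iff' measurableSet_Ioi]
    filter_upwards with t ht
    have ht0 : 0 < t := hT.trans ht
    rw [Real.norm_eq_abs, Real.norm_eq_abs, abs_of_pos (by positivity), abs_of_pos (by positivity),
      div_eq_mul_inv]
    exact mul_le_mul_of_nonneg_left (inv_anti₀ hT (le_of_lt ht)) (Real.exp_pos _).le

lemma aux_tendsto : Tendsto (fun t : ℝ => -(Real.exp (-t) * Real.log t)) atTop (nhds 0) := by
  have h : Tendsto (fun t : ℝ => Real.exp (-t) * Real.log t) atTop (nhds 0) := by
    refine squeeze_zero_norm' ?_ (Real.tendsto_pow_mul_exp_neg_atTop_nhds_zero 1)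
    filter_upwards [eventually_ge_atTop (1:ℝ)] with t ht
    have ht0 : (0:ℝ) < t := by linarith
    rw [norm_mul, Real.norm_eq_abs, Real.norm_eq_abs, abs_of_pos (Real.exp_pos _),
      abs_of_nonneg (Real.log_nonneg ht)]
    calc Real.exp (-t) * Real.log t ≤ Real.exp (-t) * t := by
          exact mul_le_mul_of_nonneg_left (by linarith [Real.log_le_sub_one_of_pos ht0])
            (Real.exp_pos _).le
        _ = t ^ 1 * Real.exp (-t) := by ring
  simpa using h.neg

lemma aux_parts {T : ℝ} (hT : 0 < T) :
    ∫ t in Ioi T, Real.log t * Real.exp (-t)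
      = Real.exp (-T) * Real.log T + ∫ t in Ioi T, Real.exp (-t) / t := by
  have hderiv : ∀ t ∈ Ici T, HasDerivAt (fun t : ℝ => -(Real.exp (-t) * Real.log t))
      (Real.log t * Real.exp (-t) - Real.exp (-t) / t) t := by
    intro t ht
    have ht0 : 0 < t := lt_of_lt_of_le hT ht
    have h1 : HasDerivAt (fun t : ℝ => Real.exp (-t)) (-Real.exp (-t)) t := by
      simpa [Function.comp_def] using (Real.hasDerivAt_exp (-t)).comp t (hasDerivAt_neg t)
    have h2 : HasDerivAt Real.log t⁻¹ t := Real.hasDerivAt_log (ne_of_gt ht0)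
    have := (h1.mul h2).neg
    refine this.congr_deriv ?_
    ring
  have hint1 : IntegrableOn (fun t : ℝ => Real.log t * Real.exp (-t)) (Ioi T) :=
    aux_integrableOn_log_mul_exp_neg.mono_set (Ioi_subset_Ioi hT.le)
  have hint2 := aux_integrableOn_exp_neg_div hT
  have key := integral_Ioi_of_hasDerivAt_of_tendsto' hderiv (hint1.sub hint2) aux_tendsto
  rw [MeasureTheory.integral_sub hint1 hint2] at key
  have : Real.exp (-T) * Real.log T = 0 - -(Real.exp (-T) * Real.log T) := by ring
  rw [eq_comm] at key
  linarith [key]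




lemma aux_Ioo {T : ℝ} (hT : 0 < T) :
    ∫ t in Ioo (0:ℝ) T, Real.log t * Real.exp (-t)
      = -Real.eulerMascheroniConstant - Real.exp (-T) * Real.log T
        - ∫ t in Ioi T, Real.exp (-t) / t := by
  rw [← MeasureTheory.integral_Ioc_eq_integral_Ioo]
  have h1 : IntegrableOn (fun t : ℝ => Real.log t * Real.exp (-t)) (Ioc 0 T) :=
    aux_integrableOn_log_mul_exp_neg.mono_set Ioc_subset_Ioi_self
  have h2 : IntegrableOn (fun t : ℝ => Real.log t * Real.exp (-t)) (Ioi T) :=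
    aux_integrableOn_log_mul_exp_neg.mono_set (Ioi_subset_Ioi hT.le)
  have hu : (∫ t in Ioc (0:ℝ) T, Real.log t * Real.exp (-t))
        + (∫ t in Ioi T, Real.log t * Real.exp (-t))
      = ∫ t in Ioi (0:ℝ), Real.log t * Real.exp (-t) := by
    rw [← MeasureTheory.setIntegral_union Ioc_disjoint_Ioi_same measurableSet_Ioi h1 h2,
      Ioc_union_Ioi_eq_Ioi hT.le]
  rw [aux_integral_log_mul_exp_neg, aux_parts hT] at hu
  linarith [hu]

lemma aux_exp_Ioo {T : ℝ} (hT : 0 < T) :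
    ∫ u in Ioo (0:ℝ) T, Real.exp (-u) = 1 - Real.exp (-T) := by
  rw [← MeasureTheory.integral_Ioc_eq_integral_Ioo, ← intervalIntegral.integral_of_le hT.le]
  have hft : ∀ u ∈ uIcc (0:ℝ) T, HasDerivAt (fun u : ℝ => -Real.exp (-u)) (Real.exp (-u)) u := by
    intro u _
    simpa [Function.comp_def, Pi.neg_def] using ((Real.hasDerivAt_exp (-u)).comp u (hasDerivAt_neg u)).neg
  rw [intervalIntegral.integral_eq_sub_of_hasDerivAt hft
    ((Real.continuous_exp.comp continuous_neg).intervalIntegrable 0 T)]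
  simp only [neg_zero, Real.exp_zero]
  ring

/-- Truncated logarithmic moment of the Rayleigh density (Appendix C of the paper):
`∫₀^{r_o} ln(x)·2πλ x e^{−πλx²} dx
  = −(1/2)(γ + Γ(0, πλ r_o²) + 2 e^{−πλ r_o²} ln(r_o) + ln(πλ))`,
where `Γ(0,T) = ∫_T^∞ e^{−u}/u du`. -/
theorem rayleigh_truncated_log_moment (lam ro : ℝ) (hlam : 0 < lam) (hro : 0 < ro) :
    ∫ x in (0:ℝ)..ro, Real.log x * (2 * Real.pi * lam * x * Real.exp (-(Real.pi * lam * x ^ 2)))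
      = -(1 / 2) * (Real.eulerMascheroniConstant
          + (∫ u in Set.Ioi (Real.pi * lam * ro ^ 2), Real.exp (-u) / u)
          + 2 * Real.exp (-(Real.pi * lam * ro ^ 2)) * Real.log ro
          + Real.log (Real.pi * lam)) := by
  have hpl : 0 < Real.pi * lam := mul_pos Real.pi_pos hlam
  set T : ℝ := Real.pi * lam * ro ^ 2 with hT
  have hT0 : 0 < T := by positivity
  set g : ℝ → ℝ := fun u => (Real.log u - Real.log (Real.pi * lam)) / 2 * Real.exp (-u) with hg
  -- step 1 : interval integral to Ioo
  rw [intervalIntegral.integral_of_le hro.le, MeasureTheory.integral_Ioc_eq_integral_Ioo]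
  -- step 2 : image set
  have himg : (fun x : ℝ => Real.pi * lam * x ^ 2) '' Ioo 0 ro = Ioo 0 T := by
    ext u
    simp only [mem_image, mem_Ioo]
    constructor
    · rintro ⟨x, ⟨hx0, hxr⟩, rfl⟩
      exact ⟨mul_pos hpl (pow_pos hx0 2), by rw [hT]; exact mul_lt_mul_of_pos_left (by nlinarith) hpl⟩
    · rintro ⟨hu1, hu2⟩
      refine ⟨Real.sqrt (u / (Real.pi * lam)), ⟨Real.sqrt_pos.mpr (by positivity), ?_⟩, ?_⟩
      · rw [Real.sqrt_lt' hro, div_lt_iff₀ hpl]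
        rw [hT] at hu2; nlinarith [hu2]
      · rw [Real.sq_sqrt (by positivity : (0:ℝ) ≤ u / (Real.pi * lam))]
        field_simp
  -- step 3 : change of variables
  have hcov : ∫ u in Ioo (0:ℝ) T, g u
      = ∫ x in Ioo (0:ℝ) ro, |2 * Real.pi * lam * x| • g (Real.pi * lam * x ^ 2) := by
    rw [← himg]
    refine integral_image_eq_integral_abs_deriv_smul measurableSet_Ioo (fun x hx => ?_) ?_ g
    · have : HasDerivAt (fun x : ℝ => Real.pi * lam * x ^ 2) (2 * Real.pi * lam * x) x := by
        simpa [mul_comm, mul_assoc, mul_left_comm] using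
          ((hasDerivAt_pow 2 x).const_mul (Real.pi * lam))
      exact this.hasDerivWithinAt
    · intro x hx y hy hxy
      have hx0 : 0 < x := hx.1
      have hy0 : 0 < y := hy.1
      have h2 : x ^ 2 = y ^ 2 := mul_left_cancel₀ (ne_of_gt hpl) hxy
      nlinarith [h2, hx0, hy0]
  -- step 4 : integrand matches
  have hcong : ∫ x in Ioo (0:ℝ) ro,
        Real.log x * (2 * Real.pi * lam * x * Real.exp (-(Real.pi * lam * x ^ 2)))
      = ∫ x in Ioo (0:ℝ) ro, |2 * Real.pi * lam * x| • g (Real.pi * lam * x ^ 2) := by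
    refine setIntegral_congr_fun measurableSet_Ioo fun x hx => ?_
    have hx0 : 0 < x := hx.1
    have habs : |2 * Real.pi * lam * x| = 2 * Real.pi * lam * x := abs_of_pos (by positivity)
    rw [smul_eq_mul, habs, hg]
    have hlog : Real.log (Real.pi * lam * x ^ 2) = Real.log (Real.pi * lam) + 2 * Real.log x := by
      rw [Real.log_mul (ne_of_gt hpl) (by positivity), Real.log_pow]
      push_cast; ring
    simp only [hlog]
    ring
  rw [hcong, ← hcov]
  -- step 5 : evaluate ∫ g on Ioo 0 T
  have hginteg : ∫ u in Ioo (0:ℝ) T, g u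
      = (1/2) * (∫ u in Ioo (0:ℝ) T, Real.log u * Real.exp (-u))
        - (Real.log (Real.pi * lam) / 2) * ∫ u in Ioo (0:ℝ) T, Real.exp (-u) := by
    have hgeq : g = fun u => (1/2) * (Real.log u * Real.exp (-u))
        - (Real.log (Real.pi * lam) / 2) * Real.exp (-u) := by
      funext u; rw [hg]; ring
    have hi1 : IntegrableOn (fun u : ℝ => Real.log u * Real.exp (-u)) (Ioo 0 T) :=
      aux_integrableOn_log_mul_exp_neg.mono_set Ioo_subset_Ioi_self
    have hi2 : IntegrableOn (fun u : ℝ => Real.exp (-u)) (Ioo 0 T) :=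
      ((Real.continuous_exp.comp continuous_neg).integrableOn_Ioc).mono_set Ioo_subset_Ioc_self
    rw [hgeq, MeasureTheory.integral_sub (hi1.const_mul _) (hi2.const_mul _),
      MeasureTheory.integral_const_mul, MeasureTheory.integral_const_mul]
  rw [hginteg, aux_Ioo hT0, aux_exp_Ioo hT0]
  have hlogT : Real.log T = Real.log (Real.pi * lam) + 2 * Real.log ro := by
    rw [hT, Real.log_mul (ne_of_gt hpl) (by positivity), Real.log_pow]
    push_cast; ring
  rw [hlogT]
  ring
end

section
/- For all real α > 2 and s > 0, ∫₀^∞ (1 − 1/(1 + s r^{−α})) · 2π r dr = π s^{2/α} Γ(1 + 2/α) Γ(1 − 2/α), where Γ is the Gamma function. -/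
open MeasureTheory Set

lemma realBeta (u v : ℝ) (hu : 0 < u) (hv : 0 < v) :
    ∫ x in (0:ℝ)..1, x ^ (u-1) * (1-x) ^ (v-1)
      = Real.Gamma u * Real.Gamma v / Real.Gamma (u+v) := by
  have h1 : (Complex.betaIntegral u v)
      = ((∫ x in (0:ℝ)..1, x ^ (u-1) * (1-x) ^ (v-1) : ℝ) : ℂ) := by
    rw [Complex.betaIntegral, ← intervalIntegral.integral_ofReal]
    refine intervalIntegral.integral_congr fun x hx => ?_
    rw [uIcc_of_le zero_le_one] at hx
    rw [Complex.ofReal_mul, Complex.ofReal_cpow hx.1, Complex.ofReal_cpow (by linarith [hx.2] : (0:ℝ) ≤ 1 - x)]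
    push_cast
    ring
  have h2 := Complex.Gamma_mul_Gamma_eq_betaIntegral
    (s := (u:ℂ)) (t := (v:ℂ)) (by simpa using hu) (by simpa using hv)
  have h3 : Complex.Gamma ((u:ℂ) + v) ≠ 0 :=
    Complex.Gamma_ne_zero_of_re_pos (by simp [add_pos hu hv])
  rw [h1] at h2
  have h4 : ((∫ x in (0:ℝ)..1, x ^ (u-1) * (1-x) ^ (v-1) : ℝ) : ℂ)
      = Complex.Gamma u * Complex.Gamma v / Complex.Gamma ((u:ℂ)+v) := by
    rw [eq_div_iff h3]
    linear_combination -h2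
  rw [← Complex.ofReal_add, Complex.Gamma_ofReal, Complex.Gamma_ofReal,
    Complex.Gamma_ofReal, ← Complex.ofReal_mul, ← Complex.ofReal_div] at h4
  exact_mod_cast h4

lemma mellin_one_add (p : ℝ) (hp0 : 0 < p) (hp1 : p < 1) :
    ∫ t in Ioi (0:ℝ), t ^ (p-1) / (1+t) = Real.Gamma p * Real.Gamma (1-p) := by
  have hf' : ∀ x ∈ Ioo (0:ℝ) 1, HasDerivWithinAt (fun x : ℝ => x / (1-x))
      (((1-x)^2)⁻¹) (Ioo 0 1) x := by
    intro x hx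
    obtain ⟨hx0, hx1⟩ := hx
    have hne : (1:ℝ) - x ≠ 0 := by intro h; linarith
    have : HasDerivAt (fun y : ℝ => y / (1-y)) ((1 * (1 - x) - x * -1) / (1 - x) ^ 2) x :=
      (hasDerivAt_id' x).div ((hasDerivAt_id' x).const_sub 1) hne
    refine this.hasDerivWithinAt.congr_deriv ?_
    rw [inv_eq_one_div]; congr 1; ring
  have hinj : InjOn (fun x : ℝ => x / (1-x)) (Ioo 0 1) := by
    intro a ha b hb h
    obtain ⟨ha0, ha1⟩ := ha
    obtain ⟨hb0, hb1⟩ := hb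
    have ha1' : (1:ℝ) - a ≠ 0 := by intro hh; linarith
    have hb1' : (1:ℝ) - b ≠ 0 := by intro hh; linarith
    simp only at h
    field_simp at h
    linarith
  have himg : (fun x : ℝ => x / (1-x)) '' (Ioo 0 1) = Ioi (0:ℝ) := by
    ext y
    simp only [mem_image, mem_Ioo, mem_Ioi]
    constructor
    · rintro ⟨x, ⟨hx0, hx1⟩, rfl⟩
      exact div_pos hx0 (by linarith)
    · intro hy
      refine ⟨y / (1+y), ⟨div_pos hy (by linarith), ?_⟩, ?_⟩
      · rw [div_lt_one (by linarith)]; linarith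
      · have h1 : (1:ℝ) - y/(1+y) = 1/(1+y) := by field_simp; ring
        have h2 : (1:ℝ)+y ≠ 0 := by linarith
        rw [h1]
        field_simp
  have key := integral_image_eq_integral_abs_deriv_smul measurableSet_Ioo hf' hinj
    (fun t => t ^ (p-1) / (1+t))
  rw [himg] at key
  rw [key]
  have congr1 : ∫ x in Ioo (0:ℝ) 1, |((1-x)^2)⁻¹| • ((x/(1-x)) ^ (p-1) / (1 + x/(1-x)))
      = ∫ x in Ioo (0:ℝ) 1, x ^ (p-1) * (1-x) ^ ((1-p)-1) := by
    refine setIntegral_congr_fun measurableSet_Ioo fun x hx => ?_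
    obtain ⟨hx0, hx1⟩ := hx
    have hy : (0:ℝ) < 1 - x := by linarith
    have h1 : 1 + x/(1-x) = (1-x)⁻¹ := by field_simp; ring
    have hA : 0 < (1-x) ^ p := Real.rpow_pos_of_pos hy p
    simp only [smul_eq_mul, h1]
    rw [abs_of_pos (by positivity), Real.div_rpow hx0.le hy.le,
      show (1-x) ^ (p-1) = (1-x) ^ p / (1-x) by rw [Real.rpow_sub hy, Real.rpow_one],
      show (1-x) ^ ((1-p)-1) = ((1-x) ^ p)⁻¹ by rw [show (1-p)-1 = -p by ring, Real.rpow_neg hy.le]]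
    field_simp
  rw [congr1, ← integral_Ioc_eq_integral_Ioo,
    ← intervalIntegral.integral_of_le zero_le_one, realBeta p (1-p) hp0 (by linarith),
    show p + (1-p) = 1 by ring, Real.Gamma_one, div_one]

/-- Radial part of the Laplace functional of Poisson-field interference with Rayleigh fading
(equations (27) and (18) of the paper): for `α > 2` and `s > 0`,
`∫₀^∞ (1 − 1/(1 + s r^{−α}))·2π r dr = π s^{2/α} Γ(1 + 2/α) Γ(1 − 2/α)`. -/
theorem poisson_interference_radial_integral (α s : ℝ) (hα : 2 < α) (hs : 0 < s) :
    ∫ r in Ioi (0:ℝ), (1 - 1 / (1 + s * r ^ (-α))) * (2 * Real.pi * r)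
      = Real.pi * s ^ (2 / α) * Real.Gamma (1 + 2 / α) * Real.Gamma (1 - 2 / α) := by
  have hα0 : (0:ℝ) < α := by linarith
  have hαne : α ≠ 0 := ne_of_gt hα0
  have hp0 : (0:ℝ) < 2/α := by positivity
  have hp1 : 2/α < 1 := (div_lt_one hα0).mpr hα
  set c : ℝ := s ^ (α⁻¹) with hc
  have hcpos : 0 < c := Real.rpow_pos_of_pos hs _
  have hcα : c ^ α = s := by
    rw [hc, ← Real.rpow_mul hs.le, inv_mul_cancel₀ hαne, Real.rpow_one]
  -- Step A: rewrite integrand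
  have stepA : ∫ r in Ioi (0:ℝ), (1 - 1 / (1 + s * r ^ (-α))) * (2 * Real.pi * r)
      = ∫ r in Ioi (0:ℝ), 2 * Real.pi * s * (r / (r ^ α + s)) := by
    refine setIntegral_congr_fun measurableSet_Ioi fun r hr => ?_
    have hr0 : (0:ℝ) < r := hr
    have hrα : (0:ℝ) < r ^ α := Real.rpow_pos_of_pos hr0 α
    rw [Real.rpow_neg hr0.le]
    have hd1 : 1 + s * (r ^ α)⁻¹ ≠ 0 := by positivity
    have hd2 : r ^ α + s ≠ 0 := by positivity
    field_simp
    ring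
  -- Step B: scaling r = c * x
  have hB := MeasureTheory.integral_comp_mul_left_Ioi
    (fun r : ℝ => 2 * Real.pi * s * (r / (r ^ α + s))) 0 hcpos
  rw [mul_zero] at hB
  have stepB : ∫ r in Ioi (0:ℝ), 2 * Real.pi * s * (r / (r ^ α + s))
      = c * ∫ x in Ioi (0:ℝ), 2 * Real.pi * s * ((c * x) / ((c * x) ^ α + s)) := by
    rw [hB, smul_eq_mul, ← mul_assoc, mul_inv_cancel₀ hcpos.ne', one_mul]
  -- Step C: simplify the scaled integrand
  have stepC : ∫ x in Ioi (0:ℝ), 2 * Real.pi * s * ((c * x) / ((c * x) ^ α + s))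
      = ∫ x in Ioi (0:ℝ), 2 * Real.pi * c * (x / (1 + x ^ α)) := by
    refine setIntegral_congr_fun measurableSet_Ioi fun x hx => ?_
    have hx0 : (0:ℝ) < x := hx
    have hxα : (0:ℝ) < x ^ α := Real.rpow_pos_of_pos hx0 α
    rw [Real.mul_rpow hcpos.le hx0.le, hcα]
    have hd1 : s * x ^ α + s ≠ 0 := by positivity
    have hd2 : (1:ℝ) + x ^ α ≠ 0 := by positivity
    field_simp
    ring
  -- Step D/E: substitution t = x ^ α
  have hE := MeasureTheory.integral_comp_rpow_Ioi_of_pos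
    (g := fun y : ℝ => y ^ (2/α - 1) / (1 + y)) hα0
  have congrE : ∫ x in Ioi (0:ℝ), (α * x ^ (α - 1)) • ((x ^ α) ^ (2/α - 1) / (1 + x ^ α))
      = ∫ x in Ioi (0:ℝ), α * (x / (1 + x ^ α)) := by
    refine setIntegral_congr_fun measurableSet_Ioi fun x hx => ?_
    have hx0 : (0:ℝ) < x := hx
    have hxα : (0:ℝ) < x ^ α := Real.rpow_pos_of_pos hx0 α
    have e1 : (x ^ α) ^ (2/α - 1) = x ^ (α * (2/α - 1)) := (Real.rpow_mul hx0.le α _).symm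
    have e2 : x ^ (α - 1) * x ^ (α * (2/α - 1)) = x := by
      rw [← Real.rpow_add hx0, show α - 1 + α * (2/α - 1) = 1 by field_simp; ring,
        Real.rpow_one]
    have hd : (1:ℝ) + x ^ α ≠ 0 := by positivity
    rw [smul_eq_mul, e1, mul_assoc, ← mul_div_assoc, e2]
  have stepE : ∫ x in Ioi (0:ℝ), x / (1 + x ^ α)
      = α⁻¹ * ∫ t in Ioi (0:ℝ), t ^ (2/α - 1) / (1 + t) := by
    rw [← hE, congrE, MeasureTheory.integral_const_mul, ← mul_assoc,
      inv_mul_cancel₀ hαne, one_mul]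
  -- Assemble
  rw [stepA, stepB, stepC, MeasureTheory.integral_const_mul, stepE,
    mellin_one_add (2/α) hp0 hp1,
    show (1:ℝ) + 2/α = 2/α + 1 by ring, Real.Gamma_add_one (ne_of_gt hp0)]
  have hcc : c * c = s ^ (2/α) := by
    rw [hc, ← Real.rpow_add hs, show α⁻¹ + α⁻¹ = 2/α by ring]
  linear_combination (2 * Real.pi * α⁻¹ * Real.Gamma (2/α) * Real.Gamma (1 - 2/α)) * hcc
end

section
/- Let α > 2, t > 0, β > 0, and let P be a nonnegative real random variable with E[P^{2/α}] < ∞. Then ∫₀^∞ (1 − E[1/(1 + t P β r^{−α})]) · 2π r dr = π β^{2/α} E[P^{2/α}] Γ(1 + 2/α) Γ(1 − 2/α) t^{2/α}, where Γ is the Gamma function. -/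
open MeasureTheory Set
open Real
open scoped ENNReal

lemma pirp_inv_eq_integral_exp {u : ℝ} (hu : 0 < u) :
    u⁻¹ = ∫ y in Ioi (0:ℝ), Real.exp (-(u * y)) := by
  have := Real.integral_rpow_mul_exp_neg_mul_Ioi one_pos hu
  simp only [sub_self, Real.rpow_zero, one_mul, Real.rpow_one, Real.Gamma_one, mul_one,
    one_div] at this
  exact this.symm

lemma pirp_mellin {s : ℝ} (hs0 : 0 < s) (hs1 : s < 1) :
    ∫ u in Ioi (0:ℝ), u ^ (s - 1) * (1 + u)⁻¹
      = Real.Gamma s * Real.Gamma (1 - s) := by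
  have hmeas : Measurable fun u : ℝ => u ^ (s - 1) * (1 + u)⁻¹ := by fun_prop
  -- integrability of the y-slice
  have hsl : ∀ y : ℝ, 0 < y →
      IntegrableOn (fun u : ℝ => u ^ (s - 1) * Real.exp (-(y * u))) (Ioi 0) := by
    intro y hy
    have := integrableOn_rpow_mul_exp_neg_mul_rpow (p := 1) (s := s - 1) (b := y)
      (by linarith) one_pos hy
    apply this.congr_fun ?_ measurableSet_Ioi
    intro x hx
    simp [Real.rpow_one, neg_mul]
  have key : (∫⁻ u in Ioi (0:ℝ), ENNReal.ofReal (u ^ (s - 1) * (1 + u)⁻¹))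
      = ENNReal.ofReal (Real.Gamma s * Real.Gamma (1 - s)) := by
    have e1 : (∫⁻ u in Ioi (0:ℝ), ENNReal.ofReal (u ^ (s - 1) * (1 + u)⁻¹))
        = ∫⁻ u in Ioi (0:ℝ), ∫⁻ y in Ioi (0:ℝ),
            ENNReal.ofReal (u ^ (s - 1) * Real.exp (-((1 + u) * y))) := by
      refine setLIntegral_congr_fun measurableSet_Ioi ?_
      intro u hu
      beta_reduce
      have hu0 : (0:ℝ) < u := hu
      have hu' : (0:ℝ) < 1 + u := by linarith
      have h2 : u ^ (s - 1) * (1 + u)⁻¹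
          = ∫ y in Ioi (0:ℝ), u ^ (s - 1) * Real.exp (-((1 + u) * y)) := by
        rw [integral_const_mul, ← pirp_inv_eq_integral_exp hu']
      rw [h2, ofReal_integral_eq_lintegral_ofReal]
      · exact ((exp_neg_integrableOn_Ioi 0 hu').congr_fun
          (fun y _ => by rw [neg_mul]) measurableSet_Ioi).const_mul _
      · refine Filter.Eventually.of_forall fun y => ?_
        positivity
    rw [e1]
    rw [lintegral_lintegral_swap]
    · have e2 : ∀ y ∈ Ioi (0:ℝ),
          (∫⁻ u in Ioi (0:ℝ), ENNReal.ofReal (u ^ (s - 1) * Real.exp (-((1 + u) * y))))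
            = ENNReal.ofReal (Real.Gamma s * (Real.exp (-y) * ((1 / y) ^ s))) := by
        intro y hy
        have hy' : (0:ℝ) < y := hy
        have hval : ∫ u in Ioi (0:ℝ), Real.exp (-y) * (u ^ (s - 1) * Real.exp (-(y * u)))
            = Real.exp (-y) * ((1 / y) ^ s * Real.Gamma s) := by
          rw [integral_const_mul, Real.integral_rpow_mul_exp_neg_mul_Ioi hs0 hy']
        have hcong : ∀ u ∈ Ioi (0:ℝ),
            ENNReal.ofReal (u ^ (s - 1) * Real.exp (-((1 + u) * y)))
              = ENNReal.ofReal (Real.exp (-y) * (u ^ (s - 1) * Real.exp (-(y * u)))) := by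
          intro u hu
          rw [show -((1 + u) * y) = -y + -(y * u) by ring, Real.exp_add]
          ring_nf
        rw [setLIntegral_congr_fun measurableSet_Ioi hcong,
          ← ofReal_integral_eq_lintegral_ofReal (((hsl y hy').const_mul _)) ?_]
        · rw [hval]; ring_nf
        · refine (ae_restrict_iff' measurableSet_Ioi).2
            (Filter.Eventually.of_forall fun u hu => ?_)
          have hu0 : (0:ℝ) < u := hu
          positivity
      rw [setLIntegral_congr_fun measurableSet_Ioi e2]
      have hcong2 : ∀ y ∈ Ioi (0:ℝ),
          ENNReal.ofReal (Real.Gamma s * (Real.exp (-y) * ((1 / y) ^ s)))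
            = ENNReal.ofReal (Real.Gamma s * (y ^ ((1 - s) - 1) * Real.exp (-(1 * y)))) := by
        intro y hy
        have hy' : (0:ℝ) < y := hy
        have hsimp : (1:ℝ) - s - 1 = -s := by ring
        rw [one_div, Real.inv_rpow hy'.le, ← Real.rpow_neg hy'.le, hsimp, one_mul]
        ring_nf
      rw [setLIntegral_congr_fun measurableSet_Ioi hcong2]
      have hint : IntegrableOn (fun y : ℝ => y ^ ((1 - s) - 1) * Real.exp (-(1 * y))) (Ioi 0) := by
        have := integrableOn_rpow_mul_exp_neg_mul_rpow (p := 1) (s := (1 - s) - 1) (b := 1)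
          (by linarith) one_pos one_pos
        apply this.congr_fun ?_ measurableSet_Ioi
        intro x hx
        simp [Real.rpow_one, neg_mul]
      rw [← ofReal_integral_eq_lintegral_ofReal (hint.const_mul _) ?_]
      · rw [integral_const_mul, Real.integral_rpow_mul_exp_neg_mul_Ioi (by linarith) one_pos]
        norm_num [mul_comm]
      · refine (ae_restrict_iff' measurableSet_Ioi).2 (Filter.Eventually.of_forall fun y hy => ?_)
        have hy0 : (0:ℝ) < y := hy
        positivity
    · apply Measurable.aemeasurable
      apply ENNReal.measurable_ofReal.comp
      fun_prop
  have hnn : 0 ≤ᵐ[volume.restrict (Ioi (0:ℝ))] fun u : ℝ => u ^ (s - 1) * (1 + u)⁻¹ := by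
    refine (ae_restrict_iff' measurableSet_Ioi).2 (Filter.Eventually.of_forall fun u hu => ?_)
    have hu0 : (0:ℝ) < u := hu
    positivity
  rw [integral_eq_lintegral_of_nonneg_ae hnn hmeas.aestronglyMeasurable, key,
    ENNReal.toReal_ofReal]
  exact le_of_lt (mul_pos (Real.Gamma_pos_of_pos hs0) (Real.Gamma_pos_of_pos (by linarith)))

lemma pirp_alg {c r α : ℝ} (hc : 0 ≤ c) (hr : 0 < r) :
    1 - (1 + c * r ^ (-α))⁻¹ = c / (r ^ α + c) := by
  have h2 : (0:ℝ) < r ^ α := Real.rpow_pos_of_pos hr α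
  have h1 : r ^ (-α) = (r ^ α)⁻¹ := Real.rpow_neg hr.le α
  have h3 : (0:ℝ) < r ^ α + c := by linarith
  rw [h1]
  field_simp
  ring

lemma pirp_integrable {c α : ℝ} (hc : 0 ≤ c) (hα : 2 < α) :
    IntegrableOn (fun r : ℝ => c / (r ^ α + c) * (2 * π * r)) (Ioi 0) := by
  rcases hc.lt_or_eq with hc | hc
  · have hm : Measurable fun r : ℝ => c / (r ^ α + c) * (2 * π * r) := by fun_prop
    have : Ioc (0:ℝ) 1 ∪ Ioi 1 = Ioi 0 := Ioc_union_Ioi_eq_Ioi zero_le_one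
    rw [← this]
    apply IntegrableOn.union
    · refine Measure.integrableOn_of_bounded (M := 2 * π) measure_Ioc_lt_top.ne
        hm.aestronglyMeasurable ?_
      refine (ae_restrict_iff' measurableSet_Ioc).2 (Filter.Eventually.of_forall fun r hr => ?_)
      have hr0 : (0:ℝ) < r := hr.1
      have hr1 : r ≤ 1 := hr.2
      have h2 : (0:ℝ) < r ^ α := Real.rpow_pos_of_pos hr0 α
      have hb1 : c / (r ^ α + c) ≤ 1 := by
        rw [div_le_one (by linarith)]; linarith
      have : c / (r ^ α + c) * (2 * π * r) ≤ 1 * (2 * π * 1) := by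
        apply mul_le_mul hb1 (by nlinarith [Real.pi_pos]) (by positivity) zero_le_one
      rw [Real.norm_eq_abs, abs_of_nonneg (by positivity)]
      calc c / (r ^ α + c) * (2 * π * r) ≤ 1 * (2 * π * 1) := this
        _ = 2 * π := by ring
    · refine Integrable.mono
        ((integrableOn_Ioi_rpow_of_lt (show (1:ℝ) - α < -1 by linarith) one_pos).const_mul
          (2 * π * c)) hm.aestronglyMeasurable ?_
      refine (ae_restrict_iff' measurableSet_Ioi).2 (Filter.Eventually.of_forall fun r hr => ?_)
      have hr1 : (1:ℝ) < r := hr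
      have hr0 : (0:ℝ) < r := by linarith
      have h2 : (0:ℝ) < r ^ α := Real.rpow_pos_of_pos hr0 α
      have key : c / (r ^ α + c) * (2 * π * r) ≤ 2 * π * c * r ^ (1 - α) := by
        have h4 : r ^ (1 - α) = r * (r ^ α)⁻¹ := by
          rw [show (1:ℝ) - α = 1 + (-α) by ring, Real.rpow_add hr0, Real.rpow_one,
            Real.rpow_neg hr0.le]
        have h5 : c / (r ^ α + c) ≤ c / r ^ α :=
          div_le_div_of_nonneg_left hc.le h2 (by linarith)
        calc c / (r ^ α + c) * (2 * π * r) ≤ c / r ^ α * (2 * π * r) := by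
              apply mul_le_mul_of_nonneg_right h5 (by positivity)
          _ = 2 * π * c * (r * (r ^ α)⁻¹) := by rw [div_eq_mul_inv]; ring
          _ = 2 * π * c * r ^ (1 - α) := by rw [h4]
      rw [Real.norm_eq_abs, abs_of_nonneg (by positivity), Real.norm_eq_abs,
        abs_of_nonneg (by positivity)]
      exact key
  · subst hc  -- wrong direction? hc : 0 = c
    simp

lemma pirp_value {c α : ℝ} (hc : 0 < c) (hα : 2 < α) :
    ∫ r in Ioi (0:ℝ), c / (r ^ α + c) * (2 * π * r)
      = π * c ^ (2 / α) * (Real.Gamma (1 + 2 / α) * Real.Gamma (1 - 2 / α)) := by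
  have hα0 : (0:ℝ) < α := by linarith
  set s : ℝ := 2 / α with hs_def
  have hs0 : 0 < s := by positivity
  have hs1 : s < 1 := by
    rw [hs_def, div_lt_one hα0]; linarith
  have hsα : α * s = 2 := by
    rw [hs_def]; field_simp
  set G : ℝ → ℝ := fun u => (2 * π * c / α) * (u ^ (s - 1) * (u + c)⁻¹) with hG_def
  have step1 : ∫ r in Ioi (0:ℝ), c / (r ^ α + c) * (2 * π * r)
      = ∫ u in Ioi (0:ℝ), G u := by
    rw [← integral_comp_rpow_Ioi G (ne_of_gt hα0)]
    refine setIntegral_congr_fun measurableSet_Ioi fun x hx => ?_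
    have hx0 : (0:ℝ) < x := hx
    have hxα : (0:ℝ) < x ^ α := Real.rpow_pos_of_pos hx0 α
    have e1 : (x ^ α) ^ (s - 1) = x ^ (2 - α) := by
      rw [← Real.rpow_mul hx0.le]
      congr 1
      rw [mul_sub, hsα]; ring
    have e2 : x ^ (α - 1) * x ^ (2 - α) = x := by
      rw [← Real.rpow_add hx0]
      norm_num
    simp only [hG_def, smul_eq_mul]
    rw [e1, abs_of_pos hα0]
    calc c / (x ^ α + c) * (2 * π * x) = 2 * π * c * x * (x ^ α + c)⁻¹ := by
          rw [div_eq_mul_inv]; ring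
      _ = (α / α) * (2 * π * c) * (x ^ (α - 1) * x ^ (2 - α)) * (x ^ α + c)⁻¹ := by
          rw [div_self hα0.ne', e2]; ring
      _ = α * x ^ (α - 1) * (2 * π * c / α * (x ^ (2 - α) * (x ^ α + c)⁻¹)) := by
          ring
  have step3 : ∫ u in Ioi (0:ℝ), u ^ (s - 1) * (u + c)⁻¹
      = c ^ (s - 1) * (Real.Gamma s * Real.Gamma (1 - s)) := by
    have hcv := integral_comp_mul_left_Ioi (fun u => u ^ (s - 1) * (u + c)⁻¹) 0 hc
    rw [mul_zero] at hcv
    have hgc : ∫ x in Ioi (0:ℝ), (c * x) ^ (s - 1) * (c * x + c)⁻¹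
        = c ^ (s - 2) * (Real.Gamma s * Real.Gamma (1 - s)) := by
      have hcong : ∀ x ∈ Ioi (0:ℝ), (c * x) ^ (s - 1) * (c * x + c)⁻¹
          = c ^ (s - 2) * (x ^ (s - 1) * (1 + x)⁻¹) := by
        intro x hx
        have hx0 : (0:ℝ) < x := hx
        rw [Real.mul_rpow hc.le hx0.le, show c * x + c = c * (1 + x) by ring, mul_inv]
        rw [show c ^ (s - 1) * x ^ (s - 1) * (c⁻¹ * (1 + x)⁻¹)
          = (c ^ (s - 1) * c⁻¹) * (x ^ (s - 1) * (1 + x)⁻¹) by ring]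
        congr 1
        rw [← Real.rpow_neg_one c, ← Real.rpow_add hc]
        congr 1
        ring
      rw [setIntegral_congr_fun measurableSet_Ioi hcong, integral_const_mul,
        pirp_mellin hs0 hs1]
    rw [hgc] at hcv
    have : (c:ℝ) • (c ^ (s - 2) * (Real.Gamma s * Real.Gamma (1 - s)))
        = c • (c⁻¹ • ∫ x in Ioi (0:ℝ), x ^ (s - 1) * (x + c)⁻¹) := by rw [← hcv]
    rw [smul_smul, mul_inv_cancel₀ hc.ne', one_smul] at this
    have hcs : c * c ^ (s - 2) = c ^ (s - 1) := by
      nth_rewrite 1 [← Real.rpow_one c]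
      rw [← Real.rpow_add hc]
      congr 1
      ring
    rw [← this, smul_eq_mul, ← mul_assoc, hcs]
  rw [step1, hG_def, integral_const_mul, step3]
  have hΓ : Real.Gamma (1 + s) = s * Real.Gamma s := by
    rw [add_comm, Real.Gamma_add_one hs0.ne']
  have hcc : c * c ^ (s - 1) = c ^ s := by
    nth_rewrite 1 [← Real.rpow_one c]
    rw [← Real.rpow_add hc]
    congr 1
    ring
  rw [hΓ]
  have : 2 * π * c / α = π * s * c := by
    rw [hs_def]; ring
  rw [this]
  calc π * s * c * (c ^ (s - 1) * (Real.Gamma s * Real.Gamma (1 - s)))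
      = π * (c * c ^ (s - 1)) * (s * Real.Gamma s * Real.Gamma (1 - s)) := by ring
    _ = π * c ^ s * (s * Real.Gamma s * Real.Gamma (1 - s)) := by rw [hcc]

set_option maxHeartbeats 1000000 in
/-- Laplace-functional exponent of Poisson-field interference with random power-controlled
transmit powers (equations (10) and (17) of the paper): for `α > 2`, `t > 0`, `β > 0` and a
nonnegative random power `P` with `E[P^{2/α}] < ∞`,
`∫₀^∞ (1 − E[1/(1 + t P β r^{−α})])·2π r dr
  = π β^{2/α} E[P^{2/α}] Γ(1 + 2/α) Γ(1 − 2/α) t^{2/α}`. -/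
theorem poisson_interference_random_power {Ω : Type*} [MeasurableSpace Ω]
    (μ : Measure Ω) [IsProbabilityMeasure μ]
    (P : Ω → ℝ) (hP : Measurable P) (hPpos : ∀ ω, 0 ≤ P ω)
    (α t β : ℝ) (hα : 2 < α) (ht : 0 < t) (hβ : 0 < β)
    (hmom : Integrable (fun ω => P ω ^ (2 / α)) μ) :
    ∫ r in Ioi (0:ℝ),
        (1 - ∫ ω, 1 / (1 + t * P ω * β * r ^ (-α)) ∂μ) * (2 * Real.pi * r)
      = Real.pi * β ^ (2 / α) * (∫ ω, P ω ^ (2 / α) ∂μ)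
          * Real.Gamma (1 + 2 / α) * Real.Gamma (1 - 2 / α) * t ^ (2 / α) := by
  have hα0 : (0:ℝ) < α := by linarith
  set s : ℝ := 2 / α with hs_def
  have hs0 : 0 < s := by positivity
  set c : Ω → ℝ := fun ω => t * P ω * β with hc_def
  have hc0 : ∀ ω, 0 ≤ c ω := fun ω => by
    have := hPpos ω; positivity
  have hcm : Measurable c := (measurable_const.mul hP).mul measurable_const
  set K : ℝ := Real.Gamma (1 + s) * Real.Gamma (1 - s) with hK_def
  have hK0 : 0 < K :=
    mul_pos (Real.Gamma_pos_of_pos (by positivity))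
      (Real.Gamma_pos_of_pos (by
        have hs1 : s < 1 := by rw [hs_def, div_lt_one hα0]; linarith
        linarith))
  set g : Ω → ℝ → ℝ := fun ω r => c ω / (r ^ α + c ω) * (2 * π * r) with hg_def
  have hgC : Measurable fun p : ℝ × Ω => c p.2 / (p.1 ^ α + c p.2) * (2 * π * p.1) := by
    fun_prop
  -- nonnegativity of g for r > 0
  have hgpos : ∀ ω, ∀ r : ℝ, 0 < r → 0 ≤ g ω r := by
    intro ω r hr
    have h1 : (0:ℝ) < r ^ α := Real.rpow_pos_of_pos hr α
    have h2 := hc0 ω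
    have : (0:ℝ) ≤ c ω / (r ^ α + c ω) := by positivity
    have hπ := Real.pi_pos
    simp only [hg_def]
    positivity
  -- bound on the fraction
  have hfrac : ∀ ω, ∀ r : ℝ, 0 < r → c ω / (r ^ α + c ω) ≤ 1 := by
    intro ω r hr
    have h1 : (0:ℝ) < r ^ α := Real.rpow_pos_of_pos hr α
    rw [div_le_one (by linarith [hc0 ω])]
    linarith [hc0 ω]
  -- Step 1: rewrite the integrand as an integral over Ω
  have step1 : ∀ r ∈ Ioi (0:ℝ),
      (1 - ∫ ω, 1 / (1 + t * P ω * β * r ^ (-α)) ∂μ) * (2 * Real.pi * r)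
        = ∫ ω, g ω r ∂μ := by
    intro r hr
    have hr0 : (0:ℝ) < r := hr
    have hhm : Measurable fun ω => (1 + c ω * r ^ (-α))⁻¹ :=
      (measurable_const.add (hcm.mul_const _)).inv
    have hhb : ∀ ω, ‖(1 + c ω * r ^ (-α))⁻¹‖ ≤ 1 := by
      intro ω
      have hrα : (0:ℝ) < r ^ (-α) := Real.rpow_pos_of_pos hr0 _
      have h1 : (0:ℝ) < 1 + c ω * r ^ (-α) := by
        have := mul_nonneg (hc0 ω) hrα.le; linarith
      rw [Real.norm_eq_abs, abs_of_pos (by positivity)]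
      rw [inv_le_one_iff₀]
      right
      nlinarith [mul_nonneg (hc0 ω) hrα.le]
    have hhint : Integrable (fun ω => (1 + c ω * r ^ (-α))⁻¹) μ :=
      (integrable_const (1:ℝ)).mono' hhm.aestronglyMeasurable
        (Filter.Eventually.of_forall hhb)
    simp only [one_div]
    rw [show (1:ℝ) - ∫ ω, (1 + t * P ω * β * r ^ (-α))⁻¹ ∂μ
        = ∫ ω, 1 - (1 + c ω * r ^ (-α))⁻¹ ∂μ by
      rw [integral_sub (integrable_const 1) hhint, integral_const]
      simp
      rfl]
    rw [← integral_mul_const]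
    refine integral_congr_ae (Filter.Eventually.of_forall fun ω => ?_)
    dsimp only
    rw [pirp_alg (hc0 ω) hr0]
  rw [setIntegral_congr_fun measurableSet_Ioi step1]
  -- Step 2: pass to lintegrals and use Tonelli
  have hFm : AEStronglyMeasurable (fun r => ∫ ω, g ω r ∂μ) (volume.restrict (Ioi 0)) :=
    (hgC.stronglyMeasurable.integral_prod_right').aestronglyMeasurable
  have hFnn : 0 ≤ᵐ[volume.restrict (Ioi (0:ℝ))] fun r => ∫ ω, g ω r ∂μ := by
    refine (ae_restrict_iff' measurableSet_Ioi).2 (Filter.Eventually.of_forall fun r hr => ?_)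
    exact integral_nonneg fun ω => hgpos ω r hr
  rw [integral_eq_lintegral_of_nonneg_ae hFnn hFm]
  have hgint : ∀ r : ℝ, 0 < r → Integrable (fun ω => g ω r) μ := by
    intro r hr
    refine (integrable_const (2 * π * r)).mono'
      ((hgC.comp measurable_prodMk_left).aestronglyMeasurable) ?_
    refine Filter.Eventually.of_forall fun ω => ?_
    rw [Real.norm_eq_abs, abs_of_nonneg (hgpos ω r hr)]
    have h2 : (0:ℝ) ≤ 2 * π * r := by positivity
    calc c ω / (r ^ α + c ω) * (2 * π * r) ≤ 1 * (2 * π * r) :=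
          mul_le_mul_of_nonneg_right (hfrac ω r hr) h2
      _ = 2 * π * r := one_mul _
  have e1 : ∫⁻ r in Ioi (0:ℝ), ENNReal.ofReal (∫ ω, g ω r ∂μ)
      = ∫⁻ r in Ioi (0:ℝ), ∫⁻ ω, ENNReal.ofReal (g ω r) ∂μ := by
    refine setLIntegral_congr_fun measurableSet_Ioi (fun r hr => ?_)
    exact ofReal_integral_eq_lintegral_ofReal (hgint r hr)
      (Filter.Eventually.of_forall fun ω => hgpos ω r hr)
  rw [e1, lintegral_lintegral_swap (by
    exact (ENNReal.measurable_ofReal.comp hgC).aemeasurable)]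
  have e2 : ∀ ω, (∫⁻ r in Ioi (0:ℝ), ENNReal.ofReal (g ω r))
      = ENNReal.ofReal (π * (c ω) ^ s * K) := by
    intro ω
    rcases (hc0 ω).lt_or_eq with hc | hc
    · rw [← ofReal_integral_eq_lintegral_ofReal (pirp_integrable (hc0 ω) hα)
        ((ae_restrict_iff' measurableSet_Ioi).2
          (Filter.Eventually.of_forall fun r hr => hgpos ω r hr)),
        pirp_value hc hα]
    · have hczero : c ω = 0 := hc.symm
      have hz : ∀ r : ℝ, g ω r = 0 := by
        intro r; simp [hg_def, hczero]
      simp only [hz, hczero, Real.zero_rpow hs0.ne']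
      simp
  simp_rw [e2]
  -- Step 3: compute the Ω-integral
  have hrpow : ∀ ω, (c ω) ^ s = t ^ s * β ^ s * P ω ^ s := by
    intro ω
    rw [hc_def]
    rw [Real.mul_rpow (mul_nonneg ht.le (hPpos ω)) hβ.le,
      Real.mul_rpow ht.le (hPpos ω)]
    ring
  have hint2 : Integrable (fun ω => π * (c ω) ^ s * K) μ := by
    have : (fun ω => π * (c ω) ^ s * K)
        = fun ω => (π * t ^ s * β ^ s * K) * P ω ^ s := by
      funext ω; rw [hrpow ω]; ring
    rw [this]
    exact hmom.const_mul _
  rw [← ofReal_integral_eq_lintegral_ofReal hint2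
    (Filter.Eventually.of_forall fun ω => by
      have := hc0 ω
      positivity), ENNReal.toReal_ofReal (integral_nonneg fun ω => by
        have := hc0 ω
        positivity)]
  have : (fun ω => π * (c ω) ^ s * K) = fun ω => (π * t ^ s * β ^ s * K) * P ω ^ s := by
    funext ω; rw [hrpow ω]; ring
  rw [this, integral_const_mul, hK_def]
  ring
end

section
/- Let X and Y be independent real random variables on a probability space with X > 0 almost surely, Y ≥ 0 almost surely, ln X integrable, and Y integrable, and let σ² > 0. Then E[ln(1 + X/(Y + σ²))] ≥ ln(1 + e^{E[ln X]}/(E[Y] + σ²)). -/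
open MeasureTheory ProbabilityTheory

/-- The softplus function and its derivative. -/
private lemma softplus_hasDerivAt (z : ℝ) :
    HasDerivAt (fun z => Real.log (1 + Real.exp z)) (Real.exp z / (1 + Real.exp z)) z :=
  ((Real.hasDerivAt_exp z).const_add 1).log (by positivity)

private lemma softplus_deriv :
    deriv (fun z => Real.log (1 + Real.exp z)) = fun z => Real.exp z / (1 + Real.exp z) :=
  funext fun z => (softplus_hasDerivAt z).deriv

private lemma softplus_deriv2_hasDerivAt (z : ℝ) :
    HasDerivAt (fun z => Real.exp z / (1 + Real.exp z))
      ((Real.exp z * (1 + Real.exp z) - Real.exp z * Real.exp z) / (1 + Real.exp z) ^ 2) z :=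
  (Real.hasDerivAt_exp z).div ((Real.hasDerivAt_exp z).const_add 1) (by positivity)

private lemma softplus_convex : ConvexOn ℝ Set.univ (fun z => Real.log (1 + Real.exp z)) := by
  apply convexOn_of_deriv2_nonneg' convex_univ
  · intro z _
    exact (softplus_hasDerivAt z).differentiableAt.differentiableWithinAt
  · intro z _
    rw [softplus_deriv]
    exact (softplus_deriv2_hasDerivAt z).differentiableAt.differentiableWithinAt
  · intro z _
    have : deriv^[2] (fun z => Real.log (1 + Real.exp z)) z
        = (Real.exp z * (1 + Real.exp z) - Real.exp z * Real.exp z) / (1 + Real.exp z) ^ 2 := by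
      simp only [Function.iterate_succ, Function.iterate_zero, Function.comp_apply, id_eq]
      rw [softplus_deriv]
      exact (softplus_deriv2_hasDerivAt z).deriv
    rw [this]
    have h1 : (0:ℝ) < 1 + Real.exp z := by positivity
    have : Real.exp z * (1 + Real.exp z) - Real.exp z * Real.exp z = Real.exp z := by ring
    rw [this]
    positivity

private lemma softplus_mono : Monotone (fun z => Real.log (1 + Real.exp z)) := by
  intro a b hab
  exact Real.log_le_log (by positivity) (by gcongr)

private lemma softplus_nonneg (z : ℝ) : 0 ≤ Real.log (1 + Real.exp z) :=
  Real.log_nonneg (le_add_of_nonneg_right (Real.exp_pos z).le)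

private lemma softplus_le (z : ℝ) : Real.log (1 + Real.exp z) ≤ Real.log 2 + |z| := by
  have h1 : 1 + Real.exp z ≤ 2 * Real.exp |z| := by
    have h2 : Real.exp z ≤ Real.exp |z| := Real.exp_le_exp.2 (le_abs_self z)
    have h3 : (1:ℝ) ≤ Real.exp |z| := Real.one_le_exp (abs_nonneg z)
    nlinarith
  calc Real.log (1 + Real.exp z) ≤ Real.log (2 * Real.exp |z|) :=
        Real.log_le_log (by positivity) h1
    _ = Real.log 2 + |z| := by rw [Real.log_mul (by norm_num) (Real.exp_pos _).ne', Real.log_exp]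

private lemma log_add_le {a : ℝ} (ha : 0 < a) {y : ℝ} (hy : 0 ≤ y) :
    Real.log (y + a) ≤ Real.log a + y / a := by
  have h1 : Real.log (y + a) - Real.log a = Real.log ((y + a) / a) := by
    rw [Real.log_div (by positivity) ha.ne']
  have h2 : Real.log ((y + a) / a) ≤ (y + a) / a - 1 :=
    Real.log_le_sub_one_of_pos (by positivity)
  have h3 : (y + a) / a - 1 = y / a := by field_simp; ring
  linarith [h1 ▸ h2, h3 ▸ (h1 ▸ h2)]

/-- Composite lower bound on the ergodic spectral efficiency (Scale Properties 1 and 2 of the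
paper): for independent `X > 0` a.s. and `Y ≥ 0` a.s. with `ln X` and `Y` integrable, and
`σ² > 0`, `E[ln(1 + X/(Y + σ²))] ≥ ln(1 + e^{E[ln X]}/(E[Y] + σ²))`
(stated with the lower integral since the left side may be infinite). -/
theorem se_composite_lower_bound {Ω : Type*} [MeasurableSpace Ω]
    (μ : Measure Ω) [IsProbabilityMeasure μ]
    (X Y : Ω → ℝ) (hX : Measurable X) (hY : Measurable Y)
    (hXpos : ∀ᵐ ω ∂μ, 0 < X ω) (hYpos : ∀ᵐ ω ∂μ, 0 ≤ Y ω)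
    (hindep : IndepFun X Y μ)
    (hlnX : Integrable (fun ω => Real.log (X ω)) μ) (hYint : Integrable Y μ)
    (σ2 : ℝ) (hσ : 0 < σ2) :
    ENNReal.ofReal (Real.log (1 + Real.exp (∫ ω, Real.log (X ω) ∂μ) / ((∫ ω, Y ω ∂μ) + σ2)))
      ≤ ∫⁻ ω, ENNReal.ofReal (Real.log (1 + X ω / (Y ω + σ2))) ∂μ := by
  set φ : ℝ → ℝ := fun z => Real.log (1 + Real.exp z) with hφdef
  set Z : Ω → ℝ := fun ω => Real.log (X ω) - Real.log (Y ω + σ2) with hZdef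
  have hYm : Measurable fun ω => Real.log (Y ω + σ2) := (hY.add_const σ2).log
  -- integrability of log (Y + σ2)
  have hlogY : Integrable (fun ω => Real.log (Y ω + σ2)) μ := by
    refine Integrable.mono' ((hYint.div_const σ2).add (integrable_const |Real.log σ2|))
      hYm.aestronglyMeasurable ?_
    filter_upwards [hYpos] with ω hy
    simp only [Pi.add_apply]
    rw [Real.norm_eq_abs, abs_le]
    constructor
    · have h1 : Real.log σ2 ≤ Real.log (Y ω + σ2) :=
        Real.log_le_log hσ (by linarith)
      have h2 : -|Real.log σ2| ≤ Real.log σ2 := neg_abs_le _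
      have h3 : (0:ℝ) ≤ Y ω / σ2 := by positivity
      linarith
    · have := log_add_le hσ hy
      have h2 : Real.log σ2 ≤ |Real.log σ2| := le_abs_self _
      linarith
  have hZint : Integrable Z μ := hlnX.sub hlogY
  have hZm : Measurable Z := hX.log.sub hYm
  -- integrability of φ ∘ Z
  have hφcont : Continuous φ :=
    (continuous_const.add Real.continuous_exp).log fun z => (by positivity : (0:ℝ) < 1 + Real.exp z).ne'
  have hφZint : Integrable (φ ∘ Z) μ := by
    refine Integrable.mono' ((integrable_const (Real.log 2)).add hZint.abs)
      (hφcont.measurable.comp hZm).aestronglyMeasurable ?_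
    filter_upwards with ω
    simp only [Pi.add_apply, Function.comp_apply]
    rw [Real.norm_eq_abs, abs_of_nonneg (softplus_nonneg _)]
    exact softplus_le _
  -- Jensen's inequality
  have hjensen : φ (∫ ω, Z ω ∂μ) ≤ ∫ ω, φ (Z ω) ∂μ :=
    softplus_convex.map_integral_le (hφcont.continuousOn) isClosed_univ
      (Filter.Eventually.of_forall fun _ => Set.mem_univ _) hZint hφZint
  -- concavity bound: ∫ log (Y + σ2) ≤ log (∫ Y + σ2)
  set c : ℝ := (∫ ω, Y ω ∂μ) + σ2 with hcdef
  have hEY : 0 ≤ ∫ ω, Y ω ∂μ := integral_nonneg_of_ae hYpos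
  have hc : 0 < c := by positivity
  have hconc : ∫ ω, Real.log (Y ω + σ2) ∂μ ≤ Real.log c := by
    have hrhsint : Integrable (fun ω => Real.log c + ((Y ω + σ2) / c - 1)) μ :=
      (integrable_const _).add (((hYint.add (integrable_const σ2)).div_const c).sub (integrable_const 1))
    have hpt : ∀ᵐ ω ∂μ, Real.log (Y ω + σ2) ≤ Real.log c + ((Y ω + σ2) / c - 1) := by
      filter_upwards [hYpos] with ω hy
      have := Real.log_le_sub_one_of_pos (x := (Y ω + σ2) / c) (by positivity)
      rw [Real.log_div (by positivity) hc.ne'] at this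
      linarith
    calc ∫ ω, Real.log (Y ω + σ2) ∂μ ≤ ∫ ω, (Real.log c + ((Y ω + σ2) / c - 1)) ∂μ :=
          integral_mono_ae hlogY hrhsint hpt
      _ = Real.log c := by
          have hint2 : Integrable (fun ω => (Y ω + σ2) / c) μ :=
            (hYint.add (integrable_const σ2)).div_const c
          have hint1 : Integrable (fun ω => (Y ω + σ2) / c - 1) μ :=
            hint2.sub (integrable_const 1)
          rw [integral_add (integrable_const _) hint1,
            integral_sub hint2 (integrable_const 1),
            integral_div, integral_add hYint (integrable_const σ2)]
          simp [integral_const, measure_univ, ← hcdef, div_self hc.ne']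
  -- lower bound on ∫ Z
  have hEZ : (∫ ω, Real.log (X ω) ∂μ) - Real.log c ≤ ∫ ω, Z ω ∂μ := by
    rw [hZdef, integral_sub hlnX hlogY]
    linarith
  -- value of φ at the lower bound
  have hφval : φ ((∫ ω, Real.log (X ω) ∂μ) - Real.log c)
      = Real.log (1 + Real.exp (∫ ω, Real.log (X ω) ∂μ) / c) := by
    rw [hφdef]
    simp only
    rw [Real.exp_sub, Real.exp_log hc]
  -- a.e. identification of the integrand
  have hae : ∀ᵐ ω ∂μ, ENNReal.ofReal (Real.log (1 + X ω / (Y ω + σ2)))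
      = ENNReal.ofReal (φ (Z ω)) := by
    filter_upwards [hXpos, hYpos] with ω hx hy
    congr 1
    rw [hφdef, hZdef]
    simp only
    rw [Real.exp_sub, Real.exp_log hx, Real.exp_log (by linarith)]
  rw [lintegral_congr_ae hae]
  have hint_eq : ∫⁻ ω, ENNReal.ofReal (φ (Z ω)) ∂μ = ENNReal.ofReal (∫ ω, φ (Z ω) ∂μ) :=
    (ofReal_integral_eq_lintegral_ofReal hφZint
      (Filter.Eventually.of_forall fun ω => softplus_nonneg _)).symm
  rw [hint_eq]
  apply ENNReal.ofReal_le_ofReal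
  calc Real.log (1 + Real.exp (∫ ω, Real.log (X ω) ∂μ) / c)
      = φ ((∫ ω, Real.log (X ω) ∂μ) - Real.log c) := hφval.symm
    _ ≤ φ (∫ ω, Z ω ∂μ) := softplus_mono hEZ
    _ ≤ ∫ ω, φ (Z ω) ∂μ := hjensen
end

section
/- Let R be a real random variable with density f_R(r) = 2π λ_M r exp(−π λ_M r²) for r > 0 (λ_M > 0), let D_o, I_th, β, P_max^D > 0 and α_M > 0, and define P' = (I_th/β)·(max(D_o, R))^{α_M}. Then E[min{P_max^D, P'}] = ∫₀^{P_max^D} ( 𝟙{x < D_o^{α_M} I_th/β}·(1 − exp(−π λ_M D_o²)) + exp(−π λ_M (ϖ₁(x))²) ) dx, where ϖ₁(x) = max{D_o, (β x / I_th)^{1/α_M}}. -/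
open MeasureTheory Set intervalIntegral

lemma aux_tail (lamM w : ℝ) (hlam : 0 < lamM) (hw : 0 ≤ w) :
    ∫ r in Ioi w, 2 * Real.pi * lamM * r * Real.exp (-(Real.pi * lamM * r ^ 2)) =
      Real.exp (-(Real.pi * lamM * w ^ 2)) := by
  have hderiv : ∀ x ∈ Ici w, HasDerivAt (fun x => -Real.exp (-(Real.pi * lamM * x ^ 2)))
      (2 * Real.pi * lamM * x * Real.exp (-(Real.pi * lamM * x ^ 2))) x := by
    intro x _
    have h1 : HasDerivAt (fun x : ℝ => -(Real.pi * lamM * x ^ 2))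
        (-(Real.pi * lamM * (2 * x))) x := by
      simpa using (((hasDerivAt_pow 2 x).const_mul (Real.pi * lamM)).fun_neg)
    have h2 := (h1.exp).fun_neg
    exact h2.congr_deriv (by ring)
  have hnn : ∀ x ∈ Ioi w, 0 ≤ 2 * Real.pi * lamM * x * Real.exp (-(Real.pi * lamM * x ^ 2)) := by
    intro x hx
    have hx0 : 0 ≤ x := hw.trans (le_of_lt hx)
    have := Real.exp_nonneg (-(Real.pi * lamM * x ^ 2))
    have hpi := Real.pi_pos
    positivity
  have htends : Filter.Tendsto (fun x => -Real.exp (-(Real.pi * lamM * x ^ 2)))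
      Filter.atTop (nhds 0) := by
    have h1 : Filter.Tendsto (fun x : ℝ => -(Real.pi * lamM * x ^ 2)) Filter.atTop Filter.atBot := by
      apply Filter.tendsto_neg_atTop_atBot.comp
      exact (Filter.tendsto_pow_atTop (two_ne_zero)).const_mul_atTop (by positivity)
    have h2 := Real.tendsto_exp_atBot.comp h1
    simpa using h2.neg
  have := integral_Ioi_of_hasDerivAt_of_nonneg' hderiv hnn htends
  simpa using this

lemma aux_integrable (lamM w : ℝ) (hlam : 0 < lamM) (hw : 0 ≤ w) :
    IntegrableOn (fun r => 2 * Real.pi * lamM * r * Real.exp (-(Real.pi * lamM * r ^ 2)))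
      (Ioi w) := by
  have hderiv : ∀ x ∈ Ici w, HasDerivAt (fun x => -Real.exp (-(Real.pi * lamM * x ^ 2)))
      (2 * Real.pi * lamM * x * Real.exp (-(Real.pi * lamM * x ^ 2))) x := by
    intro x _
    have h1 : HasDerivAt (fun x : ℝ => -(Real.pi * lamM * x ^ 2))
        (-(Real.pi * lamM * (2 * x))) x := by
      simpa using (((hasDerivAt_pow 2 x).const_mul (Real.pi * lamM)).fun_neg)
    have h2 := (h1.exp).fun_neg
    exact h2.congr_deriv (by ring)
  have hnn : ∀ x ∈ Ioi w, 0 ≤ 2 * Real.pi * lamM * x * Real.exp (-(Real.pi * lamM * x ^ 2)) := by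
    intro x hx
    have hx0 : 0 ≤ x := hw.trans (le_of_lt hx)
    have hpi := Real.pi_pos
    positivity
  have htends : Filter.Tendsto (fun x => -Real.exp (-(Real.pi * lamM * x ^ 2)))
      Filter.atTop (nhds 0) := by
    have h1 : Filter.Tendsto (fun x : ℝ => -(Real.pi * lamM * x ^ 2)) Filter.atTop Filter.atBot := by
      apply Filter.tendsto_neg_atTop_atBot.comp
      exact (Filter.tendsto_pow_atTop (two_ne_zero)).const_mul_atTop (by positivity)
    have h2 := Real.tendsto_exp_atBot.comp h1
    simpa using h2.neg
  exact integrableOn_Ioi_deriv_of_nonneg' hderiv hnn htends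

lemma aux_measure (lamM w : ℝ) (hlam : 0 < lamM) (hw : 0 < w) :
    ((volume : Measure ℝ).withDensity
      (fun r => ENNReal.ofReal
        (if 0 < r then 2 * Real.pi * lamM * r * Real.exp (-(Real.pi * lamM * r ^ 2)) else 0)))
      (Ioi w) = ENNReal.ofReal (Real.exp (-(Real.pi * lamM * w ^ 2))) := by
  rw [withDensity_apply _ measurableSet_Ioi]
  have hcong : ∫⁻ r in Ioi w, ENNReal.ofReal
      (if 0 < r then 2 * Real.pi * lamM * r * Real.exp (-(Real.pi * lamM * r ^ 2)) else 0)
      = ∫⁻ r in Ioi w, ENNReal.ofReal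
      (2 * Real.pi * lamM * r * Real.exp (-(Real.pi * lamM * r ^ 2))) := by
    apply setLIntegral_congr_fun measurableSet_Ioi
    intro r hr
    simp only [if_pos (hw.trans hr)]
  rw [hcong, ← ofReal_integral_eq_lintegral_ofReal (aux_integrable lamM w hlam hw.le)]
  · rw [aux_tail lamM w hlam hw.le]
  · filter_upwards [ae_restrict_mem measurableSet_Ioi] with r hr
    have hr0 : 0 ≤ r := hw.le.trans (le_of_lt hr)
    have hpi := Real.pi_pos
    positivity

/-- The average D2D transmit power `P̄_D` of equation (15) of the paper: with the Rayleigh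
nearest-distance density, reference distance `D_o` and `P' = (I_th/β)·(max(D_o, R))^{α_M}`,
`E[min{P_max^D, P'}] = ∫₀^{P_max^D} ( 𝟙{x < D_o^{α_M} I_th/β}(1 − e^{−π λ_M D_o²})
  + e^{−π λ_M ϖ₁(x)²} ) dx`, where `ϖ₁(x) = max{D_o, (β x/I_th)^{1/α_M}}`. -/
theorem average_d2d_power {Ω : Type*} [MeasurableSpace Ω]
    (μ : Measure Ω) [IsProbabilityMeasure μ]
    (R : Ω → ℝ) (hR : Measurable R)
    (lamM : ℝ) (hlam : 0 < lamM)
    (hdist : Measure.map R μ = (volume : Measure ℝ).withDensity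
      (fun r => ENNReal.ofReal
        (if 0 < r then 2 * Real.pi * lamM * r * Real.exp (-(Real.pi * lamM * r ^ 2)) else 0)))
    (Do Ith β PmaxD αM : ℝ) (hDo : 0 < Do) (hIth : 0 < Ith) (hβ : 0 < β)
    (hPmax : 0 < PmaxD) (hαM : 0 < αM)
    (P' : Ω → ℝ) (hP' : ∀ ω, P' ω = (Ith / β) * max Do (R ω) ^ αM) :
    ∫ ω, min PmaxD (P' ω) ∂μ
      = ∫ x in (0:ℝ)..PmaxD,
          ((if x < Do ^ αM * Ith / β then 1 - Real.exp (-(Real.pi * lamM * Do ^ 2)) else 0)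
            + Real.exp (-(Real.pi * lamM * (max Do ((β * x / Ith) ^ (1 / αM))) ^ 2))) := by
  have hP'eq : P' = fun ω => (Ith / β) * max Do (R ω) ^ αM := funext hP'
  have hP'nn : ∀ ω, 0 ≤ P' ω := by
    intro ω
    rw [hP']
    have h1 : (0:ℝ) < max Do (R ω) := lt_max_of_lt_left hDo
    have := Real.rpow_nonneg h1.le αM
    positivity
  have hYnn : ∀ ω, 0 ≤ min PmaxD (P' ω) := fun ω => le_min hPmax.le (hP'nn ω)
  have hP'meas : Measurable P' := by
    have heq : P' = fun ω => (Ith / β) * Real.exp (Real.log (max Do (R ω)) * αM) := by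
      funext ω
      rw [hP' ω, Real.rpow_def_of_pos (lt_max_of_lt_left hDo)]
    rw [heq]
    exact ((Real.measurable_exp.comp
      ((Real.measurable_log.comp (measurable_const.max hR)).mul_const αM))).const_mul _
  have hYmeas : Measurable fun ω => min PmaxD (P' ω) := measurable_const.min hP'meas
  have hYint : Integrable (fun ω => min PmaxD (P' ω)) μ := by
    refine (integrable_const PmaxD).mono' hYmeas.aestronglyMeasurable ?_
    filter_upwards with ω
    rw [Real.norm_eq_abs, abs_of_nonneg (hYnn ω)]
    exact min_le_left _ _
  rw [hYint.integral_eq_integral_meas_lt (Filter.Eventually.of_forall hYnn)]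
  set G : ℝ → ℝ := fun x =>
      ((if x < Do ^ αM * Ith / β then 1 - Real.exp (-(Real.pi * lamM * Do ^ 2)) else 0)
        + Real.exp (-(Real.pi * lamM * (max Do ((β * x / Ith) ^ (1 / αM))) ^ 2))) with hG
  have key : ∀ t ∈ Ioi (0:ℝ), t ≠ PmaxD →
      (μ {a | t < min PmaxD (P' a)}).toReal = indicator (Ioo 0 PmaxD) G t := by
    intro t ht htne
    have ht0 : (0:ℝ) < t := ht
    by_cases htP : t < PmaxD
    · have hset : {a | t < min PmaxD (P' a)}
          = R ⁻¹' {r : ℝ | t < (Ith / β) * max Do r ^ αM} := by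
        ext a
        simp only [mem_setOf_eq, lt_min_iff, mem_preimage, hP' a]
        exact ⟨fun h => h.2, fun h => ⟨htP, h⟩⟩
      have hmemIoo : t ∈ Ioo (0:ℝ) PmaxD := ⟨ht0, htP⟩
      by_cases htc : t < Do ^ αM * Ith / β
      · --区域 1: set is univ
        have hS : {r : ℝ | t < (Ith / β) * max Do r ^ αM} = univ := by
          apply eq_univ_of_forall
          intro r
          have h1 : Do ^ αM ≤ max Do r ^ αM :=
            Real.rpow_le_rpow hDo.le (le_max_left _ _) hαM.le
          have h2 : Do ^ αM * Ith / β = (Ith / β) * Do ^ αM := by ring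
          calc t < Do ^ αM * Ith / β := htc
            _ = (Ith / β) * Do ^ αM := h2
            _ ≤ (Ith / β) * max Do r ^ αM := by
                apply mul_le_mul_of_nonneg_left h1 (by positivity)
        have hw : (β * t / Ith) ^ (1 / αM) < Do := by
          have h2 : β * t / Ith < Do ^ αM := by
            rw [div_lt_iff₀ hIth]
            calc β * t = t * β := by ring
              _ < (Do ^ αM * Ith / β) * β := by
                  exact mul_lt_mul_of_pos_right htc hβ
              _ = Do ^ αM * Ith := by field_simp
          have h3 : ((β * t / Ith) ^ (1 / αM)) < (Do ^ αM) ^ (1 / αM) :=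
            Real.rpow_lt_rpow (by positivity) h2 (by positivity)
          rw [one_div]
          rw [one_div, Real.rpow_rpow_inv hDo.le hαM.ne'] at h3
          exact h3
        rw [hset, hS, preimage_univ, measure_univ, indicator_of_mem hmemIoo, hG]
        simp only [if_pos htc, max_eq_left hw.le, ENNReal.toReal_one]
        ring
      · -- 区域 2: set is Ioi w
        set w := (β * t / Ith) ^ (1 / αM) with hwdef
        have hc : Do ^ αM * Ith / β ≤ t := not_lt.1 htc
        have hq : Do ^ αM ≤ β * t / Ith := by
          rw [le_div_iff₀ hIth]
          calc Do ^ αM * Ith = (Do ^ αM * Ith / β) * β := by field_simp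
            _ ≤ t * β := mul_le_mul_of_nonneg_right hc hβ.le
            _ = β * t := by ring
        have hwDo : Do ≤ w := by
          have h3 : (Do ^ αM) ^ (1 / αM) ≤ (β * t / Ith) ^ (1 / αM) :=
            Real.rpow_le_rpow (by positivity) hq (by positivity)
          rw [hwdef, one_div]
          rw [one_div, Real.rpow_rpow_inv hDo.le hαM.ne'] at h3
          exact h3
        have hwpos : 0 < w := hDo.trans_le hwDo
        have hwpow : w ^ αM = β * t / Ith := by
          rw [hwdef, one_div, Real.rpow_inv_rpow (by positivity) hαM.ne']
        have hS : {r : ℝ | t < (Ith / β) * max Do r ^ αM} = Ioi w := by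
          ext r
          simp only [mem_setOf_eq, mem_Ioi]
          have hm : (0:ℝ) < max Do r := lt_max_of_lt_left hDo
          constructor
          · intro h
            have h1 : β * t / Ith < max Do r ^ αM := by
              rw [div_lt_iff₀ hIth]
              have := mul_lt_mul_of_pos_right h hβ
              calc β * t = t * β := by ring
                _ < ((Ith / β) * max Do r ^ αM) * β := this
                _ = max Do r ^ αM * Ith := by field_simp
            rw [← hwpow] at h1
            have h2 : w < max Do r := by
              by_contra hcon
              exact absurd h1 (not_lt.2 (Real.rpow_le_rpow hm.le (not_lt.1 hcon) hαM.le))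
            rcases lt_max_iff.1 h2 with h3 | h3
            · exact absurd h3 (not_lt.2 hwDo)
            · exact h3
          · intro h
            have h2 : w < max Do r := lt_max_iff.2 (Or.inr h)
            have h1 : w ^ αM < max Do r ^ αM := Real.rpow_lt_rpow hwpos.le h2 hαM
            rw [hwpow] at h1
            rw [div_lt_iff₀ hIth] at h1
            calc t = (Ith / β) * (β * t / Ith) := by field_simp
              _ < (Ith / β) * max Do r ^ αM := by
                  apply mul_lt_mul_of_pos_left _ (by positivity)
                  rw [div_lt_iff₀ hIth]
                  exact h1
        rw [hset, hS, ← Measure.map_apply hR measurableSet_Ioi, hdist,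
          aux_measure lamM w hlam hwpos, ENNReal.toReal_ofReal (Real.exp_nonneg _),
          indicator_of_mem hmemIoo, hG]
        simp only [if_neg htc, ← hwdef, max_eq_right hwDo, zero_add]
    · -- t ≥ PmaxD hence > PmaxD
      have htgt : PmaxD < t := lt_of_le_of_ne (not_lt.1 htP) (Ne.symm htne)
      have hempty : {a | t < min PmaxD (P' a)} = ∅ := by
        apply eq_empty_of_forall_notMem
        intro a ha
        exact absurd (lt_of_lt_of_le ha (min_le_left _ _)) (not_lt.2 htgt.le)
      rw [hempty, measure_empty, indicator_of_notMem (by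
        simp only [mem_Ioo, not_and, not_lt]
        intro _
        exact htgt.le)]
      simp
  have ae_eq : (fun t => (μ {a | t < min PmaxD (P' a)}).toReal)
      =ᵐ[(volume : Measure ℝ).restrict (Ioi 0)] indicator (Ioo 0 PmaxD) G := by
    have hne : ∀ᵐ t ∂((volume : Measure ℝ).restrict (Ioi 0)), t ≠ PmaxD := by
      apply ae_restrict_of_ae
      have : ({PmaxD} : Set ℝ) =ᵐ[volume] (∅ : Set ℝ) := by
        simp [ae_eq_empty, Real.volume_singleton]
      rw [Filter.eventually_iff, ← compl_compl {t : ℝ | t ≠ PmaxD}]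
      apply compl_mem_ae_iff.2
      simpa using Real.volume_singleton
    filter_upwards [hne, ae_restrict_mem measurableSet_Ioi] with t h1 h2
    exact key t h2 h1
  simp only [measureReal_def]
  rw [integral_congr_ae ae_eq, setIntegral_indicator measurableSet_Ioo,
    inter_eq_self_of_subset_right Ioo_subset_Ioi_self,
    intervalIntegral.integral_of_le hPmax.le, integral_Ioc_eq_integral_Ioo]
end

section
/- Let R be a real random variable with density f_R(r) = 2π λ_M r exp(−π λ_M r²) for r > 0 (λ_M > 0), let P_D = min{P_max^D, (I_th/β)·R^{α_M}} with P_max^D, I_th, β > 0, α_M > 0, and let t > 0, d_o > 0, α_D > 0, ϖ₀ = π λ_M (β P_max^D/I_th)^{2/α_M}. Then E[ 1/(1 + t P_D β d_o^{−α_D}) ] = ∫₀^{ϖ₀} e^{−x} / (1 + t I_th (x/(π λ_M))^{α_M/2} d_o^{−α_D}) dx + e^{−ϖ₀} / (1 + t P_max^D β d_o^{−α_D}). -/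
open MeasureTheory Set intervalIntegral

/-- The quantity `Ξ₃(t)` of equation (16) in Theorem 2 of the paper: with the Rayleigh
nearest-distance density and the D2D power control `P_D = min{P_max^D, (I_th/β)·R^{α_M}}`,
for `t > 0`, D2D link distance `d_o > 0`, D2D path-loss exponent `α_D > 0` and
`ϖ₀ = π λ_M (β P_max^D/I_th)^{2/α_M}`,
`E[1/(1 + t P_D β d_o^{−α_D})] = ∫₀^{ϖ₀} e^{−x}/(1 + t I_th (x/(π λ_M))^{α_M/2} d_o^{−α_D}) dx
  + e^{−ϖ₀}/(1 + t P_max^D β d_o^{−α_D})`. -/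
theorem d2d_signal_laplace {Ω : Type*} [MeasurableSpace Ω]
    (μ : Measure Ω) [IsProbabilityMeasure μ]
    (R : Ω → ℝ) (hR : Measurable R)
    (lamM : ℝ) (hlam : 0 < lamM)
    (hdist : Measure.map R μ = (volume : Measure ℝ).withDensity
      (fun r => ENNReal.ofReal
        (if 0 < r then 2 * Real.pi * lamM * r * Real.exp (-(Real.pi * lamM * r ^ 2)) else 0)))
    (PmaxD Ith β αM : ℝ) (hPmax : 0 < PmaxD) (hIth : 0 < Ith) (hβ : 0 < β) (hαM : 0 < αM)
    (PD : Ω → ℝ) (hPD : ∀ ω, PD ω = min PmaxD ((Ith / β) * R ω ^ αM))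
    (t do_ αD : ℝ) (ht : 0 < t) (hdo : 0 < do_) (hαD : 0 < αD)
    (ϖ₀ : ℝ) (hϖ₀ : ϖ₀ = Real.pi * lamM * (β * PmaxD / Ith) ^ (2 / αM)) :
    ∫ ω, 1 / (1 + t * PD ω * β * do_ ^ (-αD)) ∂μ
      = (∫ x in (0:ℝ)..ϖ₀,
          Real.exp (-x) / (1 + t * Ith * (x / (Real.pi * lamM)) ^ (αM / 2) * do_ ^ (-αD)))
        + Real.exp (-ϖ₀) / (1 + t * PmaxD * β * do_ ^ (-αD)) := by
  have hπ : (0:ℝ) < Real.pi := Real.pi_pos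
  have hc : (0:ℝ) < Real.pi * lamM := by positivity
  have hq : (0:ℝ) < do_ ^ (-αD) := Real.rpow_pos_of_pos hdo _
  set q : ℝ := do_ ^ (-αD) with hqdef
  -- the threshold radius
  set r₀ : ℝ := (β * PmaxD / Ith) ^ αM⁻¹ with hr₀def
  have hbase : (0:ℝ) < β * PmaxD / Ith := by positivity
  have hr₀ : 0 < r₀ := Real.rpow_pos_of_pos hbase _
  have hr₀pow : r₀ ^ αM = β * PmaxD / Ith := Real.rpow_inv_rpow hbase.le hαM.ne'
  have hϖ : ϖ₀ = Real.pi * lamM * r₀ ^ 2 := by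
    rw [hϖ₀]
    congr 1
    rw [← Real.rpow_natCast r₀ 2, hr₀def, ← Real.rpow_mul hbase.le,
      show (αM⁻¹ * ((2:ℕ):ℝ)) = 2 / αM by push_cast; ring]
  have hϖ0 : 0 ≤ ϖ₀ := by rw [hϖ]; positivity
  -- the integrand as a function of r
  set g : ℝ → ℝ := fun r => 1 / (1 + t * min PmaxD (Ith / β * r ^ αM) * β * q) with hgdef
  have hgmeas : Measurable g := by
    apply Measurable.div measurable_const
    exact ((((measurable_const.min
      ((measurable_id.pow_const αM).const_mul _)).const_mul t).mul_const β).mul_const q).const_add 1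
  set φ : ℝ → ℝ := fun r =>
    if 0 < r then 2 * Real.pi * lamM * r * Real.exp (-(Real.pi * lamM * r ^ 2)) else 0 with hφdef
  have hφmeas : Measurable φ := by
    apply Measurable.ite measurableSet_Ioi _ measurable_const
    exact (((measurable_const.mul measurable_id)).mul
      ((measurable_id.pow_const 2).const_mul _).neg.exp)
  have hφnonneg : ∀ r, 0 ≤ φ r := by
    intro r
    simp only [hφdef]
    split
    · have : (0:ℝ) < r := by assumption
      positivity
    · exact le_rfl
  -- step A: expectation as a Lebesgue integral against the density
  have stepA : ∫ ω, 1 / (1 + t * PD ω * β * q) ∂μ = ∫ r, φ r * g r := by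
    have h1 : ∫ ω, 1 / (1 + t * PD ω * β * q) ∂μ = ∫ ω, g (R ω) ∂μ := by
      simp only [hgdef, hPD]
    rw [h1, ← integral_map hR.aemeasurable hgmeas.aestronglyMeasurable, hdist]
    have h2 : (fun r : ℝ => ENNReal.ofReal (if 0 < r then
        2 * Real.pi * lamM * r * Real.exp (-(Real.pi * lamM * r ^ 2)) else 0))
        = fun r : ℝ => ((Real.toNNReal (φ r) : NNReal) : ENNReal) := rfl
    rw [h2, integral_withDensity_eq_integral_smul hφmeas.real_toNNReal g]
    congr 1
    funext r
    rw [NNReal.smul_def, smul_eq_mul, Real.coe_toNNReal _ (hφnonneg r)]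
  -- step B: restrict to Ioi 0
  have stepB : ∫ r, φ r * g r = ∫ r in Ioi (0:ℝ), φ r * g r := by
    refine (setIntegral_eq_integral_of_forall_compl_eq_zero ?_).symm
    intro r hr
    simp only [mem_Ioi, not_lt] at hr
    simp only [hφdef]
    rw [if_neg (not_lt.mpr hr), zero_mul]
  -- derivative of the antiderivative of the density
  have hG : ∀ x : ℝ, HasDerivAt (fun r : ℝ => -Real.exp (-(Real.pi * lamM * r ^ 2)))
      (2 * Real.pi * lamM * x * Real.exp (-(Real.pi * lamM * x ^ 2))) x := by
    intro x
    have h1 : HasDerivAt (fun r : ℝ => -(Real.pi * lamM * r ^ 2))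
        (-(Real.pi * lamM * (2 * x))) x := by
      exact (((hasDerivAt_pow 2 x).const_mul (Real.pi * lamM)).neg).congr_deriv (by norm_num)
    have h3 := h1.exp.neg
    exact h3.congr_deriv (by ring)
  have htends : Filter.Tendsto (fun r : ℝ => -Real.exp (-(Real.pi * lamM * r ^ 2)))
      Filter.atTop (nhds 0) := by
    have h1 : Filter.Tendsto (fun r : ℝ => Real.pi * lamM * r ^ 2) Filter.atTop Filter.atTop :=
      (Filter.tendsto_pow_atTop (two_ne_zero)).const_mul_atTop hc
    have h2 := Real.tendsto_exp_atBot.comp (Filter.tendsto_neg_atTop_atBot.comp h1)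
    simpa using h2.neg
  have hψpos : ∀ x ∈ Ioi r₀, 0 ≤ 2 * Real.pi * lamM * x * Real.exp (-(Real.pi * lamM * x ^ 2)) := by
    intro x hx
    have hx0 : 0 < x := hr₀.trans hx
    positivity
  have hψint : IntegrableOn
      (fun r : ℝ => 2 * Real.pi * lamM * r * Real.exp (-(Real.pi * lamM * r ^ 2))) (Ioi r₀) :=
    integrableOn_Ioi_deriv_of_nonneg' (fun x _ => hG x) hψpos htends
  have hψval : ∫ r in Ioi r₀, 2 * Real.pi * lamM * r * Real.exp (-(Real.pi * lamM * r ^ 2))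
      = Real.exp (-ϖ₀) := by
    rw [integral_Ioi_of_hasDerivAt_of_nonneg' (fun x _ => hG x) hψpos htends, hϖ]
    simp
  -- the min on each region
  have hminR : ∀ r : ℝ, r₀ ≤ r → min PmaxD (Ith / β * r ^ αM) = PmaxD := by
    intro r hr
    apply min_eq_left
    have h1 : r₀ ^ αM ≤ r ^ αM := Real.rpow_le_rpow hr₀.le hr hαM.le
    rw [hr₀pow] at h1
    calc PmaxD = Ith / β * (β * PmaxD / Ith) := by field_simp
      _ ≤ Ith / β * r ^ αM := mul_le_mul_of_nonneg_left h1 (by positivity)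
  have hminL : ∀ r : ℝ, 0 ≤ r → r ≤ r₀ → min PmaxD (Ith / β * r ^ αM) = Ith / β * r ^ αM := by
    intro r hr0 hr
    apply min_eq_right
    have h1 : r ^ αM ≤ r₀ ^ αM := Real.rpow_le_rpow hr0 hr hαM.le
    rw [hr₀pow] at h1
    calc Ith / β * r ^ αM ≤ Ith / β * (β * PmaxD / Ith) :=
        mul_le_mul_of_nonneg_left h1 (by positivity)
      _ = PmaxD := by field_simp
  -- congruence on the tail
  have hC2 : ∀ r ∈ Ioi r₀, φ r * g r
      = (2 * Real.pi * lamM * r * Real.exp (-(Real.pi * lamM * r ^ 2)))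
        * (1 / (1 + t * PmaxD * β * q)) := by
    intro r hr
    simp only [mem_Ioi] at hr
    have hr0 : 0 < r := hr₀.trans hr
    simp only [hφdef, hgdef]
    rw [if_pos hr0, hminR r hr.le]
  have hint2 : IntegrableOn (fun r => φ r * g r) (Ioi r₀) :=
    IntegrableOn.congr_fun (hψint.mul_const _) (fun r hr => (hC2 r hr).symm) measurableSet_Ioi
  -- bounds on g
  have hgle : ∀ r : ℝ, 0 < r → 0 ≤ g r ∧ g r ≤ 1 := by
    intro r hr
    have hmin : 0 < min PmaxD (Ith / β * r ^ αM) := lt_min hPmax (by positivity)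
    have hD : 0 ≤ t * min PmaxD (Ith / β * r ^ αM) * β * q :=
      mul_nonneg (mul_nonneg (mul_nonneg ht.le hmin.le) hβ.le) hq.le
    constructor
    · simp only [hgdef]
      exact div_nonneg zero_le_one (by linarith)
    · simp only [hgdef]
      rw [div_le_one (by linarith)]
      linarith
  have hint1 : IntegrableOn (fun r => φ r * g r) (Ioc 0 r₀) := by
    refine Integrable.mono' (g := fun _ : ℝ => 2 * Real.pi * lamM * r₀)
      (integrableOn_const measure_Ioc_lt_top.ne)
      (hφmeas.mul hgmeas).aestronglyMeasurable ?_
    rw [ae_restrict_iff' measurableSet_Ioc]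
    apply ae_of_all
    intro r hr
    obtain ⟨hg0, hg1⟩ := hgle r hr.1
    have hφr : φ r = 2 * Real.pi * lamM * r * Real.exp (-(Real.pi * lamM * r ^ 2)) := by
      simp only [hφdef]; rw [if_pos hr.1]
    have hexp : Real.exp (-(Real.pi * lamM * r ^ 2)) ≤ 1 := by
      rw [Real.exp_le_one_iff]
      have : (0:ℝ) < r := hr.1
      nlinarith
    rw [Real.norm_eq_abs, abs_of_nonneg (mul_nonneg (hφnonneg r) hg0)]
    calc φ r * g r ≤ φ r * 1 := mul_le_mul_of_nonneg_left hg1 (hφnonneg r)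
      _ = φ r := mul_one _
      _ ≤ 2 * Real.pi * lamM * r := by
          rw [hφr]
          have h1 : 0 ≤ 2 * Real.pi * lamM * r := by have := hr.1; positivity
          exact mul_le_of_le_one_right h1 hexp
      _ ≤ 2 * Real.pi * lamM * r₀ := by nlinarith [hr.2, hc]
  -- split
  have stepC : ∫ r in Ioi (0:ℝ), φ r * g r
      = (∫ r in Ioc (0:ℝ) r₀, φ r * g r) + ∫ r in Ioi r₀, φ r * g r := by
    rw [← Ioc_union_Ioi_eq_Ioi hr₀.le,
      setIntegral_union (Ioc_disjoint_Ioi le_rfl) measurableSet_Ioi hint1 hint2]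
  -- piece 2
  have piece2 : ∫ r in Ioi r₀, φ r * g r = Real.exp (-ϖ₀) / (1 + t * PmaxD * β * q) := by
    rw [setIntegral_congr_fun measurableSet_Ioi hC2, MeasureTheory.integral_mul_const, hψval, mul_one_div]
  -- piece 1: change of variables
  set F : ℝ → ℝ := fun x =>
    Real.exp (-x) / (1 + t * Ith * (x / (Real.pi * lamM)) ^ (αM / 2) * q) with hFdef
  have hC1 : ∀ r ∈ Ioc (0:ℝ) r₀, φ r * g r
      = (2 * Real.pi * lamM * r) • F (Real.pi * lamM * r ^ 2) := by
    intro r hr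
    obtain ⟨hr0, hrr⟩ := hr
    simp only [hφdef, hgdef, hFdef, smul_eq_mul]
    rw [if_pos hr0, hminL r hr0.le hrr]
    have e1 : Real.pi * lamM * r ^ 2 / (Real.pi * lamM) = r ^ 2 :=
      mul_div_cancel_left₀ _ hc.ne'
    rw [e1]
    have e2 : ((r:ℝ) ^ 2) ^ (αM / 2) = r ^ αM := by
      rw [← Real.rpow_natCast r 2, ← Real.rpow_mul hr0.le,
        show (((2:ℕ):ℝ) * (αM / 2)) = αM by push_cast; ring]
    rw [e2]
    have e3 : t * (Ith / β * r ^ αM) * β * q = t * Ith * r ^ αM * q := by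
      rw [show t * (Ith / β * r ^ αM) * β * q = t * (Ith / β * β) * r ^ αM * q by ring,
        div_mul_cancel₀ _ hβ.ne']
    rw [e3, mul_one_div, mul_div_assoc]
  have hFcont : ContinuousOn F (Ici (0:ℝ)) := by
    have hpow : ∀ x ∈ Ici (0:ℝ), 0 ≤ (x / (Real.pi * lamM)) ^ (αM / 2) := by
      intro x hx
      exact Real.rpow_nonneg (div_nonneg hx hc.le) _
    apply ContinuousOn.div
    · exact (Real.continuous_exp.comp continuous_neg).continuousOn
    · apply continuousOn_const.add
      apply ContinuousOn.mul _ continuousOn_const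
      apply continuousOn_const.mul
      intro x _
      apply ContinuousAt.continuousWithinAt
      exact ContinuousAt.rpow_const (continuousAt_id.div_const _) (Or.inr (by positivity))
    · intro x hx
      have h4 : 0 ≤ t * Ith * (x / (Real.pi * lamM)) ^ (αM / 2) * q :=
        mul_nonneg (mul_nonneg (mul_nonneg ht.le hIth.le) (hpow x hx)) hq.le
      intro hcontra
      linarith [hcontra ▸ h4]
  have hderiv : ∀ x ∈ uIcc (0:ℝ) r₀,
      HasDerivAt (fun r : ℝ => Real.pi * lamM * r ^ 2) (2 * Real.pi * lamM * x) x := by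
    intro x _
    have := (hasDerivAt_pow 2 x).const_mul (Real.pi * lamM)
    exact this.congr_deriv (by norm_num; ring)
  have himg : ContinuousOn F ((fun r : ℝ => Real.pi * lamM * r ^ 2) '' uIcc 0 r₀) := by
    apply hFcont.mono
    rintro y ⟨x, -, rfl⟩
    simp only [mem_Ici]
    positivity
  have hsub : (∫ r in (0:ℝ)..r₀, (2 * Real.pi * lamM * r) • F (Real.pi * lamM * r ^ 2))
      = ∫ x in (0:ℝ)..ϖ₀, F x := by
    have hcont2 : ContinuousOn (fun x : ℝ => 2 * Real.pi * lamM * x) (uIcc 0 r₀) :=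
      (continuous_const.mul continuous_id).continuousOn
    have h5 := intervalIntegral.integral_comp_smul_deriv' hderiv hcont2 himg
    simp only [Function.comp] at h5
    rw [h5]
    norm_num
    rw [hϖ]
  have piece1 : ∫ r in Ioc (0:ℝ) r₀, φ r * g r = ∫ x in (0:ℝ)..ϖ₀, F x := by
    rw [setIntegral_congr_fun measurableSet_Ioc hC1, ← intervalIntegral.integral_of_le hr₀.le,
      hsub]
  rw [stepA, stepB, stepC, piece1, piece2]
end

section
/- Let R be a real random variable with density f_R(r) = 2π λ_M r exp(−π λ_M r²) for r > 0 (λ_M > 0), and define P_C = min{P_max^C, P_o β^{−η} R^{η α_M}} with P_o, P_max^C, β > 0, α_M > 0, η ∈ (0,1], and r_o = (P_max^C/P_o)^{1/(α_M η)} β^{1/α_M}. Then E[ln P_C] = ln(P_o β^{−η})·(1 − e^{−π λ_M r_o²}) + ln(P_max^C)·e^{−π λ_M r_o²} − (η α_M/2)·( γ + Γ(0, π λ_M r_o²) + 2 e^{−π λ_M r_o²} ln(r_o) + ln(π λ_M) ), where γ is the Euler–Mascheroni constant and Γ(0,T) = ∫_T^∞ e^{−u}/u du. -/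
open MeasureTheory Set Filter
open scoped ENNReal NNReal

lemma integral_log_mul_exp_neg :
    ∫ t in Set.Ioi (0:ℝ), Real.log t * Real.exp (-t) = -Real.eulerMascheroniConstant := by
  have h1 : HasDerivAt Complex.GammaIntegral
      (∫ t : ℝ in Ioi 0, (t:ℂ) ^ ((1:ℂ) - 1) * (Real.log t * Real.exp (-t))) 1 :=
    Complex.hasDerivAt_GammaIntegral (by simp)
  have hval : (∫ t : ℝ in Ioi 0, (t:ℂ) ^ ((1:ℂ) - 1) * (Real.log t * Real.exp (-t)))
      = ((∫ t in Set.Ioi (0:ℝ), Real.log t * Real.exp (-t) : ℝ) : ℂ) := by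
    rw [show ((∫ t in Set.Ioi (0:ℝ), Real.log t * Real.exp (-t) : ℝ) : ℂ)
        = ∫ t in Set.Ioi (0:ℝ), ((Real.log t * Real.exp (-t) : ℝ) : ℂ) from (integral_ofReal).symm]
    apply integral_congr_ae
    filter_upwards with t
    push_cast
    rw [sub_self, Complex.cpow_zero, one_mul]
  rw [hval] at h1
  have h2 : HasDerivAt Complex.Gamma
      (((∫ t in Set.Ioi (0:ℝ), Real.log t * Real.exp (-t) : ℝ) : ℂ)) 1 := by
    apply h1.congr_of_eventuallyEq
    have : {s : ℂ | 0 < s.re} ∈ nhds (1:ℂ) := by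
      apply (isOpen_lt continuous_const Complex.continuous_re).mem_nhds; simp
    filter_upwards [this] with s hs
    exact Complex.Gamma_eq_integral hs
  have h3 : HasDerivAt Real.Gamma (∫ t in Set.Ioi (0:ℝ), Real.log t * Real.exp (-t)) 1 := by
    have := h2.real_of_complex
    simpa [Complex.Gamma_ofReal] using this
  have h4 := Real.deriv_Gamma_nat 0
  simp only [Nat.cast_zero, zero_add, Nat.factorial_zero, Nat.cast_one, harmonic_zero,
    Rat.cast_zero, add_zero, one_mul] at h4
  have := h3.deriv
  rw [h4] at this
  linarith [this]

lemma abs_log_le_aux {t : ℝ} (ht : 0 < t) : |Real.log t| ≤ 2 * t ^ (-(1/2) : ℝ) + t := by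
  have hrp : (0:ℝ) ≤ t ^ (-(1/2) : ℝ) := (Real.rpow_pos_of_pos ht _).le
  rcases le_or_gt 1 t with h | h
  · rw [abs_of_nonneg (Real.log_nonneg h)]
    nlinarith [Real.log_le_sub_one_of_pos ht]
  · rw [abs_of_nonpos (Real.log_nonpos ht.le h.le)]
    have h2 : Real.log (t ^ (-(1/2) : ℝ)) ≤ t ^ (-(1/2) : ℝ) - 1 :=
      Real.log_le_sub_one_of_pos (Real.rpow_pos_of_pos ht _)
    rw [Real.log_rpow ht] at h2
    nlinarith

lemma integrableOn_exp_neg_mul_log :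
    IntegrableOn (fun t : ℝ => Real.exp (-t) * Real.log t) (Ioi 0) := by
  have h1 : IntegrableOn (fun t : ℝ => Real.exp (-t) * t ^ ((1/2:ℝ) - 1)) (Ioi 0) :=
    Real.GammaIntegral_convergent (by norm_num)
  have h2 : IntegrableOn (fun t : ℝ => Real.exp (-t) * t ^ ((2:ℝ) - 1)) (Ioi 0) :=
    Real.GammaIntegral_convergent (by norm_num)
  have hg : IntegrableOn
      (fun t : ℝ => 2 * (Real.exp (-t) * t ^ ((1/2:ℝ) - 1)) + Real.exp (-t) * t ^ ((2:ℝ)-1))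
      (Ioi 0) := (h1.const_mul 2).add h2
  refine hg.integrable.mono' ?_ ?_
  · exact ((Real.measurable_exp.comp measurable_neg).mul Real.measurable_log).aestronglyMeasurable
  · filter_upwards [ae_restrict_mem measurableSet_Ioi] with t ht
    have ht' : (0:ℝ) < t := ht
    have hb := abs_log_le_aux ht'
    have he : (0:ℝ) < Real.exp (-t) := Real.exp_pos _
    have h12 : t ^ ((1/2:ℝ) - 1) = t ^ (-(1/2):ℝ) := by norm_num
    have h21 : t ^ ((2:ℝ) - 1) = t := by
      rw [show ((2:ℝ) - 1) = (1:ℝ) by norm_num, Real.rpow_one]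
    rw [norm_mul, Real.norm_eq_abs, Real.norm_eq_abs, abs_of_pos he, h12, h21]
    calc Real.exp (-t) * |Real.log t| ≤ Real.exp (-t) * (2 * t ^ (-(1/2):ℝ) + t) := by
          exact mul_le_mul_of_nonneg_left hb he.le
      _ = 2 * (Real.exp (-t) * t ^ (-(1/2):ℝ)) + Real.exp (-t) * t := by ring

lemma integrableOn_exp_neg_div_Ioi {T : ℝ} (hT : 0 < T) :
    IntegrableOn (fun u : ℝ => Real.exp (-u) / u) (Ioi T) := by
  have h0 : IntegrableOn (fun u : ℝ => Real.exp (-u)) (Ioi T) := by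
    simpa using exp_neg_integrableOn_Ioi T one_pos
  have hg : IntegrableOn (fun u : ℝ => T⁻¹ * Real.exp (-u)) (Ioi T) := h0.const_mul _
  refine hg.integrable.mono' ?_ ?_
  · exact ((Real.measurable_exp.comp measurable_neg).div measurable_id).aestronglyMeasurable
  · filter_upwards [ae_restrict_mem measurableSet_Ioi] with u hu
    have hu' : T < u := hu
    have hupos : 0 < u := hT.trans hu'
    rw [Real.norm_eq_abs, abs_div, abs_of_pos (Real.exp_pos _), abs_of_pos hupos,
      div_eq_mul_inv, mul_comm]
    gcongr
    all_goals first | exact hT | exact hu'.le | positivity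

lemma tendsto_exp_neg_mul_log_atTop :
    Tendsto (fun u : ℝ => Real.exp (-u) * Real.log u) atTop (nhds 0) := by
  have h := Real.tendsto_pow_mul_exp_neg_atTop_nhds_zero 1
  simp only [pow_one] at h
  apply tendsto_of_tendsto_of_tendsto_of_le_of_le' tendsto_const_nhds h
  · filter_upwards [eventually_ge_atTop (1:ℝ)] with u hu
    exact mul_nonneg (Real.exp_pos _).le (Real.log_nonneg hu)
  · filter_upwards [eventually_ge_atTop (1:ℝ)] with u hu
    rw [mul_comm u]
    exact mul_le_mul_of_nonneg_left
      ((Real.log_le_sub_one_of_pos (by linarith)).trans (by linarith)) (Real.exp_pos _).le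

lemma integral_exp_neg_mul_log_Ioi {T : ℝ} (hT : 0 < T) :
    ∫ u in Ioi T, Real.exp (-u) * Real.log u
      = Real.exp (-T) * Real.log T + ∫ u in Ioi T, Real.exp (-u) / u := by
  set F : ℝ → ℝ := fun u => -(Real.exp (-u) * Real.log u) with hF
  have hderiv : ∀ u ∈ Ici T, HasDerivAt F (Real.exp (-u) * Real.log u - Real.exp (-u) / u) u := by
    intro u hu
    have hupos : 0 < u := lt_of_lt_of_le hT hu
    have h1 : HasDerivAt (fun u : ℝ => Real.exp (-u)) (-Real.exp (-u)) u := by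
      exact (hasDerivAt_neg u).exp.congr_deriv (by ring)
    have h2 : HasDerivAt Real.log u⁻¹ u := Real.hasDerivAt_log hupos.ne'
    have := (h1.mul h2).neg
    exact this.congr_deriv (by ring)
  have hint : IntegrableOn
      (fun u => Real.exp (-u) * Real.log u - Real.exp (-u) / u) (Ioi T) :=
    (integrableOn_exp_neg_mul_log.mono_set (Ioi_subset_Ioi hT.le)).sub
      (integrableOn_exp_neg_div_Ioi hT)
  have hten : Tendsto F atTop (nhds 0) := by
    simpa using tendsto_exp_neg_mul_log_atTop.neg
  have key := integral_Ioi_of_hasDerivAt_of_tendsto' hderiv hint hten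
  rw [integral_sub (integrableOn_exp_neg_mul_log.mono_set (Ioi_subset_Ioi hT.le))
    (integrableOn_exp_neg_div_Ioi hT)] at key
  have : F T = -(Real.exp (-T) * Real.log T) := rfl
  rw [this] at key
  linarith

lemma hasDerivAt_neg_exp_sq (a r : ℝ) :
    HasDerivAt (fun r : ℝ => -Real.exp (-(a * r ^ 2))) (2 * a * r * Real.exp (-(a * r ^ 2))) r := by
  have h1 : HasDerivAt (fun r : ℝ => -(a * r ^ 2)) (-(a * (2 * r))) r := by
    have := ((hasDerivAt_pow 2 r).const_mul a).neg
    exact this.congr_deriv (by simp)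
  have := (Real.hasDerivAt_exp (-(a * r ^ 2))).comp r h1
  have h2 := this.neg
  exact h2.congr_deriv (by ring)

lemma integralA {a ro : ℝ} (ha : 0 < a) (hro : 0 ≤ ro) :
    ∫ r in Ioc 0 ro, 2 * a * r * Real.exp (-(a * r ^ 2)) = 1 - Real.exp (-(a * ro ^ 2)) := by
  rw [← intervalIntegral.integral_of_le hro]
  rw [intervalIntegral.integral_eq_sub_of_hasDerivAt
    (fun x _ => hasDerivAt_neg_exp_sq a x)
    (Continuous.intervalIntegrable (by continuity) _ _)]
  norm_num
  ring

lemma integralB {a ro : ℝ} (ha : 0 < a) (hro : 0 ≤ ro) :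
    ∫ r in Ioi ro, 2 * a * r * Real.exp (-(a * r ^ 2)) = Real.exp (-(a * ro ^ 2)) := by
  have hten : Tendsto (fun r : ℝ => -Real.exp (-(a * r ^ 2))) atTop (nhds 0) := by
    rw [show (0:ℝ) = -0 by ring]
    apply Tendsto.neg
    apply Real.tendsto_exp_atBot.comp
    apply tendsto_neg_atBot_iff.mpr
    exact (tendsto_pow_atTop (by norm_num)).const_mul_atTop ha
  have := integral_Ioi_of_hasDerivAt_of_nonneg' (g' := fun r => 2 * a * r * Real.exp (-(a * r ^ 2)))
    (fun x _ => hasDerivAt_neg_exp_sq a x)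
    (fun x hx => by
      have : (0:ℝ) < x := lt_of_le_of_lt hro hx
      positivity) hten
  rw [this]
  simp

lemma image_sq_Ioo {a ro : ℝ} (ha : 0 < a) (hro : 0 < ro) :
    (fun r : ℝ => a * r ^ 2) '' Ioo 0 ro = Ioo 0 (a * ro ^ 2) := by
  ext u
  constructor
  · rintro ⟨r, ⟨hr0, hrro⟩, rfl⟩
    simp only [Set.mem_Ioo]
    refine ⟨by positivity, ?_⟩
    have h2 : r ^ 2 < ro ^ 2 := by nlinarith
    exact mul_lt_mul_of_pos_left h2 ha
  · rintro ⟨hu0, huT⟩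
    refine ⟨Real.sqrt (u / a), ⟨Real.sqrt_pos.mpr (by positivity), ?_⟩, ?_⟩
    · rw [show ro = Real.sqrt (ro ^ 2) from (Real.sqrt_sq hro.le).symm]
      apply Real.sqrt_lt_sqrt (by positivity)
      rw [div_lt_iff₀ ha] at *
      nlinarith
    · show a * Real.sqrt (u / a) ^ 2 = u
      rw [Real.sq_sqrt (by positivity), mul_div_cancel₀ _ ha.ne']

lemma hasDerivAt_mul_sq (a x : ℝ) : HasDerivAt (fun r : ℝ => a * r ^ 2) (2 * a * x) x := by
  have := (hasDerivAt_pow 2 x).const_mul a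
  exact this.congr_deriv (by simp; ring)

lemma injOn_mul_sq {a ro : ℝ} (ha : 0 < a) : Set.InjOn (fun r : ℝ => a * r ^ 2) (Ioo 0 ro) := by
  intro x hx y hy hxy
  simp only at hxy
  have h2 := mul_left_cancel₀ ha.ne' hxy
  nlinarith [hx.1, hy.1]

lemma cov_key {a ro : ℝ} (ha : 0 < a) (hro : 0 < ro) (g : ℝ → ℝ) :
    ∫ u in Ioo 0 (a * ro ^ 2), g u
      = ∫ r in Ioo 0 ro, |2 * a * r| • g (a * r ^ 2) := by
  rw [← image_sq_Ioo ha hro]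
  apply integral_image_eq_integral_abs_deriv_smul measurableSet_Ioo
  · exact fun x _ => (hasDerivAt_mul_sq a x).hasDerivWithinAt
  · exact injOn_mul_sq ha

lemma cov_integrable {a ro : ℝ} (ha : 0 < a) (hro : 0 < ro) (g : ℝ → ℝ)
    (hg : IntegrableOn g (Ioo 0 (a * ro ^ 2))) :
    IntegrableOn (fun r => |2 * a * r| • g (a * r ^ 2)) (Ioo 0 ro) := by
  rw [← image_sq_Ioo ha hro] at hg
  exact (integrableOn_image_iff_integrableOn_abs_deriv_smul measurableSet_Ioo
    (fun x _ => (hasDerivAt_mul_sq a x).hasDerivWithinAt)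
    (injOn_mul_sq ha) g).mp hg

lemma integrableC {a ro : ℝ} (ha : 0 < a) (hro : 0 < ro) :
    IntegrableOn (fun r : ℝ => 2 * a * r * Real.exp (-(a * r ^ 2)) * Real.log r) (Ioo 0 ro) := by
  have hg_int : IntegrableOn (fun u : ℝ => Real.exp (-u) * Real.log u) (Ioo 0 (a * ro ^ 2)) :=
    integrableOn_exp_neg_mul_log.mono_set (fun u hu => hu.1)
  have hint1 : IntegrableOn
      (fun r : ℝ => 2 * a * r * Real.exp (-(a * r ^ 2)) * (Real.log a + 2 * Real.log r))
      (Ioo 0 ro) := by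
    refine (cov_integrable ha hro _ hg_int).congr_fun ?_ measurableSet_Ioo
    intro r hr
    have hr0 : 0 < r := hr.1
    simp only [smul_eq_mul]
    rw [abs_of_pos (by positivity : (0:ℝ) < 2 * a * r),
      Real.log_mul ha.ne' (by positivity), Real.log_pow]
    push_cast
    ring
  have hp_int : IntegrableOn (fun r : ℝ => 2 * a * r * Real.exp (-(a * r ^ 2))) (Ioo 0 ro) :=
    (Continuous.integrableOn_Ioc (by continuity)).mono_set Ioo_subset_Ioc_self
  have heq : (fun r : ℝ => 2 * a * r * Real.exp (-(a * r ^ 2)) * Real.log r)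
      = fun r => (2 * a * r * Real.exp (-(a * r ^ 2)) * (Real.log a + 2 * Real.log r)
          - Real.log a * (2 * a * r * Real.exp (-(a * r ^ 2)))) / 2 := by
    funext r; ring
  rw [heq]
  exact (hint1.sub (hp_int.const_mul _)).div_const 2

lemma integralC {a ro : ℝ} (ha : 0 < a) (hro : 0 < ro) :
    ∫ r in Ioo 0 ro, 2 * a * r * Real.exp (-(a * r ^ 2)) * Real.log r
      = ((∫ u in Ioo 0 (a * ro ^ 2), Real.exp (-u) * Real.log u)
          - Real.log a * (1 - Real.exp (-(a * ro ^ 2)))) / 2 := by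
  have hg_int : IntegrableOn (fun u : ℝ => Real.exp (-u) * Real.log u) (Ioo 0 (a * ro ^ 2)) :=
    integrableOn_exp_neg_mul_log.mono_set (fun u hu => hu.1)
  have hp_int : IntegrableOn (fun r : ℝ => 2 * a * r * Real.exp (-(a * r ^ 2))) (Ioo 0 ro) :=
    (Continuous.integrableOn_Ioc (by continuity)).mono_set Ioo_subset_Ioc_self
  have hint1 : IntegrableOn
      (fun r : ℝ => 2 * a * r * Real.exp (-(a * r ^ 2)) * (Real.log a + 2 * Real.log r))
      (Ioo 0 ro) := by
    refine (cov_integrable ha hro _ hg_int).congr_fun ?_ measurableSet_Ioo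
    intro r hr
    have hr0 : 0 < r := hr.1
    simp only [smul_eq_mul]
    rw [abs_of_pos (by positivity : (0:ℝ) < 2 * a * r),
      Real.log_mul ha.ne' (by positivity), Real.log_pow]
    push_cast
    ring
  have hA : ∫ r in Ioo 0 ro, 2 * a * r * Real.exp (-(a * r ^ 2))
      = 1 - Real.exp (-(a * ro ^ 2)) := by
    rw [Measure.restrict_congr_set Ioo_ae_eq_Ioc]
    exact integralA ha hro.le
  have h1 : (∫ u in Ioo 0 (a * ro ^ 2), Real.exp (-u) * Real.log u)
      = ∫ r in Ioo 0 ro, 2 * a * r * Real.exp (-(a * r ^ 2)) * (Real.log a + 2 * Real.log r) := by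
    rw [cov_key ha hro]
    refine setIntegral_congr_fun measurableSet_Ioo ?_
    intro r hr
    have hr0 : 0 < r := hr.1
    simp only [smul_eq_mul]
    rw [abs_of_pos (by positivity : (0:ℝ) < 2 * a * r),
      Real.log_mul ha.ne' (by positivity), Real.log_pow]
    push_cast
    ring
  have heq : (fun r : ℝ => 2 * a * r * Real.exp (-(a * r ^ 2)) * Real.log r)
      = fun r => (2 * a * r * Real.exp (-(a * r ^ 2)) * (Real.log a + 2 * Real.log r)
          - Real.log a * (2 * a * r * Real.exp (-(a * r ^ 2)))) / 2 := by
    funext r; ring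
  rw [heq, integral_div, integral_sub hint1 (hp_int.const_mul _), integral_const_mul, hA, h1]

lemma integrableB {a ro : ℝ} (ha : 0 < a) (hro : 0 ≤ ro) :
    IntegrableOn (fun r : ℝ => 2 * a * r * Real.exp (-(a * r ^ 2))) (Ioi ro) := by
  have hten : Tendsto (fun r : ℝ => -Real.exp (-(a * r ^ 2))) atTop (nhds 0) := by
    rw [show (0:ℝ) = -0 by ring]
    apply Tendsto.neg
    apply Real.tendsto_exp_atBot.comp
    apply tendsto_neg_atBot_iff.mpr
    exact (tendsto_pow_atTop (by norm_num)).const_mul_atTop ha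
  exact integrableOn_Ioi_deriv_of_nonneg'
    (g' := fun r => 2 * a * r * Real.exp (-(a * r ^ 2)))
    (fun x _ => hasDerivAt_neg_exp_sq a x)
    (fun x hx => by
      have : (0:ℝ) < x := lt_of_le_of_lt hro hx
      positivity) hten

lemma u_split {T : ℝ} (hT : 0 < T) :
    ∫ u in Ioo 0 T, Real.exp (-u) * Real.log u
      = -Real.eulerMascheroniConstant - Real.exp (-T) * Real.log T
          - ∫ u in Ioi T, Real.exp (-u) / u := by
  have h0 : ∫ u in Ioi (0:ℝ), Real.exp (-u) * Real.log u = -Real.eulerMascheroniConstant := by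
    rw [← integral_log_mul_exp_neg]
    exact setIntegral_congr_fun measurableSet_Ioi (fun u _ => mul_comm _ _)
  have hsplit : (∫ u in Ioc 0 T, Real.exp (-u) * Real.log u)
      + ∫ u in Ioi T, Real.exp (-u) * Real.log u = -Real.eulerMascheroniConstant := by
    rw [← h0, ← setIntegral_union (Ioc_disjoint_Ioi le_rfl) measurableSet_Ioi
      (integrableOn_exp_neg_mul_log.mono_set Ioc_subset_Ioi_self)
      (integrableOn_exp_neg_mul_log.mono_set (Ioi_subset_Ioi hT.le)),
      Ioc_union_Ioi_eq_Ioi hT.le]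
  rw [Measure.restrict_congr_set Ioo_ae_eq_Ioc]
  have hp := integral_exp_neg_mul_log_Ioi hT
  linarith

/-- The logarithmic moment `E{ln(P_{o,C})}` of equation (48) in Appendix C of the paper: with
the Rayleigh nearest-distance density and the open-loop power control
`P_C = min{P_max^C, P_o β^{−η} R^{η α_M}}`, `r_o = (P_max^C/P_o)^{1/(α_M η)} β^{1/α_M}`,
`E[ln P_C] = ln(P_o β^{−η})(1 − e^{−π λ_M r_o²}) + ln(P_max^C) e^{−π λ_M r_o²}
  − (η α_M/2)(γ + Γ(0, π λ_M r_o²) + 2 e^{−π λ_M r_o²} ln(r_o) + ln(π λ_M))`,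
where `γ` is the Euler–Mascheroni constant and `Γ(0,T) = ∫_T^∞ e^{−u}/u du`. -/
theorem cellular_power_log_moment {Ω : Type*} [MeasurableSpace Ω]
    (μ : Measure Ω) [IsProbabilityMeasure μ]
    (R : Ω → ℝ) (hR : Measurable R)
    (lamM : ℝ) (hlam : 0 < lamM)
    (hdist : Measure.map R μ = (volume : Measure ℝ).withDensity
      (fun r => ENNReal.ofReal
        (if 0 < r then 2 * Real.pi * lamM * r * Real.exp (-(Real.pi * lamM * r ^ 2)) else 0)))
    (Po PmaxC β αM η : ℝ) (hPo : 0 < Po) (hPmax : 0 < PmaxC) (hβ : 0 < β) (hαM : 0 < αM)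
    (hη : 0 < η) (hη1 : η ≤ 1)
    (PC : Ω → ℝ) (hPC : ∀ ω, PC ω = min PmaxC (Po * β ^ (-η) * R ω ^ (η * αM)))
    (ro : ℝ) (hro : ro = (PmaxC / Po) ^ (1 / (αM * η)) * β ^ (1 / αM)) :
    ∫ ω, Real.log (PC ω) ∂μ
      = Real.log (Po * β ^ (-η)) * (1 - Real.exp (-(Real.pi * lamM * ro ^ 2)))
        + Real.log PmaxC * Real.exp (-(Real.pi * lamM * ro ^ 2))
        - (η * αM / 2) * (Real.eulerMascheroniConstant
            + (∫ u in Set.Ioi (Real.pi * lamM * ro ^ 2), Real.exp (-u) / u)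
            + 2 * Real.exp (-(Real.pi * lamM * ro ^ 2)) * Real.log ro
            + Real.log (Real.pi * lamM)) := by
  have hπ : 0 < Real.pi := Real.pi_pos
  set a : ℝ := Real.pi * lamM with ha_def
  have ha : 0 < a := by positivity
  have hro0 : 0 < ro := by
    rw [hro]
    have h1 : (0:ℝ) < (PmaxC / Po) ^ (1 / (αM * η)) := Real.rpow_pos_of_pos (by positivity) _
    have h2 : (0:ℝ) < β ^ (1 / αM) := Real.rpow_pos_of_pos hβ _
    positivity
  have hT : 0 < a * ro ^ 2 := by positivity
  -- the threshold identity
  have hβη : (0:ℝ) < β ^ η := Real.rpow_pos_of_pos hβ η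
  have hKpos : (0:ℝ) < Po * β ^ (-η) := mul_pos hPo (Real.rpow_pos_of_pos hβ _)
  have e1 : ((PmaxC / Po) ^ (1 / (αM * η)) : ℝ) ^ (η * αM) = PmaxC / Po := by
    rw [← Real.rpow_mul (by positivity : (0:ℝ) ≤ PmaxC / Po),
      show (1 / (αM * η)) * (η * αM) = 1 by field_simp; try ring,
      Real.rpow_one]
  have e2 : ((β : ℝ) ^ (1 / αM)) ^ (η * αM) = β ^ η := by
    rw [← Real.rpow_mul hβ.le, show (1 / αM) * (η * αM) = η by field_simp; try ring]
  have hro_pow : Po * β ^ (-η) * ro ^ (η * αM) = PmaxC := by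
    rw [hro, Real.mul_rpow (by positivity) (by positivity), e1, e2, Real.rpow_neg hβ.le]
    field_simp
  -- the explicit log on each region
  set φ : ℝ → ℝ := fun r => Real.log (min PmaxC (Po * β ^ (-η) * r ^ (η * αM))) with hφ_def
  have hφm : Measurable φ := by
    apply Real.measurable_log.comp
    exact measurable_const.min
      (((Real.continuous_rpow_const (by positivity)).measurable).const_mul _)
  have hφ_left : ∀ r ∈ Ioc (0:ℝ) ro,
      φ r = Real.log (Po * β ^ (-η)) + (η * αM) * Real.log r := by
    intro r hr
    have hr0 : 0 < r := hr.1
    have hle : Po * β ^ (-η) * r ^ (η * αM) ≤ PmaxC := by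
      rw [← hro_pow]
      exact mul_le_mul_of_nonneg_left
        (Real.rpow_le_rpow hr0.le hr.2 (by positivity)) hKpos.le
    rw [hφ_def]
    simp only
    rw [min_eq_right hle, Real.log_mul hKpos.ne' (Real.rpow_pos_of_pos hr0 _).ne',
      Real.log_rpow hr0]
  have hφ_right : ∀ r ∈ Ioi ro, φ r = Real.log PmaxC := by
    intro r hr
    have hr0 : 0 < r := hro0.trans hr
    have hle : PmaxC ≤ Po * β ^ (-η) * r ^ (η * αM) := by
      rw [← hro_pow]
      exact mul_le_mul_of_nonneg_left
        (Real.rpow_le_rpow hro0.le (le_of_lt hr) (by positivity)) hKpos.le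
    rw [hφ_def]
    simp only
    rw [min_eq_left hle]
  -- density function
  set F : ℝ → ℝ := fun r =>
    if 0 < r then 2 * Real.pi * lamM * r * Real.exp (-(Real.pi * lamM * r ^ 2)) else 0 with hF_def
  have hFc : Continuous (fun r : ℝ => 2 * Real.pi * lamM * r * Real.exp (-(Real.pi * lamM * r ^ 2))) := by
    fun_prop
  have hFm : Measurable F := Measurable.ite measurableSet_Ioi hFc.measurable measurable_const
  have hF0 : ∀ r, 0 ≤ F r := by
    intro r
    rw [hF_def]
    simp only
    split_ifs with h
    · positivity
    · exact le_rfl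
  -- reduce to a Lebesgue integral against the density
  have step1 : ∫ ω, Real.log (PC ω) ∂μ = ∫ x, F x * φ x := by
    have h1 : ∫ ω, Real.log (PC ω) ∂μ = ∫ ω, φ (R ω) ∂μ := by
      apply integral_congr_ae
      filter_upwards with ω
      rw [hPC ω, hφ_def]
    rw [h1, ← integral_map hR.aemeasurable hφm.aestronglyMeasurable, hdist]
    have h2 : (fun r : ℝ => ENNReal.ofReal (F r))
        = fun r => ((F r).toNNReal : ℝ≥0∞) := rfl
    rw [show ((volume : Measure ℝ).withDensity fun r => ENNReal.ofReal
        (if 0 < r then 2 * Real.pi * lamM * r * Real.exp (-(Real.pi * lamM * r ^ 2)) else 0))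
        = (volume : Measure ℝ).withDensity fun r => ((F r).toNNReal : ℝ≥0∞) from rfl]
    rw [integral_withDensity_eq_integral_smul hFm.real_toNNReal]
    apply integral_congr_ae
    filter_upwards with x
    rw [NNReal.smul_def, smul_eq_mul, Real.coe_toNNReal _ (hF0 x)]
  -- restrict to the positive axis
  have step2 : ∫ x, F x * φ x = ∫ x in Ioi (0:ℝ), F x * φ x := by
    symm
    apply setIntegral_eq_integral_of_forall_compl_eq_zero
    intro x hx
    have : ¬ (0 < x) := by simpa using hx
    rw [hF_def]
    simp only [this, if_false, zero_mul]
  -- integrability on the two pieces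
  have hp_Ioc : IntegrableOn (fun r : ℝ => 2 * a * r * Real.exp (-(a * r ^ 2))) (Ioc 0 ro) :=
    Continuous.integrableOn_Ioc (by fun_prop)
  have hq_Ioc : IntegrableOn
      (fun r : ℝ => 2 * a * r * Real.exp (-(a * r ^ 2)) * Real.log r) (Ioc 0 ro) :=
    (integrableC ha hro0).congr_set_ae Ioo_ae_eq_Ioc.symm
  have hEq_left : EqOn
      (fun x : ℝ => Real.log (Po * β ^ (-η)) * (2 * a * x * Real.exp (-(a * x ^ 2)))
        + (η * αM) * (2 * a * x * Real.exp (-(a * x ^ 2)) * Real.log x))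
      (fun x => F x * φ x) (Ioc 0 ro) := by
    intro x hx
    have hx0 : 0 < x := hx.1
    simp only
    rw [hφ_left x hx, hF_def]
    simp only [hx0, if_true, ha_def]
    ring
  have hint_left : IntegrableOn (fun x => F x * φ x) (Ioc 0 ro) :=
    IntegrableOn.congr_fun
      ((hp_Ioc.const_mul (Real.log (Po * β ^ (-η)))).add (hq_Ioc.const_mul (η * αM)))
      hEq_left measurableSet_Ioc
  have hEq_right : EqOn
      (fun x : ℝ => (2 * a * x * Real.exp (-(a * x ^ 2))) * Real.log PmaxC)
      (fun x => F x * φ x) (Ioi ro) := by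
    intro x hx
    have hx0 : 0 < x := hro0.trans hx
    simp only
    rw [hφ_right x hx, hF_def]
    simp only [hx0, if_true, ha_def]
    ring
  have hint_right : IntegrableOn (fun x => F x * φ x) (Ioi ro) :=
    IntegrableOn.congr_fun ((integrableB ha hro0.le).mul_const (Real.log PmaxC))
      hEq_right measurableSet_Ioi
  -- split the integral
  have step3 : ∫ x in Ioi (0:ℝ), F x * φ x
      = (∫ x in Ioc 0 ro, F x * φ x) + ∫ x in Ioi ro, F x * φ x := by
    rw [← Ioc_union_Ioi_eq_Ioi hro0.le]
    exact setIntegral_union (Ioc_disjoint_Ioi le_rfl) measurableSet_Ioi hint_left hint_right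
  -- evaluate the left piece
  have hq_val : ∫ r in Ioc 0 ro, 2 * a * r * Real.exp (-(a * r ^ 2)) * Real.log r
      = ((∫ u in Ioo 0 (a * ro ^ 2), Real.exp (-u) * Real.log u)
          - Real.log a * (1 - Real.exp (-(a * ro ^ 2)))) / 2 := by
    rw [← Measure.restrict_congr_set Ioo_ae_eq_Ioc]
    exact integralC ha hro0
  have left_val : ∫ x in Ioc 0 ro, F x * φ x
      = Real.log (Po * β ^ (-η)) * (1 - Real.exp (-(a * ro ^ 2)))
        + (η * αM) * (((-Real.eulerMascheroniConstant
            - Real.exp (-(a * ro ^ 2)) * Real.log (a * ro ^ 2)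
            - ∫ u in Ioi (a * ro ^ 2), Real.exp (-u) / u)
          - Real.log a * (1 - Real.exp (-(a * ro ^ 2)))) / 2) := by
    rw [← setIntegral_congr_fun measurableSet_Ioc hEq_left]
    rw [integral_add (hp_Ioc.const_mul _) (hq_Ioc.const_mul _),
      integral_const_mul, integral_const_mul, integralA ha hro0.le, hq_val,
      u_split hT]
  -- evaluate the right piece
  have right_val : ∫ x in Ioi ro, F x * φ x
      = Real.log PmaxC * Real.exp (-(a * ro ^ 2)) := by
    rw [← setIntegral_congr_fun measurableSet_Ioi hEq_right,
      integral_mul_const, integralB ha hro0.le]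
    ring
  rw [step1, step2, step3, left_val, right_val]
  have hlogT : Real.log (a * ro ^ 2) = Real.log a + 2 * Real.log ro := by
    rw [Real.log_mul ha.ne' (by positivity), Real.log_pow]
    push_cast
    ring
  rw [hlogT]
  ring
end
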